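/- arXiv:2306.06947 — 5 statements merged into one kernel-verified Lean document; each statement's English description precedes it below -/
import Mathlib

section
/- Let H, L : X ⇉ Y be convex closed set-valued maps between real Banach spaces, and suppose that ℝ⁺(dom H − dom L) = {t(u − v) : t ≥ 0, u ∈ dom H, v ∈ dom L} is a closed linear subspace of X. Then for every (x̄, ȳ) ∈ gph(H + L) (where (H + L)(x) = H(x) + L(x)), every y* ∈ Y*, and every pair ȳ₁ ∈ H(x̄), ȳ₂ ∈ L(x̄) with ȳ₁ + ȳ₂ = ȳ, one has D*(H + L)(x̄, ȳ)(y*) = D*H(x̄, ȳ₁)(y*) + D*L(x̄, ȳ₂)(y*). -/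
open Set Pointwise Topology Filter

/-- The graph of a set-valued map. -/
def gph {α β : Type*} (H : α → Set β) : Set (α × β) := {q | q.2 ∈ H q.1}

/-- The domain of a set-valued map. -/
def dom {α β : Type*} (H : α → Set β) : Set α := {a | (H a).Nonempty}

/-- The coderivative (in the sense of convex analysis) of a set-valued map `H` at
`(a, b) ∈ gph H`:  `φ ∈ coderiv H a b ψ` iff `(φ, -ψ) ∈ N((a,b), gph H)`, that is,
`⟨φ, u - a⟩ - ⟨ψ, v - b⟩ ≤ 0` for all `(u, v) ∈ gph H`. -/
def coderiv {α β : Type*} [NormedAddCommGroup α] [NormedSpace ℝ α]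
    [NormedAddCommGroup β] [NormedSpace ℝ β]
    (H : α → Set β) (a : α) (b : β) (ψ : β →L[ℝ] ℝ) : Set (α →L[ℝ] ℝ) :=
  {φ | ∀ u : α, ∀ v ∈ H u, φ (u - a) - ψ (v - b) ≤ 0}

/-- The Fréchet coderivative of a set-valued map `H` at `(a, b) ∈ gph H`, with the sum
norm `‖(u,v)‖ = ‖u‖ + ‖v‖` on the product:  `φ ∈ fCoderiv H a b ψ` iff
`(φ, -ψ) ∈ N̂((a,b), gph H)`, the Fréchet normal cone, expressed by its standard
`ε`–`δ` characterization. -/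
def fCoderiv {α β : Type*} [NormedAddCommGroup α] [NormedSpace ℝ α]
    [NormedAddCommGroup β] [NormedSpace ℝ β]
    (H : α → Set β) (a : α) (b : β) (ψ : β →L[ℝ] ℝ) : Set (α →L[ℝ] ℝ) :=
  {φ | ∀ ε > (0:ℝ), ∃ δ > (0:ℝ), ∀ u : α, ∀ v ∈ H u, ‖u - a‖ + ‖v - b‖ < δ →
      φ (u - a) - ψ (v - b) ≤ ε * (‖u - a‖ + ‖v - b‖)}

/-- The subdifferential (in the sense of convex analysis) of `g : α → ℝ` at `a`. -/
def subdiff {α : Type*} [NormedAddCommGroup α] [NormedSpace ℝ α]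
    (g : α → ℝ) (a : α) : Set (α →L[ℝ] ℝ) :=
  {φ | ∀ u : α, φ (u - a) ≤ g u - g a}



set_option maxHeartbeats 2000000

lemma geoSum : ∀ m : ℕ, ∑ j ∈ Finset.range m, ((2:ℝ)⁻¹)^(j+1) = 1 - (2⁻¹)^m := by
  intro m
  induction m with
  | zero => simp
  | succ m ih => rw [Finset.sum_range_succ, ih]; ring

lemma geoTsum : ∑' j : ℕ, ((2:ℝ)⁻¹)^(j+1) = 1 := by
  have h : ∀ j : ℕ, ((2:ℝ)⁻¹)^(j+1) = 2⁻¹ * (2⁻¹)^j := fun j => by ring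
  rw [tsum_congr h, tsum_mul_left, tsum_geometric_of_lt_one (by norm_num) (by norm_num)]
  norm_num

lemma convexSeries {Z : Type*} [NormedAddCommGroup Z] [NormedSpace ℝ Z] [CompleteSpace Z]
    {C : Set Z} (hC : Convex ℝ C) (hcl : IsClosed C) {base : Z} (hb : base ∈ C)
    (ζ : ℕ → Z) (hζ : ∀ j, ζ j ∈ C) {N : ℝ} (hN : ∀ j, ‖ζ j - base‖ ≤ N) :
    ∃ P ∈ C, HasSum (fun j => ((2:ℝ)⁻¹)^(j+1) • (ζ j - base)) (P - base) ∧
      ‖P - base‖ ≤ N := by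
  have hN0 : 0 ≤ N := le_trans (norm_nonneg _) (hN 0)
  have hnorm : ∀ j : ℕ, ‖((2:ℝ)⁻¹)^(j+1) • (ζ j - base)‖ ≤ N * (2⁻¹)^(j+1) := by
    intro j
    rw [norm_smul, norm_pow, norm_inv]
    simp only [Real.norm_ofNat]
    rw [mul_comm]
    gcongr
    exact hN j
  have hsumb : Summable fun j : ℕ => N * ((2:ℝ)⁻¹)^(j+1) := by
    have : Summable fun j : ℕ => ((2:ℝ)⁻¹)^j :=
      summable_geometric_of_lt_one (by norm_num) (by norm_num)
    exact ((this.mul_left (N * 2⁻¹)).congr (fun j => by ring))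
  have hsumn : Summable fun j : ℕ => ‖((2:ℝ)⁻¹)^(j+1) • (ζ j - base)‖ :=
    Summable.of_nonneg_of_le (fun j => norm_nonneg _) hnorm hsumb
  have hsum : Summable fun j : ℕ => ((2:ℝ)⁻¹)^(j+1) • (ζ j - base) := hsumn.of_norm
  set W : Z := ∑' j, ((2:ℝ)⁻¹)^(j+1) • (ζ j - base) with hW
  have hcan : base + W - base = W := by abel
  refine ⟨base + W, ?_, ?_, ?_⟩
  · -- membership via partial sums
    have hpart : ∀ m : ℕ,
        base + ∑ j ∈ Finset.range m, ((2:ℝ)⁻¹)^(j+1) • (ζ j - base) ∈ C := by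
      intro m
      have h1 : ∑ j ∈ Finset.range m, ((2:ℝ)⁻¹)^(j+1) • (ζ j - base)
          = (∑ j ∈ Finset.range m, ((2:ℝ)⁻¹)^(j+1) • ζ j)
            - (∑ j ∈ Finset.range m, ((2:ℝ)⁻¹)^(j+1)) • base := by
        rw [Finset.sum_smul, ← Finset.sum_sub_distrib]
        exact Finset.sum_congr rfl (fun j _ => by rw [smul_sub])
      have h2 : ∑ j ∈ Finset.range (m+1),
            (if j = m then ((2:ℝ)⁻¹)^m else ((2:ℝ)⁻¹)^(j+1)) •
            (if j = m then base else ζ j)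
          = (∑ j ∈ Finset.range m, ((2:ℝ)⁻¹)^(j+1) • ζ j) + ((2:ℝ)⁻¹)^m • base := by
        rw [Finset.sum_range_succ, if_pos rfl, if_pos rfl]
        congr 1
        refine Finset.sum_congr rfl (fun j hj => ?_)
        rw [if_neg (Nat.ne_of_lt (Finset.mem_range.mp hj)),
          if_neg (Nat.ne_of_lt (Finset.mem_range.mp hj))]
      have key : base + ∑ j ∈ Finset.range m, ((2:ℝ)⁻¹)^(j+1) • (ζ j - base)
          = ∑ j ∈ Finset.range (m+1),
              (if j = m then ((2:ℝ)⁻¹)^m else ((2:ℝ)⁻¹)^(j+1)) •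
              (if j = m then base else ζ j) := by
        rw [h1, h2, geoSum, sub_smul, one_smul]
        abel
      rw [key]
      refine hC.sum_mem (fun j _ => by positivity) ?_ (fun j hj => ?_)
      · rw [Finset.sum_range_succ, if_pos rfl]
        rw [Finset.sum_congr rfl (fun j hj =>
          if_neg (Nat.ne_of_lt (Finset.mem_range.mp hj)))]
        rw [geoSum]; ring
      · by_cases h : j = m
        · rw [if_pos h]; exact hb
        · rw [if_neg h]; exact hζ j
    have htend : Tendsto
        (fun m => base + ∑ j ∈ Finset.range m, ((2:ℝ)⁻¹)^(j+1) • (ζ j - base))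
        atTop (nhds (base + W)) :=
      tendsto_const_nhds.add (hsum.hasSum.tendsto_sum_nat)
    exact hcl.mem_of_tendsto htend (Filter.Eventually.of_forall hpart)
  · rw [hcan]; exact hsum.hasSum
  · rw [hcan]
    have h1 : ‖W‖ ≤ ∑' j, ‖((2:ℝ)⁻¹)^(j+1) • (ζ j - base)‖ :=
      norm_tsum_le_tsum_norm hsumn
    have h2 : ∑' j, ‖((2:ℝ)⁻¹)^(j+1) • (ζ j - base)‖ ≤ ∑' j : ℕ, N * ((2:ℝ)⁻¹)^(j+1) :=
      Summable.tsum_le_tsum hnorm hsumn hsumb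
    have h3 : ∑' j : ℕ, N * ((2:ℝ)⁻¹)^(j+1) = N := by
      rw [tsum_mul_left, geoTsum, mul_one]
    exact h1.trans (h2.trans (le_of_eq h3))

lemma mixGph {X Y : Type*} [AddCommMonoid X] [Module ℝ X] [AddCommMonoid Y] [Module ℝ Y]
    {H : X → Set Y} (hconv : Convex ℝ (gph H)) {a b : ℝ} (ha : 0 ≤ a) (hb : 0 ≤ b)
    (hab : a + b = 1) {u₁ u₂ : X} {v₁ v₂ : Y} (h1 : v₁ ∈ H u₁) (h2 : v₂ ∈ H u₂) :
    a • v₁ + b • v₂ ∈ H (a • u₁ + b • u₂) :=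
  hconv (show ((u₁, v₁) : X × Y) ∈ gph H from h1)
    (show ((u₂, v₂) : X × Y) ∈ gph H from h2) ha hb hab

lemma normMix {W : Type*} [NormedAddCommGroup W] [NormedSpace ℝ W] {a c : ℝ}
    (ha : 0 ≤ a) (hc : 0 ≤ c) (hac : a + c = 1) {p q w : W} {n : ℝ}
    (hp : ‖p - w‖ ≤ n) (hq : ‖q - w‖ ≤ n) : ‖a • p + c • q - w‖ ≤ n := by
  have h1 : a • (p - w) + c • (q - w) = a • p + c • q - (a + c) • w := by
    rw [smul_sub, smul_sub, add_smul]; abel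
  rw [hac, one_smul] at h1
  rw [← h1]
  calc ‖a • (p - w) + c • (q - w)‖ ≤ ‖a • (p - w)‖ + ‖c • (q - w)‖ := norm_add_le _ _
    _ = a * ‖p - w‖ + c * ‖q - w‖ := by
        rw [norm_smul, norm_smul, Real.norm_eq_abs, Real.norm_eq_abs,
          abs_of_nonneg ha, abs_of_nonneg hc]
    _ ≤ a * n + c * n := by
        have hn : 0 ≤ n := le_trans (norm_nonneg _) hp
        gcongr
    _ = n := by rw [← add_mul, hac, one_mul]

set_option maxHeartbeats 2000000 in
theorem boundedDec {X Y : Type*}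
    [NormedAddCommGroup X] [NormedSpace ℝ X] [CompleteSpace X]
    [NormedAddCommGroup Y] [NormedSpace ℝ Y] [CompleteSpace Y]
    (H L : X → Set Y)
    (hHconv : Convex ℝ (gph H)) (hHcl : IsClosed (gph H))
    (hLconv : Convex ℝ (gph L)) (hLcl : IsClosed (gph L))
    (S : Submodule ℝ X) (hScl : IsClosed (S : Set X))
    (hSeq : {w : X | ∃ t : ℝ, 0 ≤ t ∧ ∃ u ∈ dom H, ∃ v ∈ dom L, w = t • (u - v)} = S)
    (xb : X) (yb₁ yb₂ : Y) (hyb₁ : yb₁ ∈ H xb) (hyb₂ : yb₂ ∈ L xb) :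
    ∃ NN r' : ℝ, 0 < NN ∧ 0 < r' ∧ ∀ z ∈ (S : Set X), ‖z‖ < r' →
      ∃ u₁ v₁ u₂ v₂, v₁ ∈ H u₁ ∧ v₂ ∈ L u₂ ∧ z = u₁ - u₂ ∧
        ‖u₁ - xb‖ ≤ NN ∧ ‖v₁ - yb₁‖ ≤ NN ∧ ‖u₂ - xb‖ ≤ NN ∧ ‖v₂ - yb₂‖ ≤ NN := by
  classical
  -- the family of bounded decomposable sets
  set E : ℕ → Set X := fun n => {z | ∃ u₁ v₁ u₂ v₂, v₁ ∈ H u₁ ∧ v₂ ∈ L u₂ ∧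
    z = u₁ - u₂ ∧ ‖u₁ - xb‖ ≤ n ∧ ‖v₁ - yb₁‖ ≤ n ∧ ‖u₂ - xb‖ ≤ n ∧ ‖v₂ - yb₂‖ ≤ n}
    with hE
  have hE0 : ∀ n : ℕ, (0 : X) ∈ E n := by
    intro n
    exact ⟨xb, yb₁, xb, yb₂, hyb₁, hyb₂, by simp, by simp, by simp, by simp, by simp⟩
  have hEconv : ∀ n : ℕ, Convex ℝ (E n) := by
    intro n z hz z' hz' a c ha hc hac
    obtain ⟨u₁, v₁, u₂, v₂, h1, h2, rfl, b1, b2, b3, b4⟩ := hz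
    obtain ⟨u₁', v₁', u₂', v₂', h1', h2', rfl, b1', b2', b3', b4'⟩ := hz'
    refine ⟨a • u₁ + c • u₁', a • v₁ + c • v₁', a • u₂ + c • u₂', a • v₂ + c • v₂',
      mixGph hHconv ha hc hac h1 h1', mixGph hLconv ha hc hac h2 h2', ?_,
      normMix ha hc hac b1 b1', normMix ha hc hac b2 b2',
      normMix ha hc hac b3 b3', normMix ha hc hac b4 b4'⟩
    · rw [smul_sub, smul_sub]; abel
  have hEsub : ∀ n m : ℕ, n ≤ m → E n ⊆ E m := by
    intro n m hnm z hz
    obtain ⟨u₁, v₁, u₂, v₂, h1, h2, rfl, b1, b2, b3, b4⟩ := hz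
    have hcast : (n : ℝ) ≤ m := Nat.cast_le.mpr hnm
    exact ⟨u₁, v₁, u₂, v₂, h1, h2, rfl, b1.trans hcast, b2.trans hcast,
      b3.trans hcast, b4.trans hcast⟩
  have hEsc : ∀ (n : ℕ) (lam : ℝ), 0 ≤ lam → lam ≤ 1 → ∀ z ∈ E n, lam • z ∈ E n := by
    intro n lam h0 h1 z hz
    have := (hEconv n) hz (hE0 n) (a := lam) (b := 1 - lam) h0 (by linarith) (by ring)
    rwa [smul_zero, add_zero] at this
  have hcover : ∀ z ∈ (S : Set X), ∃ n : ℕ, 1 ≤ n ∧ z ∈ (n : ℝ) • E n := by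
    intro z hzS
    rw [← hSeq] at hzS
    obtain ⟨t, ht, u, ⟨w₁, hw₁⟩, v, ⟨w₂, hw₂⟩, rfl⟩ := hzS
    obtain ⟨n₀, hn₀⟩ := exists_nat_ge
      (max t (max ‖u - xb‖ (max ‖w₁ - yb₁‖ (max ‖v - xb‖ ‖w₂ - yb₂‖))))
    refine ⟨n₀ + 1, le_add_self.trans (le_refl _), ?_⟩
    set n : ℕ := n₀ + 1 with hn
    have hnpos : (0 : ℝ) < n := by positivity
    have hcast : (n₀ : ℝ) ≤ n := by rw [hn]; push_cast; linarith
    have htn : t ≤ n := le_trans (le_trans (le_max_left _ _) hn₀) hcast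
    have hun : ‖u - xb‖ ≤ n :=
      le_trans (le_trans ((le_max_left _ _).trans (le_max_right _ _)) hn₀) hcast
    have hw₁n : ‖w₁ - yb₁‖ ≤ n := le_trans (le_trans
      (((le_max_left _ _).trans (le_max_right _ _)).trans (le_max_right _ _)) hn₀) hcast
    have hvn : ‖v - xb‖ ≤ n := le_trans (le_trans
      ((((le_max_left _ _).trans (le_max_right _ _)).trans (le_max_right _ _)).trans
        (le_max_right _ _)) hn₀) hcast
    have hw₂n : ‖w₂ - yb₂‖ ≤ n := le_trans (le_trans
      ((((le_max_right _ _).trans (le_max_right _ _)).trans (le_max_right _ _)).trans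
        (le_max_right _ _)) hn₀) hcast
    set lam : ℝ := t / n with hlam
    have hlam0 : 0 ≤ lam := div_nonneg ht hnpos.le
    have hlam1 : lam ≤ 1 := (div_le_one hnpos).mpr htn
    have hmem : lam • w₁ + (1 - lam) • yb₁ ∈ H (lam • u + (1 - lam) • xb) :=
      mixGph hHconv hlam0 (by linarith) (by ring) hw₁ hyb₁
    have hmem' : lam • w₂ + (1 - lam) • yb₂ ∈ L (lam • v + (1 - lam) • xb) :=
      mixGph hLconv hlam0 (by linarith) (by ring) hw₂ hyb₂
    refine ⟨(lam • u + (1 - lam) • xb) - (lam • v + (1 - lam) • xb),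
      ⟨lam • u + (1 - lam) • xb, lam • w₁ + (1 - lam) • yb₁,
       lam • v + (1 - lam) • xb, lam • w₂ + (1 - lam) • yb₂,
       hmem, hmem', rfl,
       normMix hlam0 (by linarith) (by ring) hun (by simpa using hnpos.le),
       normMix hlam0 (by linarith) (by ring) hw₁n (by simpa using hnpos.le),
       normMix hlam0 (by linarith) (by ring) hvn (by simpa using hnpos.le),
       normMix hlam0 (by linarith) (by ring) hw₂n (by simpa using hnpos.le)⟩, ?_⟩
    have hveq : (lam • u + (1 - lam) • xb) - (lam • v + (1 - lam) • xb) = lam • (u - v) := by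
      rw [smul_sub]; abel
    have hnne : (n:ℝ) ≠ 0 := ne_of_gt hnpos
    show (n:ℝ) • ((lam • u + (1 - lam) • xb) - (lam • v + (1 - lam) • xb)) = t • (u - v)
    rw [hveq, smul_smul, hlam]
    congr 1
    field_simp
  have hmono : ∀ n m : ℕ, 1 ≤ n → n ≤ m → ((n : ℝ) • E n : Set X) ⊆ (m : ℝ) • E m := by
    rintro n m h1 hnm z ⟨e, he, rfl⟩
    have hmpos : (0 : ℝ) < m := by
      have : 1 ≤ m := h1.trans hnm
      positivity
    refine ⟨((n : ℝ) / m) • e, hEsub n m hnm (hEsc n _ (by positivity)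
      ((div_le_one hmpos).mpr (Nat.cast_le.mpr hnm)) e he), ?_⟩
    have hmne : (m:ℝ) ≠ 0 := ne_of_gt hmpos
    show (m:ℝ) • (((n:ℝ) / m) • e) = (n:ℝ) • e
    rw [smul_smul]
    congr 1
    field_simp
  -- Baire category in the Banach space S
  haveI : CompleteSpace S := hScl.completeSpace_coe
  haveI : Nonempty S := ⟨0⟩
  haveI : BaireSpace S := inferInstance
  set F : ℕ → Set S := fun n => closure {s : S | (s : X) ∈ ((n+1 : ℕ) : ℝ) • E (n+1)} with hF
  have hFcl : ∀ n, IsClosed (F n) := fun n => isClosed_closure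
  have hFun : (⋃ n, F n) = univ := by
    apply eq_univ_of_forall
    intro s
    obtain ⟨n, hn1, hns⟩ := hcover (s : X) s.2
    have hmem : s ∈ F (n - 1) := by
      apply subset_closure
      show (s : X) ∈ ((n - 1 + 1 : ℕ) : ℝ) • E (n - 1 + 1)
      rwa [Nat.sub_add_cancel hn1]
    exact mem_iUnion.mpr ⟨n - 1, hmem⟩
  obtain ⟨n₀, hn₀⟩ := nonempty_interior_of_iUnion_of_closed hFcl hFun
  obtain ⟨s₀, hs₀⟩ := hn₀
  rw [mem_interior_iff_mem_nhds, Metric.mem_nhds_iff] at hs₀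
  obtain ⟨ε, hε, hball⟩ := hs₀
  obtain ⟨n₁, hn₁1, hn₁⟩ := hcover (-(s₀ : X)) (S.neg_mem s₀.2)
  set N : ℕ := max (n₀ + 1) n₁ with hN
  have hN1 : 1 ≤ N := le_trans (Nat.succ_le_succ (Nat.zero_le _)) (le_max_left _ _)
  have hNpos : (0:ℝ) < N := by exact_mod_cast Nat.lt_of_lt_of_le Nat.zero_lt_one hN1
  set G : Set X := ((N : ℝ)) • E N with hG
  have hGconv : Convex ℝ G := (hEconv N).smul _
  have hpre : Convex ℝ ((S.subtype) ⁻¹' G) := hGconv.linear_preimage S.subtype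
  have hclconv : Convex ℝ (closure ((S.subtype) ⁻¹' G)) := hpre.closure
  have hball' : Metric.ball s₀ ε ⊆ closure ((S.subtype) ⁻¹' G) := by
    refine hball.trans (closure_mono ?_)
    intro x hx
    exact hmono (n₀+1) N (Nat.succ_le_succ (Nat.zero_le _)) (le_max_left _ _) hx
  have hnegmem : -s₀ ∈ (S.subtype) ⁻¹' G := by
    show ((-s₀ : S) : X) ∈ G
    exact hmono n₁ N hn₁1 (le_max_right _ _) hn₁
  have hzero : ∀ s : S, ‖s‖ < ε/2 → s ∈ closure ((S.subtype) ⁻¹' G) := by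
    intro s hs
    have h1 : s₀ + (2:ℝ) • s ∈ Metric.ball s₀ ε := by
      rw [Metric.mem_ball, dist_eq_norm]
      have h2 : s₀ + (2:ℝ) • s - s₀ = (2:ℝ) • s := by abel
      rw [h2, norm_smul]
      simp only [Real.norm_ofNat]
      linarith
    have h2 := hball' h1
    have h3 := subset_closure hnegmem
    have hs' : s = (2⁻¹:ℝ) • (s₀ + (2:ℝ) • s) + (2⁻¹:ℝ) • (-s₀) := by
      rw [smul_add, smul_neg, smul_smul]
      norm_num
    have := hclconv h2 h3 (a := (2⁻¹:ℝ)) (b := (2⁻¹:ℝ)) (by norm_num) (by norm_num) (by norm_num)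
    rwa [← hs'] at this
  have hstep : ∀ s : S, ∃ b : S, (b : X) ∈ G ∧ (‖s‖ < ε/2 → ‖s - b‖ < ε/4) := by
    intro s
    by_cases hs : ‖s‖ < ε/2
    · have h := hzero s hs
      rw [Metric.mem_closure_iff] at h
      obtain ⟨b, hbmem, hdist⟩ := h (ε/4) (by linarith)
      exact ⟨b, hbmem, fun _ => by rwa [dist_eq_norm] at hdist⟩
    · refine ⟨0, ⟨0, hE0 N, smul_zero _⟩, fun h => absurd h hs⟩
  choose bfn hbG hbdist using hstep
  refine ⟨(N:ℝ), (ε/2) / (2*N), hNpos, by positivity, ?_⟩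
  intro z hzS hznorm
  have hz2 : (2*(N:ℝ)) • z ∈ S := S.smul_mem _ hzS
  set s : S := ⟨(2*(N:ℝ)) • z, hz2⟩ with hsdef
  have hsnorm : ‖s‖ < ε/2 := by
    have h1 : ‖s‖ = ‖(2*(N:ℝ)) • z‖ := rfl
    rw [h1, norm_smul, Real.norm_eq_abs, abs_of_pos (by positivity)]
    calc (2*(N:ℝ)) * ‖z‖ < (2*(N:ℝ)) * ((ε/2)/(2*(N:ℝ))) :=
          mul_lt_mul_of_pos_left hznorm (by positivity)
      _ = ε/2 := by field_simp
  let res : ℕ → S := fun m => Nat.rec (motive := fun _ => S) s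
    (fun m sm => sm - ((2:ℝ)⁻¹)^m • bfn ((2:ℝ)^m • sm)) m
  have hresS : ∀ m, res (m+1) = res m - ((2:ℝ)⁻¹)^m • bfn ((2:ℝ)^m • res m) := fun m => rfl
  have hres : ∀ m, ‖res m‖ < (ε/2) * (2⁻¹)^m := by
    intro m
    induction m with
    | zero => simpa [show res 0 = s from rfl] using hsnorm
    | succ m ih =>
      have ha : ‖(2:ℝ)^m • res m‖ < ε/2 := by
        rw [norm_smul, Real.norm_eq_abs, abs_of_pos (by positivity)]
        calc (2:ℝ)^m * ‖res m‖ < (2:ℝ)^m * ((ε/2) * (2⁻¹)^m) :=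
              mul_lt_mul_of_pos_left ih (by positivity)
          _ = (ε/2) * ((2:ℝ)^m * (2⁻¹)^m) := by ring
          _ = ε/2 := by rw [← mul_pow]; norm_num
      have hb := hbdist _ ha
      have hc : res (m+1) = ((2:ℝ)⁻¹)^m • ((2:ℝ)^m • res m - bfn ((2:ℝ)^m • res m)) := by
        rw [hresS m, smul_sub, smul_smul, ← mul_pow]
        norm_num
      rw [hc, norm_smul, Real.norm_eq_abs, abs_of_pos (by positivity)]
      calc ((2:ℝ)⁻¹)^m * ‖(2:ℝ)^m • res m - bfn ((2:ℝ)^m • res m)‖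
          < ((2:ℝ)⁻¹)^m * (ε/4) := mul_lt_mul_of_pos_left hb (by positivity)
        _ = (ε/2) * (2⁻¹)^(m+1) := by rw [pow_succ]; ring
  set bb : ℕ → S := fun m => bfn ((2:ℝ)^m • res m) with hbb
  have hdecs : ∀ m : ℕ, ∃ u₁ v₁ u₂ v₂, (v₁ ∈ H u₁ ∧ v₂ ∈ L u₂) ∧
      ((bb m : X) = (N:ℝ) • (u₁ - u₂)) ∧
      (‖u₁ - xb‖ ≤ (N:ℝ) ∧ ‖v₁ - yb₁‖ ≤ (N:ℝ) ∧ ‖u₂ - xb‖ ≤ (N:ℝ) ∧ ‖v₂ - yb₂‖ ≤ (N:ℝ)) := by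
    intro m
    obtain ⟨e, he, heq⟩ := hbG ((2:ℝ)^m • res m)
    obtain ⟨u₁, v₁, u₂, v₂, h1, h2, rfl, b1, b2, b3, b4⟩ := he
    exact ⟨u₁, v₁, u₂, v₂, ⟨h1, h2⟩, heq.symm, b1, b2, b3, b4⟩
  choose p pv q qv hmems heqs hbnds using hdecs
  obtain ⟨PV, hPVmem, hPVsum, hPVn⟩ := convexSeries hHconv hHcl
    (show ((xb, yb₁) : X × Y) ∈ gph H from hyb₁)
    (fun j => (p j, pv j)) (fun j => (hmems j).1) (N := (N:ℝ)) (fun j => by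
      rw [Prod.mk_sub_mk, Prod.norm_def]
      exact max_le (hbnds j).1 (hbnds j).2.1)
  obtain ⟨QW, hQWmem, hQWsum, hQWn⟩ := convexSeries hLconv hLcl
    (show ((xb, yb₂) : X × Y) ∈ gph L from hyb₂)
    (fun j => (q j, qv j)) (fun j => (hmems j).2) (N := (N:ℝ)) (fun j => by
      rw [Prod.mk_sub_mk, Prod.norm_def]
      exact max_le (hbnds j).2.2.1 (hbnds j).2.2.2)
  have hP1 : HasSum (fun j => ((2:ℝ)⁻¹)^(j+1) • (p j - xb)) (PV.1 - xb) := by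
    have h := hPVsum.mapL (ContinuousLinearMap.fst ℝ X Y)
    simpa using h
  have hQ1 : HasSum (fun j => ((2:ℝ)⁻¹)^(j+1) • (q j - xb)) (QW.1 - xb) := by
    have h := hQWsum.mapL (ContinuousLinearMap.fst ℝ X Y)
    simpa using h
  have hdiff : HasSum (fun j => ((2:ℝ)⁻¹)^j • (bb j : X)) ((2*(N:ℝ)) • (PV.1 - QW.1)) := by
    have h := (hP1.sub hQ1).const_smul ((2:ℝ)*(N:ℝ))
    have hval : ((2:ℝ)*(N:ℝ)) • ((PV.1 - xb) - (QW.1 - xb)) = (2*(N:ℝ)) • (PV.1 - QW.1) := by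
      rw [sub_sub_sub_cancel_right]
    rw [hval] at h
    have hfe : (fun j => ((2:ℝ)*(N:ℝ)) •
        (((2:ℝ)⁻¹)^(j+1) • (p j - xb) - ((2:ℝ)⁻¹)^(j+1) • (q j - xb)))
        = fun j => ((2:ℝ)⁻¹)^j • (bb j : X) := by
      funext j
      rw [← smul_sub, smul_smul, heqs j, smul_smul, sub_sub_sub_cancel_right]
      congr 1
      rw [pow_succ]
      ring
    rwa [hfe] at h
  have hpartial : ∀ m, ∑ j ∈ Finset.range m, ((2:ℝ)⁻¹)^j • bb j = s - res m := by
    intro m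
    induction m with
    | zero => simp [show res 0 = s from rfl]
    | succ m ih => rw [Finset.sum_range_succ, ih, hresS m]; abel
  have hres0 : Tendsto res atTop (𝓝 0) := by
    apply squeeze_zero_norm (fun m => (hres m).le)
    have h := tendsto_pow_atTop_nhds_zero_of_lt_one
      (by norm_num : (0:ℝ) ≤ 2⁻¹) (by norm_num : (2⁻¹:ℝ) < 1)
    simpa using h.const_mul (ε/2)
  have htendS : Tendsto (fun m => ∑ j ∈ Finset.range m, ((2:ℝ)⁻¹)^j • bb j) atTop (𝓝 s) := by
    simp only [hpartial]
    simpa using tendsto_const_nhds.sub hres0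
  have htendX : Tendsto (fun m => ∑ j ∈ Finset.range m, ((2:ℝ)⁻¹)^j • (bb j : X))
      atTop (𝓝 (s : X)) := by
    have hcont := (continuous_subtype_val.tendsto s).comp htendS
    have hval : ∀ m, ((∑ j ∈ Finset.range m, ((2:ℝ)⁻¹)^j • bb j : S) : X)
        = ∑ j ∈ Finset.range m, ((2:ℝ)⁻¹)^j • (bb j : X) := by
      intro m
      simp
    simpa only [Function.comp_def, hval] using hcont
  have hsX : (s : X) = (2*(N:ℝ)) • (PV.1 - QW.1) :=
    tendsto_nhds_unique htendX (hdiff.tendsto_sum_nat)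
  have hzeq : z = PV.1 - QW.1 := by
    have h2N : (2*(N:ℝ)) ≠ 0 := by positivity
    exact smul_right_injective X h2N hsX
  have hb1 : ‖PV.1 - xb‖ ≤ (N:ℝ) := by
    have h := norm_fst_le (PV - (xb, yb₁))
    simp only [Prod.fst_sub] at h
    exact h.trans hPVn
  have hb2 : ‖PV.2 - yb₁‖ ≤ (N:ℝ) := by
    have h := norm_snd_le (PV - (xb, yb₁))
    simp only [Prod.snd_sub] at h
    exact h.trans hPVn
  have hb3 : ‖QW.1 - xb‖ ≤ (N:ℝ) := by
    have h := norm_fst_le (QW - (xb, yb₂))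
    simp only [Prod.fst_sub] at h
    exact h.trans hQWn
  have hb4 : ‖QW.2 - yb₂‖ ≤ (N:ℝ) := by
    have h := norm_snd_le (QW - (xb, yb₂))
    simp only [Prod.snd_sub] at h
    exact h.trans hQWn
  exact ⟨PV.1, PV.2, QW.1, QW.2, hPVmem, hQWmem, hzeq, hb1, hb2, hb3, hb4⟩

set_option maxHeartbeats 2000000 in
lemma exists_chi {X Y : Type*}
    [NormedAddCommGroup X] [NormedSpace ℝ X] [CompleteSpace X]
    [NormedAddCommGroup Y] [NormedSpace ℝ Y] [CompleteSpace Y]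
    (H L : X → Set Y)
    (hHconv : Convex ℝ (gph H)) (hHcl : IsClosed (gph H))
    (hLconv : Convex ℝ (gph L)) (hLcl : IsClosed (gph L))
    (S : Submodule ℝ X) (hScl : IsClosed (S : Set X))
    (hSeq : {w : X | ∃ t : ℝ, 0 ≤ t ∧ ∃ u ∈ dom H, ∃ v ∈ dom L, w = t • (u - v)} = S)
    (xb : X) (yb₁ yb₂ : Y) (hyb₁ : yb₁ ∈ H xb) (hyb₂ : yb₂ ∈ L xb)
    (ψ : Y →L[ℝ] ℝ) (φ : X →L[ℝ] ℝ)
    (hφ : ∀ u v₁ v₂, v₁ ∈ H u → v₂ ∈ L u → φ (u - xb) ≤ ψ (v₁ - yb₁) + ψ (v₂ - yb₂)) :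
    ∃ χ : X →L[ℝ] ℝ, ∀ u₁ v₁ u₂ v₂, v₁ ∈ H u₁ → v₂ ∈ L u₂ →
      χ (u₁ - u₂) ≤ ψ (v₁ - yb₁) - φ (u₁ - xb) + ψ (v₂ - yb₂) := by
  obtain ⟨NN, r', hNN, hr', hdec⟩ :=
    boundedDec H L hHconv hHcl hLconv hLcl S hScl hSeq xb yb₁ yb₂ hyb₁ hyb₂
  set gv : X → Y → X → Y → ℝ :=
    fun u₁ v₁ u₂ v₂ => ψ (v₁ - yb₁) - φ (u₁ - xb) + ψ (v₂ - yb₂) with hgv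
  set M : ℝ := NN * (2*‖ψ‖ + ‖φ‖) + 1 with hM
  have hM0 : 0 < M := by positivity
  set ρ : ℝ := r' / 2 with hρ
  have hρ0 : 0 < ρ := by positivity
  set C₀ : ℝ := M / ρ with hC₀
  have hC₀0 : 0 < C₀ := by positivity
  -- linear expansion helpers
  have linY : ∀ (a b : ℝ), a + b = 1 → ∀ (bb x x' : Y),
      ψ (a•x + b•x' - bb) = a * ψ (x - bb) + b * ψ (x' - bb) := by
    intro a b hab bb x x'
    have hyy : a•bb + b•bb = bb := by rw [← add_smul, hab, one_smul]
    have hveq : a•x + b•x' - bb = a•(x - bb) + b•(x' - bb) := by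
      have h2 : a•(x - bb) + b•(x' - bb) = a•x + b•x' - (a•bb + b•bb) := by module
      rw [h2, hyy]
    rw [hveq, map_add, map_smul, map_smul, smul_eq_mul, smul_eq_mul]
  have linX : ∀ (a b : ℝ), a + b = 1 → ∀ (bb x x' : X),
      φ (a•x + b•x' - bb) = a * φ (x - bb) + b * φ (x' - bb) := by
    intro a b hab bb x x'
    have hyy : a•bb + b•bb = bb := by rw [← add_smul, hab, one_smul]
    have hveq : a•x + b•x' - bb = a•(x - bb) + b•(x' - bb) := by
      have h2 : a•(x - bb) + b•(x' - bb) = a•x + b•x' - (a•bb + b•bb) := by module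
      rw [h2, hyy]
    rw [hveq, map_add, map_smul, map_smul, smul_eq_mul, smul_eq_mul]
  -- bound for decompositions coming from boundedDec
  have hgbound : ∀ u₁ v₁ u₂ v₂, ‖u₁ - xb‖ ≤ NN → ‖v₁ - yb₁‖ ≤ NN → ‖v₂ - yb₂‖ ≤ NN →
      gv u₁ v₁ u₂ v₂ ≤ M := by
    intro u₁ v₁ u₂ v₂ b1 b2 b4
    have e1 : ψ (v₁ - yb₁) ≤ ‖ψ‖ * ‖v₁ - yb₁‖ :=
      le_trans (le_abs_self _) (by rw [← Real.norm_eq_abs]; exact ψ.le_opNorm _)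
    have e2 : ψ (v₂ - yb₂) ≤ ‖ψ‖ * ‖v₂ - yb₂‖ :=
      le_trans (le_abs_self _) (by rw [← Real.norm_eq_abs]; exact ψ.le_opNorm _)
    have e3 : -φ (u₁ - xb) ≤ ‖φ‖ * ‖u₁ - xb‖ := by
      have h4 : |φ (u₁ - xb)| ≤ ‖φ‖ * ‖u₁ - xb‖ := by
        rw [← Real.norm_eq_abs]; exact φ.le_opNorm _
      linarith [neg_abs_le (φ (u₁ - xb))]
    have hψ0 : (0:ℝ) ≤ ‖ψ‖ := norm_nonneg _
    have hφ0 : (0:ℝ) ≤ ‖φ‖ := norm_nonneg _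
    have m1 : ‖ψ‖ * ‖v₁ - yb₁‖ ≤ ‖ψ‖ * NN := by gcongr
    have m2 : ‖ψ‖ * ‖v₂ - yb₂‖ ≤ ‖ψ‖ * NN := by gcongr
    have m3 : ‖φ‖ * ‖u₁ - xb‖ ≤ ‖φ‖ * NN := by gcongr
    show ψ (v₁ - yb₁) - φ (u₁ - xb) + ψ (v₂ - yb₂) ≤ NN * (2*‖ψ‖ + ‖φ‖) + 1
    nlinarith
  -- the key lower bound
  have hlow : ∀ u₁ v₁ u₂ v₂, v₁ ∈ H u₁ → v₂ ∈ L u₂ →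
      -(C₀ * ‖u₁ - u₂‖) ≤ gv u₁ v₁ u₂ v₂ := by
    intro u₁ v₁ u₂ v₂ h1 h2
    by_cases hz : u₁ - u₂ = 0
    · have hu : u₁ = u₂ := sub_eq_zero.mp hz
      rw [hz, norm_zero, mul_zero, neg_zero]
      have h2' : v₂ ∈ L u₁ := by rw [hu]; exact h2
      have := hφ u₁ v₁ v₂ h1 h2'
      show (0:ℝ) ≤ ψ (v₁ - yb₁) - φ (u₁ - xb) + ψ (v₂ - yb₂)
      linarith
    · have hz0 : 0 < ‖u₁ - u₂‖ := norm_pos_iff.mpr hz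
      have hzS : u₁ - u₂ ∈ (S : Set X) := by
        rw [← hSeq]
        exact ⟨1, zero_le_one, u₁, ⟨v₁, h1⟩, u₂, ⟨v₂, h2⟩, by rw [one_smul]⟩
      set c : ℝ := -(ρ/‖u₁ - u₂‖) with hc
      have hz₂S : c • (u₁ - u₂) ∈ (S : Set X) := S.smul_mem c hzS
      have hz₂n : ‖c • (u₁ - u₂)‖ < r' := by
        rw [norm_smul, Real.norm_eq_abs, hc, abs_neg, abs_of_pos (by positivity),
          div_mul_cancel₀ _ (ne_of_gt hz0), hρ]
        linarith
      obtain ⟨ub₁, vb₁, ub₂, vb₂, hb1, hb2, hbeq, bb1, bb2, bb3, bb4⟩ :=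
        hdec (c • (u₁ - u₂)) hz₂S hz₂n
      have hgbar : gv ub₁ vb₁ ub₂ vb₂ ≤ M := hgbound ub₁ vb₁ ub₂ vb₂ bb1 bb2 bb4
      set lam : ℝ := ρ / (ρ + ‖u₁ - u₂‖) with hlam
      have hlam0 : 0 < lam := by positivity
      have hlam1 : lam < 1 := by
        rw [hlam, div_lt_one (by positivity)]; linarith
      have hmix1 : lam•v₁ + (1-lam)•vb₁ ∈ H (lam•u₁ + (1-lam)•ub₁) :=
        mixGph hHconv hlam0.le (by linarith) (by ring) h1 hb1
      have hmix2 : lam•v₂ + (1-lam)•vb₂ ∈ L (lam•u₂ + (1-lam)•ub₂) :=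
        mixGph hLconv hlam0.le (by linarith) (by ring) h2 hb2
      have hueq : lam•u₁ + (1-lam)•ub₁ = lam•u₂ + (1-lam)•ub₂ := by
        have hd : (lam•u₁ + (1-lam)•ub₁) - (lam•u₂ + (1-lam)•ub₂)
            = lam•(u₁ - u₂) + (1-lam)•(ub₁ - ub₂) := by
          rw [smul_sub, smul_sub]; abel
        have hsc : lam + (1-lam)*c = 0 := by
          rw [hlam, hc]
          field_simp
          ring
        have hd2 : (lam•u₁ + (1-lam)•ub₁) - (lam•u₂ + (1-lam)•ub₂) = 0 := by
          rw [hd, ← hbeq, smul_smul, ← add_smul, hsc, zero_smul]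
        exact sub_eq_zero.mp hd2
      have hmix2' : lam•v₂ + (1-lam)•vb₂ ∈ L (lam•u₁ + (1-lam)•ub₁) := by
        rw [hueq]; exact hmix2
      have hineq := hφ _ _ _ hmix1 hmix2'
      rw [linY lam (1-lam) (by ring) yb₁ v₁ vb₁,
          linY lam (1-lam) (by ring) yb₂ v₂ vb₂,
          linX lam (1-lam) (by ring) xb u₁ ub₁] at hineq
      have hkey : 0 ≤ lam * gv u₁ v₁ u₂ v₂ + (1-lam) * gv ub₁ vb₁ ub₂ vb₂ := by
        show 0 ≤ lam * (ψ (v₁ - yb₁) - φ (u₁ - xb) + ψ (v₂ - yb₂))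
          + (1-lam) * (ψ (vb₁ - yb₁) - φ (ub₁ - xb) + ψ (vb₂ - yb₂))
        nlinarith [hineq]
      have h5 : -((1-lam) * M) ≤ lam * gv u₁ v₁ u₂ v₂ := by
        have h6 : (1-lam) * gv ub₁ vb₁ ub₂ vb₂ ≤ (1-lam) * M :=
          mul_le_mul_of_nonneg_left hgbar (by linarith)
        linarith
      have h7 : -(C₀ * ‖u₁ - u₂‖) * lam = -((1-lam) * M) := by
        rw [hC₀, hlam]
        field_simp
        ring
      have h8 : -(C₀ * ‖u₁ - u₂‖) * lam ≤ lam * gv u₁ v₁ u₂ v₂ := by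
        rw [h7]; exact h5
      have h9 : -(C₀ * ‖u₁ - u₂‖) * lam = lam * (-(C₀ * ‖u₁ - u₂‖)) := by ring
      rw [h9] at h8
      exact le_of_mul_le_mul_left h8 hlam0
  -- the sublinear functional Q
  set A : X → Set ℝ := fun w => {cc | ∃ t : ℝ, 0 < t ∧ ∃ u₁ v₁ u₂ v₂,
    v₁ ∈ H u₁ ∧ v₂ ∈ L u₂ ∧
    cc = gv u₁ v₁ u₂ v₂ / t + C₀ * ‖w - t⁻¹ • (u₁ - u₂)‖} with hA
  set Q : X → ℝ := fun w => sInf (A w) with hQ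
  have hAne : ∀ w, (A w).Nonempty := by
    intro w
    exact ⟨gv xb yb₁ xb yb₂ / 1 + C₀ * ‖w - 1⁻¹ • (xb - xb)‖,
      1, one_pos, xb, yb₁, xb, yb₂, hyb₁, hyb₂, rfl⟩
  have hAlb : ∀ w, ∀ cc ∈ A w, -(C₀ * ‖w‖) ≤ cc := by
    rintro w cc ⟨t, ht, u₁, v₁, u₂, v₂, h1, h2, rfl⟩
    have hg := hlow u₁ v₁ u₂ v₂ h1 h2
    have h3 : -(C₀ * ‖u₁ - u₂‖)/t ≤ gv u₁ v₁ u₂ v₂ / t := by gcongr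
    have h4 : ‖t⁻¹ • (u₁-u₂)‖ - ‖w‖ ≤ ‖w - t⁻¹ • (u₁-u₂)‖ := by
      rw [norm_sub_rev]
      exact norm_sub_norm_le _ _
    have h5 : ‖t⁻¹ • (u₁-u₂)‖ = t⁻¹ * ‖u₁-u₂‖ := by
      rw [norm_smul, Real.norm_eq_abs, abs_of_pos (by positivity)]
    have h7 : C₀ * (t⁻¹ * ‖u₁-u₂‖) - C₀ * ‖w‖ ≤ C₀ * ‖w - t⁻¹ • (u₁-u₂)‖ := by
      have h6 := mul_le_mul_of_nonneg_left h4 hC₀0.le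
      rw [mul_sub, h5] at h6
      linarith
    have h8 : -(C₀ * ‖u₁-u₂‖)/t = -(C₀ * (t⁻¹ * ‖u₁-u₂‖)) := by ring
    rw [h8] at h3
    linarith
  have hbdd : ∀ w, BddBelow (A w) := fun w => ⟨-(C₀*‖w‖), fun c hc => hAlb w c hc⟩
  have hQlb : ∀ w, -(C₀*‖w‖) ≤ Q w := fun w => le_csInf (hAne w) (hAlb w)
  have hQub : ∀ w, Q w ≤ C₀ * ‖w‖ := by
    intro w
    have hmem : C₀ * ‖w‖ ∈ A w := by
      refine ⟨1, one_pos, xb, yb₁, xb, yb₂, hyb₁, hyb₂, ?_⟩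
      show C₀ * ‖w‖ = (ψ (yb₁ - yb₁) - φ (xb - xb) + ψ (yb₂ - yb₂)) / 1
        + C₀ * ‖w - 1⁻¹ • (xb - xb)‖
      simp
    exact csInf_le (hbdd w) hmem
  have hQzero : 0 ≤ Q 0 := by
    have := hQlb 0
    simpa using this
  -- subadditivity
  have hQadd : ∀ w w', Q (w + w') ≤ Q w + Q w' := by
    intro w w'
    apply le_of_forall_pos_le_add
    intro ε hε
    obtain ⟨c₁, hc₁A, hc₁⟩ := Real.lt_sInf_add_pos (hAne w) (half_pos hε)
    obtain ⟨c₂, hc₂A, hc₂⟩ := Real.lt_sInf_add_pos (hAne w') (half_pos hε)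
    obtain ⟨t, ht, u₁, v₁, u₂, v₂, h1, h2, rfl⟩ := hc₁A
    obtain ⟨t', ht', u₁', v₁', u₂', v₂', h1', h2', rfl⟩ := hc₂A
    set lam : ℝ := t' / (t + t') with hlam
    set mu : ℝ := t / (t + t') with hmu
    set t'' : ℝ := t*t'/(t+t') with ht''
    have htt : 0 < t + t' := by linarith
    have hlam0 : 0 < lam := by positivity
    have hmu0 : 0 < mu := by positivity
    have hlm : lam + mu = 1 := by rw [hlam, hmu]; field_simp; ring
    have ht''0 : 0 < t'' := by rw [ht'']; positivity
    have hm1 : lam•v₁ + mu•v₁' ∈ H (lam•u₁ + mu•u₁') :=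
      mixGph hHconv hlam0.le hmu0.le hlm h1 h1'
    have hm2 : lam•v₂ + mu•v₂' ∈ L (lam•u₂ + mu•u₂') :=
      mixGph hLconv hlam0.le hmu0.le hlm h2 h2'
    have hs1 : t''⁻¹ * lam = t⁻¹ := by
      rw [ht'', hlam]; field_simp
    have hs2 : t''⁻¹ * mu = t'⁻¹ := by
      rw [ht'', hmu]; field_simp
    have hQle : Q (w + w') ≤ gv (lam•u₁+mu•u₁') (lam•v₁+mu•v₁') (lam•u₂+mu•u₂') (lam•v₂+mu•v₂') / t''
        + C₀ * ‖(w+w') - t''⁻¹ • ((lam•u₁+mu•u₁') - (lam•u₂+mu•u₂'))‖ :=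
      csInf_le (hbdd _) ⟨t'', ht''0, _, _, _, _, hm1, hm2, rfl⟩
    have hgeq : gv (lam•u₁+mu•u₁') (lam•v₁+mu•v₁') (lam•u₂+mu•u₂') (lam•v₂+mu•v₂')
        = lam * gv u₁ v₁ u₂ v₂ + mu * gv u₁' v₁' u₂' v₂' := by
      show ψ (lam•v₁+mu•v₁' - yb₁) - φ (lam•u₁+mu•u₁' - xb) + ψ (lam•v₂+mu•v₂' - yb₂)
          = lam * (ψ (v₁ - yb₁) - φ (u₁ - xb) + ψ (v₂ - yb₂))
            + mu * (ψ (v₁' - yb₁) - φ (u₁' - xb) + ψ (v₂' - yb₂))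
      rw [linY lam mu hlm yb₁ v₁ v₁', linY lam mu hlm yb₂ v₂ v₂', linX lam mu hlm xb u₁ u₁']
      ring
    have hveq : t''⁻¹ • ((lam•u₁+mu•u₁') - (lam•u₂+mu•u₂'))
        = t⁻¹ • (u₁ - u₂) + t'⁻¹ • (u₁' - u₂') := by
      have hd : (lam•u₁+mu•u₁') - (lam•u₂+mu•u₂') = lam•(u₁-u₂) + mu•(u₁'-u₂') := by
        rw [smul_sub, smul_sub]; abel
      rw [hd, smul_add, smul_smul, smul_smul]
      rw [hs1, hs2]
    have hgdiv : gv (lam•u₁+mu•u₁') (lam•v₁+mu•v₁') (lam•u₂+mu•u₂') (lam•v₂+mu•v₂') / t''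
        = gv u₁ v₁ u₂ v₂ / t + gv u₁' v₁' u₂' v₂' / t' := by
      rw [hgeq, div_eq_inv_mul, div_eq_inv_mul, div_eq_inv_mul, ← hs1, ← hs2]
      ring
    have hnorm : ‖(w+w') - t''⁻¹ • ((lam•u₁+mu•u₁') - (lam•u₂+mu•u₂'))‖
        ≤ ‖w - t⁻¹ • (u₁ - u₂)‖ + ‖w' - t'⁻¹ • (u₁' - u₂')‖ := by
      rw [hveq]
      have hd : (w+w') - (t⁻¹ • (u₁ - u₂) + t'⁻¹ • (u₁' - u₂'))
          = (w - t⁻¹ • (u₁ - u₂)) + (w' - t'⁻¹ • (u₁' - u₂')) := by abel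
      rw [hd]
      exact norm_add_le _ _
    have hfinal : gv (lam•u₁+mu•u₁') (lam•v₁+mu•v₁') (lam•u₂+mu•u₂') (lam•v₂+mu•v₂') / t''
        + C₀ * ‖(w+w') - t''⁻¹ • ((lam•u₁+mu•u₁') - (lam•u₂+mu•u₂'))‖
        ≤ (gv u₁ v₁ u₂ v₂ / t + C₀ * ‖w - t⁻¹ • (u₁ - u₂)‖)
          + (gv u₁' v₁' u₂' v₂' / t' + C₀ * ‖w' - t'⁻¹ • (u₁' - u₂')‖) := by
      have := mul_le_mul_of_nonneg_left hnorm hC₀0.le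
      rw [hgdiv]
      rw [mul_add] at this
      linarith
    have hQw : Q w = sInf (A w) := rfl
    have hQw' : Q w' = sInf (A w') := rfl
    rw [← hQw] at hc₁
    rw [← hQw'] at hc₂
    have hchain := hQle.trans hfinal
    linarith
  -- positive homogeneity
  have hQH1 : ∀ cpos : ℝ, 0 < cpos → ∀ w, Q (cpos • w) ≤ cpos * Q w := by
    intro cp hcp w
    apply le_of_forall_pos_le_add
    intro ε hε
    obtain ⟨c₁, hc₁A, hc₁⟩ := Real.lt_sInf_add_pos (hAne w) (div_pos hε hcp)
    obtain ⟨t, ht, u₁, v₁, u₂, v₂, h1, h2, rfl⟩ := hc₁A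
    have hmem : cp * (gv u₁ v₁ u₂ v₂ / t + C₀ * ‖w - t⁻¹ • (u₁ - u₂)‖) ∈ A (cp • w) := by
      refine ⟨t/cp, by positivity, u₁, v₁, u₂, v₂, h1, h2, ?_⟩
      have hsm : (t/cp)⁻¹ • (u₁ - u₂) = cp • (t⁻¹ • (u₁ - u₂)) := by
        rw [smul_smul]
        congr 1
        field_simp
      rw [hsm, ← smul_sub, norm_smul, Real.norm_eq_abs, abs_of_pos hcp]
      have hdd : gv u₁ v₁ u₂ v₂ / (t/cp) = cp * (gv u₁ v₁ u₂ v₂ / t) := by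
        field_simp
      rw [hdd]
      ring
    have h9 : Q (cp • w) ≤ cp * (gv u₁ v₁ u₂ v₂ / t + C₀ * ‖w - t⁻¹ • (u₁ - u₂)‖) :=
      csInf_le (hbdd _) hmem
    have h10 : cp * (gv u₁ v₁ u₂ v₂ / t + C₀ * ‖w - t⁻¹ • (u₁ - u₂)‖)
        ≤ cp * (Q w + ε/cp) :=
      mul_le_mul_of_nonneg_left (by linarith [hc₁]) hcp.le
    have h11 : cp * (Q w + ε/cp) = cp * Q w + ε := by
      field_simp
    linarith
  have hQhom : ∀ cpos : ℝ, 0 < cpos → ∀ w, Q (cpos • w) = cpos * Q w := by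
    intro cp hcp w
    refine le_antisymm (hQH1 cp hcp w) ?_
    have h1 := hQH1 cp⁻¹ (by positivity) (cp • w)
    rw [smul_smul, inv_mul_cancel₀ (ne_of_gt hcp), one_smul] at h1
    have h2 := mul_le_mul_of_nonneg_left h1 hcp.le
    rw [← mul_assoc, mul_inv_cancel₀ (ne_of_gt hcp), one_mul] at h2
    exact h2
  -- Hahn-Banach
  obtain ⟨χlin, -, hχle⟩ := exists_extension_of_le_sublinear
    ⟨⊥, 0⟩ Q (fun cpos hcp x => hQhom cpos hcp x) hQadd
    (fun x => by
      have hx : (x : X) = 0 := (Submodule.mem_bot ℝ).mp x.2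
      show (0 : ↥(⊥ : Submodule ℝ X) →ₗ[ℝ] ℝ) x ≤ Q (x : X)
      rw [LinearMap.zero_apply, hx]
      exact hQzero)
  have hbound : ∀ x : X, ‖χlin x‖ ≤ C₀ * ‖x‖ := by
    intro x
    rw [Real.norm_eq_abs, abs_le]
    constructor
    · have h1 : χlin (-x) ≤ Q (-x) := hχle (-x)
      have h2 : Q (-x) ≤ C₀ * ‖x‖ := by
        have := hQub (-x)
        rwa [norm_neg] at this
      rw [map_neg] at h1
      linarith
    · exact (hχle x).trans (hQub x)
  set χ : X →L[ℝ] ℝ := χlin.mkContinuous C₀ hbound with hχ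
  refine ⟨χ, ?_⟩
  intro u₁ v₁ u₂ v₂ h1 h2
  have hmem : gv u₁ v₁ u₂ v₂ ∈ A (u₁ - u₂) := by
    refine ⟨1, one_pos, u₁, v₁, u₂, v₂, h1, h2, ?_⟩
    simp
  have h3 : Q (u₁ - u₂) ≤ gv u₁ v₁ u₂ v₂ := csInf_le (hbdd _) hmem
  have h4 : χ (u₁ - u₂) = χlin (u₁ - u₂) := rfl
  have h5 := (hχle (u₁ - u₂)).trans h3
  rw [h4]
  exact h5

/-- sum rule: for convex closed set-valued maps `H, L : X ⇉ Y` with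
`ℝ⁺(dom H − dom L)` a closed linear subspace of `X`, and `(xb, yb) ∈ gph (H + L)` split
as `yb = yb₁ + yb₂` with `yb₁ ∈ H(xb)`, `yb₂ ∈ L(xb)`, one has
`D*(H + L)(xb, yb)(y*) = D*H(xb, yb₁)(y*) + D*L(xb, yb₂)(y*)`. -/
theorem stmt1
    {X Y : Type*}
    [NormedAddCommGroup X] [NormedSpace ℝ X] [CompleteSpace X]
    [NormedAddCommGroup Y] [NormedSpace ℝ Y] [CompleteSpace Y]
    (H L : X → Set Y)
    (hHconv : Convex ℝ (gph H)) (hHcl : IsClosed (gph H))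
    (hLconv : Convex ℝ (gph L)) (hLcl : IsClosed (gph L))
    -- ℝ⁺(dom H − dom L) is a closed linear subspace of X
    (hqual : ∃ S : Submodule ℝ X, IsClosed (S : Set X) ∧
      {w : X | ∃ t : ℝ, 0 ≤ t ∧ ∃ u ∈ dom H, ∃ v ∈ dom L, w = t • (u - v)} = S)
    (xb : X) (yb yb₁ yb₂ : Y)
    (hyb₁ : yb₁ ∈ H xb) (hyb₂ : yb₂ ∈ L xb) (hsum : yb₁ + yb₂ = yb)
    (ψ : Y →L[ℝ] ℝ) :
    coderiv (fun x => H x + L x) xb yb ψ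
      = coderiv H xb yb₁ ψ + coderiv L xb yb₂ ψ := by
  obtain ⟨S, hScl, hSeq⟩ := hqual
  ext φ
  simp only [Set.mem_add]
  constructor
  · intro hφ
    simp only [coderiv, Set.mem_setOf_eq] at hφ
    have hφ' : ∀ u v₁ v₂, v₁ ∈ H u → v₂ ∈ L u →
        φ (u - xb) ≤ ψ (v₁ - yb₁) + ψ (v₂ - yb₂) := by
      intro u v₁ v₂ h1 h2
      have hmem : v₁ + v₂ ∈ H u + L u := Set.add_mem_add h1 h2
      have h := hφ u (v₁ + v₂) hmem
      have heq : ψ (v₁ + v₂ - yb) = ψ (v₁ - yb₁) + ψ (v₂ - yb₂) := by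
        rw [← map_add]
        congr 1
        rw [← hsum]
        abel
      linarith
    obtain ⟨χ, hχ⟩ := exists_chi H L hHconv hHcl hLconv hLcl S hScl hSeq
      xb yb₁ yb₂ hyb₁ hyb₂ ψ φ hφ'
    refine ⟨φ + χ, ?_, -χ, ?_, by abel⟩
    · simp only [coderiv, Set.mem_setOf_eq]
      intro u v hv
      have h := hχ u v xb yb₂ hv hyb₂
      have h0 : ψ (yb₂ - yb₂) = 0 := by simp
      rw [h0] at h
      simp only [ContinuousLinearMap.add_apply]
      linarith
    · simp only [coderiv, Set.mem_setOf_eq]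
      intro u v hv
      have h := hχ xb yb₁ u v hyb₁ hv
      have h1 : χ (xb - u) = - χ (u - xb) := by
        rw [← map_neg]
        congr 1
        abel
      have h2 : ψ (yb₁ - yb₁) = 0 := by simp
      have h3 : φ (xb - xb) = 0 := by simp
      rw [h1, h2, h3] at h
      simp only [ContinuousLinearMap.neg_apply]
      linarith
  · rintro ⟨φ₁, hφ₁, φ₂, hφ₂, rfl⟩
    simp only [coderiv, Set.mem_setOf_eq] at hφ₁ hφ₂ ⊢
    intro u v hv
    rw [Set.mem_add] at hv
    obtain ⟨v₁, hv₁, v₂, hv₂, rfl⟩ := hv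
    have h1 := hφ₁ u v₁ hv₁
    have h2 := hφ₂ u v₂ hv₂
    have heq : ψ (v₁ + v₂ - yb) = ψ (v₁ - yb₁) + ψ (v₂ - yb₂) := by
      rw [← map_add]
      congr 1
      rw [← hsum]
      abel
    simp only [ContinuousLinearMap.add_apply]
    linarith
end

section
/- Let H : X ⇉ Y and L : Y ⇉ Z be convex closed set-valued maps between real Banach spaces, and let the composition be (L ∘ H)(x) = ⋃_{y ∈ H(x)} L(y). Suppose that ℝ⁺(rge H − dom L) is a closed linear subspace of Y, where rge H = ⋃_{x ∈ X} H(x). Then for every (x̄, z̄) ∈ gph(L ∘ H), every z* ∈ Z*, and every ȳ ∈ H(x̄) ∩ L⁻¹(z̄), one has D*(L ∘ H)(x̄, z̄)(z*) = ⋃_{y* ∈ D*L(ȳ, z̄)(z*)} D*H(x̄, ȳ)(y*). -/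
open Set Pointwise Topology Filter

set_option linter.unusedSectionVars false
section chainAux

variable {X Y Z : Type*}
  [NormedAddCommGroup X] [NormedSpace ℝ X]
  [NormedAddCommGroup Y] [NormedSpace ℝ Y]
  [NormedAddCommGroup Z] [NormedSpace ℝ Z]

/-- The set of differences `y - y'` with `y ∈ H u`, `w ∈ L y'`, all within distance `K`
of the base points. -/
def cD (H : X → Set Y) (L : Y → Set Z) (xb : X) (yb : Y) (zb : Z) (K : ℝ) : Set Y :=
  {s | ∃ u y y' w, y ∈ H u ∧ w ∈ L y' ∧ y - y' = s ∧
    ‖u - xb‖ + ‖y - yb‖ + ‖y' - yb‖ + ‖w - zb‖ ≤ K}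

variable {H : X → Set Y} {L : Y → Set Z} {xb : X} {yb : Y} {zb : Z}

lemma zero_mem_cD (hyb : yb ∈ H xb) (hzb : zb ∈ L yb) {K : ℝ} (hK : 0 ≤ K) :
    (0:Y) ∈ cD H L xb yb zb K :=
  ⟨xb, yb, yb, zb, hyb, hzb, sub_self _, by simpa using hK⟩

lemma cD_mono {K K' : ℝ} (h : K ≤ K') : cD H L xb yb zb K ⊆ cD H L xb yb zb K' :=
  fun _ ⟨u, y, y', w, h1, h2, h3, h4⟩ => ⟨u, y, y', w, h1, h2, h3, h4.trans h⟩

lemma comb_sub_eq {W : Type*} [AddCommGroup W] [Module ℝ W]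
    {a b : ℝ} (hab : a + b = 1) (x x₁ x₂ : W) :
    a • x₁ + b • x₂ - x = a • (x₁ - x) + b • (x₂ - x) := by
  have hx : a • x + b • x = x := by rw [← add_smul, hab, one_smul]
  rw [smul_sub, smul_sub]
  nth_rewrite 1 [← hx]
  abel

lemma convex_cD (hH : Convex ℝ (gph H)) (hL : Convex ℝ (gph L)) (K : ℝ) :
    Convex ℝ (cD H L xb yb zb K) := by
  rintro s₁ ⟨u₁, y₁, y₁', w₁, m₁, n₁, e₁, b₁⟩ s₂ ⟨u₂, y₂, y₂', w₂, m₂, n₂, e₂, b₂⟩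
    a b ha hb hab
  have hH' : (a • u₁ + b • u₂, a • y₁ + b • y₂) ∈ gph H := by
    have := hH (show (u₁, y₁) ∈ gph H from m₁) (show (u₂, y₂) ∈ gph H from m₂) ha hb hab
    simpa [Prod.smul_mk, Prod.mk_add_mk] using this
  have hL' : (a • y₁' + b • y₂', a • w₁ + b • w₂) ∈ gph L := by
    have := hL (show (y₁', w₁) ∈ gph L from n₁) (show (y₂', w₂) ∈ gph L from n₂) ha hb hab
    simpa [Prod.smul_mk, Prod.mk_add_mk] using this
  refine ⟨a • u₁ + b • u₂, a • y₁ + b • y₂, a • y₁' + b • y₂', a • w₁ + b • w₂,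
    hH', hL', ?_, ?_⟩
  · rw [← e₁, ← e₂]; module
  · have nu : ‖a • u₁ + b • u₂ - xb‖ ≤ a * ‖u₁ - xb‖ + b * ‖u₂ - xb‖ := by
      rw [comb_sub_eq hab]
      exact (norm_add_le _ _).trans (by rw [norm_smul, norm_smul,
        Real.norm_of_nonneg ha, Real.norm_of_nonneg hb])
    have ny : ‖a • y₁ + b • y₂ - yb‖ ≤ a * ‖y₁ - yb‖ + b * ‖y₂ - yb‖ := by
      rw [comb_sub_eq hab]
      exact (norm_add_le _ _).trans (by rw [norm_smul, norm_smul,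
        Real.norm_of_nonneg ha, Real.norm_of_nonneg hb])
    have ny' : ‖a • y₁' + b • y₂' - yb‖ ≤ a * ‖y₁' - yb‖ + b * ‖y₂' - yb‖ := by
      rw [comb_sub_eq hab]
      exact (norm_add_le _ _).trans (by rw [norm_smul, norm_smul,
        Real.norm_of_nonneg ha, Real.norm_of_nonneg hb])
    have nw : ‖a • w₁ + b • w₂ - zb‖ ≤ a * ‖w₁ - zb‖ + b * ‖w₂ - zb‖ := by
      rw [comb_sub_eq hab]
      exact (norm_add_le _ _).trans (by rw [norm_smul, norm_smul,
        Real.norm_of_nonneg ha, Real.norm_of_nonneg hb])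
    have hk : a * K + b * K = K := by rw [← add_mul, hab, one_mul]
    nlinarith [mul_le_mul_of_nonneg_left b₁ ha, mul_le_mul_of_nonneg_left b₂ hb]


lemma smul_mem_cD (hH : Convex ℝ (gph H)) (hL : Convex ℝ (gph L))
    (hyb : yb ∈ H xb) (hzb : zb ∈ L yb)
    {K : ℝ} {s : Y} (hs : s ∈ cD H L xb yb zb K) {τ : ℝ} (h0 : 0 ≤ τ) (h1 : τ ≤ 1) :
    τ • s ∈ cD H L xb yb zb K := by
  have hK : 0 ≤ K := by
    obtain ⟨u, y, y', w, _, _, _, h4⟩ := hs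
    have := norm_nonneg (u - xb); have := norm_nonneg (y - yb)
    have := norm_nonneg (y' - yb); have := norm_nonneg (w - zb); linarith
  have := (convex_cD hH hL K) hs (zero_mem_cD hyb hzb hK) h0
    (show (0:ℝ) ≤ 1 - τ by linarith) (by ring : τ + (1 - τ) = 1)
  simpa using this

/-- the qualification-condition set -/
def qset (H : X → Set Y) (L : Y → Set Z) : Set Y :=
  {w : Y | ∃ t : ℝ, 0 ≤ t ∧ ∃ u ∈ ⋃ x : X, H x, ∃ v ∈ dom L, w = t • (u - v)}

lemma cD_subset_qset (K : ℝ) : cD H L xb yb zb K ⊆ qset H L := by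
  rintro s ⟨u, y, y', w, h1, h2, h3, _⟩
  exact ⟨1, zero_le_one, y, mem_iUnion.2 ⟨u, h1⟩, y', ⟨w, h2⟩, by rw [one_smul, h3]⟩

lemma covering (hH : Convex ℝ (gph H)) (hL : Convex ℝ (gph L))
    (hyb : yb ∈ H xb) (hzb : zb ∈ L yb) {s : Y} (hs : s ∈ qset H L) :
    ∃ k : ℕ, 1 ≤ k ∧ ((k : ℝ))⁻¹ • s ∈ cD H L xb yb zb k := by
  obtain ⟨t, ht, y, hy, y', hy', rfl⟩ := hs
  obtain ⟨u, h1⟩ := mem_iUnion.1 hy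
  obtain ⟨w, h2⟩ := hy'
  set B : ℝ := ‖u - xb‖ + ‖y - yb‖ + ‖y' - yb‖ + ‖w - zb‖ with hB
  refine ⟨⌈max t B⌉₊ + 1, le_add_self, ?_⟩
  set k : ℕ := ⌈max t B⌉₊ + 1 with hk
  have hk1 : (1:ℝ) ≤ (k:ℝ) := by exact_mod_cast Nat.one_le_iff_ne_zero.2 (by omega)
  have hkt : t ≤ (k:ℝ) :=
    le_trans (le_trans (le_max_left t B) (Nat.le_ceil _)) (by exact_mod_cast Nat.le_succ _)
  have hkB : B ≤ (k:ℝ) :=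
    le_trans (le_trans (le_max_right t B) (Nat.le_ceil _)) (by exact_mod_cast Nat.le_succ _)
  have hmem : y - y' ∈ cD H L xb yb zb k := ⟨u, y, y', w, h1, h2, rfl, hkB⟩
  have heq : ((k:ℝ))⁻¹ • t • (y - y') = ((k:ℝ)⁻¹ * t) • (y - y') := smul_smul _ _ _
  rw [heq]
  exact smul_mem_cD hH hL hyb hzb hmem
    (mul_nonneg (inv_nonneg.2 (by linarith)) ht)
    (by rw [inv_mul_le_iff₀ (by linarith : (0:ℝ) < (k:ℝ))]; simpa using hkt)


lemma geom_partial_sum (m : ℕ) :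
    ∑ j ∈ Finset.range m, (2⁻¹:ℝ)^(j+1) = 1 - (2⁻¹:ℝ)^m := by
  induction m with
  | zero => simp
  | succ m ih => rw [Finset.sum_range_succ, ih, pow_succ]; ring

lemma geom_hasSum : HasSum (fun j : ℕ => (2⁻¹:ℝ)^(j+1)) 1 := by
  have h : HasSum (fun j : ℕ => (2⁻¹:ℝ)^j) 2 := by
    have := hasSum_geometric_of_lt_one (by norm_num : (0:ℝ) ≤ 2⁻¹) (by norm_num)
    convert this using 2 <;> norm_num
  have := h.mul_left (2⁻¹:ℝ)
  have e : (fun j : ℕ => (2⁻¹:ℝ)^(j+1)) = fun i => 2⁻¹ * 2⁻¹^i := by funext j; ring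
  rw [e]; norm_num at this ⊢; exact this

lemma aux_summable {W : Type*} [NormedAddCommGroup W] [NormedSpace ℝ W] [CompleteSpace W]
    (v : ℕ → W) {K : ℝ} (hv : ∀ j, ‖v j‖ ≤ K) :
    Summable (fun j => (2⁻¹:ℝ)^(j+1) • v j) := by
  refine Summable.of_norm_bounded (g := fun j => (2⁻¹:ℝ)^(j+1) * K)
    (geom_hasSum.summable.mul_right K) (fun j => ?_)
  rw [norm_smul, Real.norm_of_nonneg (by positivity)]
  exact mul_le_mul_of_nonneg_left (hv j) (by positivity)

lemma beta_if {α : Type*} (m : ℕ) (a b : α) (f : ℕ → α) :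
    (fun j => if j = m then a else f j) m = a := by simp

lemma partial_comb_mem {W : Type*} [AddCommGroup W] [Module ℝ W]
    {s : Set W} (hs : Convex ℝ s) {base : W} (hbase : base ∈ s)
    (p : ℕ → W) (hp : ∀ j, p j ∈ s) (m : ℕ) :
    base + ∑ j ∈ Finset.range m, (2⁻¹:ℝ)^(j+1) • (p j - base) ∈ s := by
  set lam : ℕ → ℝ := fun j => (2⁻¹:ℝ)^(j+1) with hlam
  set Λ : ℝ := ∑ j ∈ Finset.range m, lam j with hΛ
  have hΛle : Λ ≤ 1 := by
    rw [hΛ, hlam, geom_partial_sum]; have : (0:ℝ) ≤ (2⁻¹:ℝ)^m := by positivity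
    linarith
  have heq : base + ∑ j ∈ Finset.range m, lam j • (p j - base)
      = ∑ j ∈ Finset.range m, lam j • p j + (1 - Λ) • base := by
    have h1 : ∑ j ∈ Finset.range m, lam j • (p j - base)
        = ∑ j ∈ Finset.range m, lam j • p j - Λ • base := by
      rw [hΛ, Finset.sum_smul, ← Finset.sum_sub_distrib]
      exact Finset.sum_congr rfl (fun j _ => smul_sub _ _ _)
    rw [h1, sub_smul, one_smul]
    abel
  rw [heq]
  have hmain := hs.sum_mem (t := insert m (Finset.range m))
    (w := fun j => if j = m then 1 - Λ else lam j)
    (z := fun j => if j = m then base else p j)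
    (fun j _ => by
      by_cases h : j = m
      · subst h; simp only [beta_if, if_true]; linarith
      · simp only [if_neg h]; positivity)
    (by
      rw [Finset.sum_insert Finset.notMem_range_self, if_pos rfl]
      have : ∑ j ∈ Finset.range m, (if j = m then 1 - Λ else lam j) = Λ := by
        rw [hΛ]
        exact Finset.sum_congr rfl (fun j hj => if_neg (Nat.ne_of_lt (Finset.mem_range.1 hj)))
      rw [this]; ring)
    (fun j _ => by
      by_cases h : j = m
      · simp only [h, if_pos rfl]; exact hbase
      · simp only [if_neg h]; exact hp j)
  rw [Finset.sum_insert Finset.notMem_range_self] at hmain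
  simp only [beta_if, if_true] at hmain
  have hc : ∑ x ∈ Finset.range m, ((if x = m then 1 - Λ else lam x) •
      (if x = m then base else p x)) = ∑ j ∈ Finset.range m, lam j • p j := by
    refine Finset.sum_congr rfl (fun j hj => ?_)
    have h : j ≠ m := Nat.ne_of_lt (Finset.mem_range.1 hj)
    rw [if_neg h, if_neg h]
  rw [hc] at hmain
  rw [add_comm]
  exact hmain


lemma csClosed [CompleteSpace X] [CompleteSpace Y] [CompleteSpace Z]
    (hHconv : Convex ℝ (gph H)) (hHcl : IsClosed (gph H))
    (hLconv : Convex ℝ (gph L)) (hLcl : IsClosed (gph L))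
    (hyb : yb ∈ H xb) (hzb : zb ∈ L yb)
    {K : ℝ} (c : ℕ → Y) (hc : ∀ j, c j ∈ cD H L xb yb zb K) {x : Y}
    (hx : Tendsto (fun m => ∑ j ∈ Finset.range m, (2⁻¹:ℝ)^(j+1) • c j) atTop (𝓝 x)) :
    x ∈ cD H L xb yb zb K := by
  choose u y y' w h1 h2 h3 h4 using hc
  have hbu : ∀ j, ‖u j - xb‖ ≤ K := fun j => by
    have := norm_nonneg (y j - yb); have := norm_nonneg (y' j - yb)
    have := norm_nonneg (w j - zb); linarith [h4 j]
  have hby : ∀ j, ‖y j - yb‖ ≤ K := fun j => by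
    have := norm_nonneg (u j - xb); have := norm_nonneg (y' j - yb)
    have := norm_nonneg (w j - zb); linarith [h4 j]
  have hby' : ∀ j, ‖y' j - yb‖ ≤ K := fun j => by
    have := norm_nonneg (u j - xb); have := norm_nonneg (y j - yb)
    have := norm_nonneg (w j - zb); linarith [h4 j]
  have hbw : ∀ j, ‖w j - zb‖ ≤ K := fun j => by
    have := norm_nonneg (u j - xb); have := norm_nonneg (y j - yb)
    have := norm_nonneg (y' j - yb); linarith [h4 j]
  set lam : ℕ → ℝ := fun j => (2⁻¹:ℝ)^(j+1) with hlam
  have Su : Summable (fun j => lam j • (u j - xb)) := aux_summable _ hbu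
  have Sy : Summable (fun j => lam j • (y j - yb)) := aux_summable _ hby
  have Sy' : Summable (fun j => lam j • (y' j - yb)) := aux_summable _ hby'
  have Sw : Summable (fun j => lam j • (w j - zb)) := aux_summable _ hbw
  set Au := ∑' j, lam j • (u j - xb) with hAu
  set Ay := ∑' j, lam j • (y j - yb) with hAy
  set Ay' := ∑' j, lam j • (y' j - yb) with hAy'
  set Aw := ∑' j, lam j • (w j - zb) with hAw
  -- membership of the limits in the graphs
  have memH : (xb + Au, yb + Ay) ∈ gph H := by
    have hT : Tendsto (fun m => ((xb, yb) : X × Y) +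
        ∑ j ∈ Finset.range m, lam j • ((u j, y j) - (xb, yb))) atTop (𝓝 (xb + Au, yb + Ay)) := by
      have h1' : Tendsto (fun m => xb + ∑ j ∈ Finset.range m, lam j • (u j - xb))
          atTop (𝓝 (xb + Au)) := Su.hasSum.tendsto_sum_nat.const_add xb
      have h2' : Tendsto (fun m => yb + ∑ j ∈ Finset.range m, lam j • (y j - yb))
          atTop (𝓝 (yb + Ay)) := Sy.hasSum.tendsto_sum_nat.const_add yb
      convert h1'.prodMk_nhds h2' using 2 with m
      simp [Prod.ext_iff, Prod.fst_sum, Prod.snd_sum]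
    exact hHcl.mem_of_tendsto hT (Eventually.of_forall (fun m =>
      partial_comb_mem hHconv (show ((xb, yb) : X × Y) ∈ gph H from hyb)
        (fun j => (u j, y j)) (fun j => h1 j) m))
  have memL : (yb + Ay', zb + Aw) ∈ gph L := by
    have hT : Tendsto (fun m => ((yb, zb) : Y × Z) +
        ∑ j ∈ Finset.range m, lam j • ((y' j, w j) - (yb, zb))) atTop (𝓝 (yb + Ay', zb + Aw)) := by
      have h1' : Tendsto (fun m => yb + ∑ j ∈ Finset.range m, lam j • (y' j - yb))
          atTop (𝓝 (yb + Ay')) := Sy'.hasSum.tendsto_sum_nat.const_add yb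
      have h2' : Tendsto (fun m => zb + ∑ j ∈ Finset.range m, lam j • (w j - zb))
          atTop (𝓝 (zb + Aw)) := Sw.hasSum.tendsto_sum_nat.const_add zb
      convert h1'.prodMk_nhds h2' using 2 with m
      simp [Prod.ext_iff, Prod.fst_sum, Prod.snd_sum]
    exact hLcl.mem_of_tendsto hT (Eventually.of_forall (fun m =>
      partial_comb_mem hLconv (show ((yb, zb) : Y × Z) ∈ gph L from hzb)
        (fun j => (y' j, w j)) (fun j => h2 j) m))
  -- identification of x
  have hxs : (yb + Ay) - (yb + Ay') = x := by
    have hsub : HasSum (fun j => lam j • c j) (Ay - Ay') := by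
      have := Sy.hasSum.sub Sy'.hasSum
      convert this using 2 with j
      rw [← smul_sub]
      congr 1
      rw [← h3 j]
      abel
    exact tendsto_nhds_unique hsub.tendsto_sum_nat hx ▸ (by abel)
  -- norm bound
  have SuN : Summable (fun j => lam j * ‖u j - xb‖) :=
    Summable.of_nonneg_of_le (fun j => by positivity)
      (fun j => mul_le_mul_of_nonneg_left (hbu j) (by positivity))
      (geom_hasSum.summable.mul_right K)
  have SyN : Summable (fun j => lam j * ‖y j - yb‖) :=
    Summable.of_nonneg_of_le (fun j => by positivity)
      (fun j => mul_le_mul_of_nonneg_left (hby j) (by positivity))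
      (geom_hasSum.summable.mul_right K)
  have Sy'N : Summable (fun j => lam j * ‖y' j - yb‖) :=
    Summable.of_nonneg_of_le (fun j => by positivity)
      (fun j => mul_le_mul_of_nonneg_left (hby' j) (by positivity))
      (geom_hasSum.summable.mul_right K)
  have SwN : Summable (fun j => lam j * ‖w j - zb‖) :=
    Summable.of_nonneg_of_le (fun j => by positivity)
      (fun j => mul_le_mul_of_nonneg_left (hbw j) (by positivity))
      (geom_hasSum.summable.mul_right K)
  have hnormbound : ‖Au‖ + ‖Ay‖ + ‖Ay'‖ + ‖Aw‖ ≤ K := by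
    have nAu : ‖Au‖ ≤ ∑' j, lam j * ‖u j - xb‖ := by
      refine le_trans (norm_tsum_le_tsum_norm ?_) (le_of_eq (tsum_congr (fun j => ?_)))
      · refine SuN.congr (fun j => ?_)
        rw [norm_smul, Real.norm_of_nonneg (by positivity)]
      · rw [norm_smul, Real.norm_of_nonneg (by positivity)]
    have nAy : ‖Ay‖ ≤ ∑' j, lam j * ‖y j - yb‖ := by
      refine le_trans (norm_tsum_le_tsum_norm ?_) (le_of_eq (tsum_congr (fun j => ?_)))
      · refine SyN.congr (fun j => ?_)
        rw [norm_smul, Real.norm_of_nonneg (by positivity)]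
      · rw [norm_smul, Real.norm_of_nonneg (by positivity)]
    have nAy' : ‖Ay'‖ ≤ ∑' j, lam j * ‖y' j - yb‖ := by
      refine le_trans (norm_tsum_le_tsum_norm ?_) (le_of_eq (tsum_congr (fun j => ?_)))
      · refine Sy'N.congr (fun j => ?_)
        rw [norm_smul, Real.norm_of_nonneg (by positivity)]
      · rw [norm_smul, Real.norm_of_nonneg (by positivity)]
    have nAw : ‖Aw‖ ≤ ∑' j, lam j * ‖w j - zb‖ := by
      refine le_trans (norm_tsum_le_tsum_norm ?_) (le_of_eq (tsum_congr (fun j => ?_)))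
      · refine SwN.congr (fun j => ?_)
        rw [norm_smul, Real.norm_of_nonneg (by positivity)]
      · rw [norm_smul, Real.norm_of_nonneg (by positivity)]
    have htotal : (∑' j, lam j * ‖u j - xb‖) + (∑' j, lam j * ‖y j - yb‖)
        + (∑' j, lam j * ‖y' j - yb‖) + (∑' j, lam j * ‖w j - zb‖) ≤ K := by
      have hsum4 : (∑' j, lam j * ‖u j - xb‖) + (∑' j, lam j * ‖y j - yb‖)
          + (∑' j, lam j * ‖y' j - yb‖) + (∑' j, lam j * ‖w j - zb‖)
          = ∑' j, (lam j * ‖u j - xb‖ + lam j * ‖y j - yb‖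
              + lam j * ‖y' j - yb‖ + lam j * ‖w j - zb‖) := by
        rw [← Summable.tsum_add SuN SyN, ← Summable.tsum_add (SuN.add SyN) Sy'N,
          ← Summable.tsum_add ((SuN.add SyN).add Sy'N) SwN]
      rw [hsum4]
      have hK1 : ∑' j, lam j * K = K := by
        have := (geom_hasSum.mul_right K).tsum_eq
        rwa [one_mul] at this
      calc ∑' j, (lam j * ‖u j - xb‖ + lam j * ‖y j - yb‖
              + lam j * ‖y' j - yb‖ + lam j * ‖w j - zb‖)
          ≤ ∑' j, lam j * K := by
            refine Summable.tsum_le_tsum (fun j => ?_) (((SuN.add SyN).add Sy'N).add SwN)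
              (geom_hasSum.summable.mul_right K)
            have := mul_le_mul_of_nonneg_left (h4 j) (show (0:ℝ) ≤ lam j by positivity)
            ring_nf
            ring_nf at this
            linarith
        _ = K := hK1
    linarith
  refine ⟨xb + Au, yb + Ay, yb + Ay', zb + Aw, memH, memL, hxs, ?_⟩
  have e1 : xb + Au - xb = Au := by abel
  have e2 : yb + Ay - yb = Ay := by abel
  have e3 : yb + Ay' - yb = Ay' := by abel
  have e4 : zb + Aw - zb = Aw := by abel
  rw [e1, e2, e3, e4]
  exact hnormbound


lemma baire_approx [CompleteSpace Y]
    (hHconv : Convex ℝ (gph H)) (hLconv : Convex ℝ (gph L))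
    (hyb : yb ∈ H xb) (hzb : zb ∈ L yb)
    (S : Submodule ℝ Y) (hScl : IsClosed (S : Set Y)) (hSq : qset H L = S) :
    ∃ N : ℝ, 0 < N ∧ ∃ ρ : ℝ, 0 < ρ ∧ ∀ v ∈ (S : Set Y), ‖v‖ < ρ →
      ∀ δ : ℝ, 0 < δ → ∃ c ∈ cD H L xb yb zb N, ‖v - c‖ < δ := by
  haveI : CompleteSpace S := hScl.completeSpace_coe
  haveI : Nonempty S := ⟨0⟩
  haveI : BaireSpace S := inferInstance
  set Csc : ℕ → Set Y := fun k => {v | ∃ c ∈ cD H L xb yb zb ((k:ℝ)+1), v = ((k:ℝ)+1) • c}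
    with hCsc
  set T : ℕ → Set S := fun k => Subtype.val ⁻¹' closure (Csc k) with hT
  have hTcl : ∀ k, IsClosed (T k) := fun k =>
    isClosed_closure.preimage continuous_subtype_val
  have hTcov : (⋃ k, T k) = univ := by
    refine eq_univ_of_forall (fun σ => ?_)
    have hσ : (σ : Y) ∈ qset H L := by rw [hSq]; exact σ.2
    obtain ⟨k, hk1, hk2⟩ := covering hHconv hLconv hyb hzb hσ
    refine mem_iUnion.2 ⟨k - 1, subset_closure ?_⟩
    have hkc : ((k - 1 : ℕ) : ℝ) + 1 = (k : ℝ) := by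
      have : (1:ℕ) ≤ k := hk1
      push_cast [Nat.cast_sub this]
      ring
    refine ⟨((k:ℝ))⁻¹ • (σ : Y), by rw [hkc]; exact hk2, ?_⟩
    rw [hkc, smul_inv_smul₀ (by exact_mod_cast Nat.one_le_iff_ne_zero.1 hk1 : (k:ℝ) ≠ 0)]
  obtain ⟨k, σ₀, hσ₀⟩ := nonempty_interior_of_iUnion_of_closed hTcl hTcov
  obtain ⟨ε, hε, hball⟩ := Metric.mem_nhds_iff.1 (mem_interior_iff_mem_nhds.1 hσ₀)
  set N1 : ℝ := (k:ℝ) + 1 with hN1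
  have hN1pos : 0 < N1 := by positivity
  -- a representation of -σ₀
  have hnσ₀ : -(σ₀ : Y) ∈ qset H L := by rw [hSq]; exact neg_mem σ₀.2
  obtain ⟨k₂, hk₂1, hk₂2⟩ := covering hHconv hLconv hyb hzb hnσ₀
  set c₂ : Y := ((k₂:ℝ))⁻¹ • (-(σ₀ : Y)) with hc₂
  have hk₂pos : (0:ℝ) < (k₂:ℝ) := by exact_mod_cast hk₂1
  have hrepσ₀ : -(σ₀ : Y) = (k₂:ℝ) • c₂ := by
    rw [hc₂, smul_inv_smul₀ (ne_of_gt hk₂pos)]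
  set N : ℝ := N1 + (k₂:ℝ) with hN
  have hNpos : 0 < N := by positivity
  have hN1N : N1 ≤ N := by linarith
  have hk₂N : (k₂:ℝ) ≤ N := by linarith
  refine ⟨N, hNpos, ε / (2 * N), by positivity, fun v hv hvn δ hδ => ?_⟩
  set σ : S := ⟨(σ₀ : Y) + (2 * N) • v, add_mem σ₀.2 (Submodule.smul_mem _ _ hv)⟩ with hσdef
  have hσmem : (σ : Y) ∈ closure (Csc k) := by
    have hdist : dist σ σ₀ < ε := by
      rw [Subtype.dist_eq, dist_eq_norm]
      have : ((σ : Y) - (σ₀ : Y)) = (2 * N) • v := by rw [hσdef]; simp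
      rw [this, norm_smul, Real.norm_of_nonneg (by positivity)]
      calc 2 * N * ‖v‖ < 2 * N * (ε / (2 * N)) := by
            exact mul_lt_mul_of_pos_left hvn (by positivity)
        _ = ε := by field_simp
    exact hball hdist
  obtain ⟨b, hb, hbd⟩ := Metric.mem_closure_iff.1 hσmem (2 * N * δ) (by positivity)
  obtain ⟨c₁, hc₁, rfl⟩ := hb
  have hc₁' : c₁ ∈ cD H L xb yb zb N := cD_mono hN1N hc₁
  have hc₂' : c₂ ∈ cD H L xb yb zb N := cD_mono hk₂N hk₂2
  -- the convex combination
  have hm : (N1 / N) • c₁ + ((k₂:ℝ) / N) • c₂ ∈ cD H L xb yb zb N := by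
    refine convex_cD hHconv hLconv N hc₁' hc₂' (by positivity) (by positivity) ?_
    field_simp; linarith
  set m : Y := (N1 / N) • c₁ + ((k₂:ℝ) / N) • c₂ with hmdef
  have hc : (2:ℝ)⁻¹ • m ∈ cD H L xb yb zb N :=
    smul_mem_cD hHconv hLconv hyb hzb hm (by norm_num) (by norm_num)
  refine ⟨(2:ℝ)⁻¹ • m, hc, ?_⟩
  have hkey : v - (2:ℝ)⁻¹ • m = (2 * N)⁻¹ • ((σ : Y) - N1 • c₁) := by
    have hσv : (σ : Y) = (σ₀ : Y) + (2 * N) • v := rfl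
    have h2 : (2 * N) • (v - (2:ℝ)⁻¹ • m) = (σ : Y) - N1 • c₁ := by
      have hσ₀eq : (σ₀ : Y) = -((k₂:ℝ) • c₂) := by rw [← hrepσ₀, neg_neg]
      rw [hσv, hmdef, hσ₀eq]
      match_scalars <;> (field_simp; try ring)
    rw [← h2, smul_smul, inv_mul_cancel₀ (by positivity : (2 * N) ≠ 0), one_smul]
  rw [hkey, norm_smul, Real.norm_of_nonneg (by positivity)]
  have : ‖(σ : Y) - N1 • c₁‖ < 2 * N * δ := by rw [← dist_eq_norm]; exact hbd
  calc (2 * N)⁻¹ * ‖(σ : Y) - N1 • c₁‖ < (2 * N)⁻¹ * (2 * N * δ) := by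
        exact mul_lt_mul_of_pos_left this (by positivity)
    _ = δ := by field_simp


lemma ball_subset_cD [CompleteSpace X] [CompleteSpace Y] [CompleteSpace Z]
    (hHconv : Convex ℝ (gph H)) (hHcl : IsClosed (gph H))
    (hLconv : Convex ℝ (gph L)) (hLcl : IsClosed (gph L))
    (hyb : yb ∈ H xb) (hzb : zb ∈ L yb)
    (S : Submodule ℝ Y) (hSq : qset H L = S)
    {N ρ : ℝ} (hρ : 0 < ρ)
    (happ : ∀ v ∈ (S : Set Y), ‖v‖ < ρ → ∀ δ : ℝ, 0 < δ →
      ∃ c ∈ cD H L xb yb zb N, ‖v - c‖ < δ) :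
    ∀ v ∈ (S : Set Y), ‖v‖ < ρ / 2 → v ∈ cD H L xb yb zb N := by
  intro v hv hvn
  have step : ∀ (j : ℕ) (d : Y), d ∈ (S : Set Y) → ‖d‖ < ρ / 2^(j+1) →
      ∃ c, c ∈ cD H L xb yb zb N ∧ (d - (2⁻¹:ℝ)^(j+1) • c ∈ (S : Set Y)) ∧
        ‖d - (2⁻¹:ℝ)^(j+1) • c‖ < ρ / 2^(j+2) := by
    intro j d hd hdn
    have h2pos : (0:ℝ) < 2^(j+1) := by positivity
    have hds : ((2:ℝ)^(j+1)) • d ∈ (S : Set Y) := Submodule.smul_mem _ _ hd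
    have hdsn : ‖((2:ℝ)^(j+1)) • d‖ < ρ := by
      rw [norm_smul, Real.norm_of_nonneg (by positivity)]
      calc (2:ℝ)^(j+1) * ‖d‖ < 2^(j+1) * (ρ / 2^(j+1)) :=
            mul_lt_mul_of_pos_left hdn h2pos
        _ = ρ := by field_simp
    obtain ⟨c, hc, hcd⟩ := happ _ hds hdsn (ρ / 2) (by positivity)
    refine ⟨c, hc, ?_, ?_⟩
    · have hcS : c ∈ (S : Set Y) := by rw [← hSq]; exact cD_subset_qset N hc
      exact sub_mem hd (Submodule.smul_mem _ _ hcS)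
    · have key : d - (2⁻¹:ℝ)^(j+1) • c = (2⁻¹:ℝ)^(j+1) • (((2:ℝ)^(j+1)) • d - c) := by
        rw [smul_sub, smul_smul, ← mul_pow]
        norm_num
      rw [key, norm_smul, Real.norm_of_nonneg (by positivity)]
      calc (2⁻¹:ℝ)^(j+1) * ‖((2:ℝ)^(j+1)) • d - c‖ < (2⁻¹:ℝ)^(j+1) * (ρ / 2) :=
            mul_lt_mul_of_pos_left hcd (by positivity)
        _ = ρ / 2^(j+2) := by
            rw [inv_pow, eq_div_iff (by positivity : ((2:ℝ)^(j+2)) ≠ 0), pow_succ]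
            field_simp
            ring
  choose F hF1 hF2 hF3 using step
  set D : ∀ j : ℕ, {d : Y // d ∈ (S : Set Y) ∧ ‖d‖ < ρ / 2^(j+1)} := fun j =>
    Nat.rec ⟨v, hv, by rw [pow_one]; exact hvn⟩
      (fun j ih => ⟨ih.1 - (2⁻¹:ℝ)^(j+1) • F j ih.1 ih.2.1 ih.2.2,
        hF2 j ih.1 ih.2.1 ih.2.2, hF3 j ih.1 ih.2.1 ih.2.2⟩) j with hD
  set c : ℕ → Y := fun j => F j (D j).1 (D j).2.1 (D j).2.2 with hcdef
  have hcmem : ∀ j, c j ∈ cD H L xb yb zb N := fun j => hF1 j (D j).1 (D j).2.1 (D j).2.2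
  have hDsucc : ∀ j, (D (j+1)).1 = (D j).1 - (2⁻¹:ℝ)^(j+1) • c j := fun j => rfl
  have hpartial : ∀ m, (D m).1 = v - ∑ j ∈ Finset.range m, (2⁻¹:ℝ)^(j+1) • c j := by
    intro m
    induction m with
    | zero => simp [hD]
    | succ m ih => rw [hDsucc m, ih, Finset.sum_range_succ]; abel
  have hx : Tendsto (fun m => ∑ j ∈ Finset.range m, (2⁻¹:ℝ)^(j+1) • c j) atTop (𝓝 v) := by
    have heq : ∀ m, (∑ j ∈ Finset.range m, (2⁻¹:ℝ)^(j+1) • c j) - v = -(D m).1 := by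
      intro m; rw [hpartial m]; abel
    have hg : Tendsto (fun m : ℕ => ρ / 2 ^ (m+1)) atTop (𝓝 0) := by
      have h0 : Tendsto (fun m : ℕ => (2⁻¹:ℝ) ^ m) atTop (𝓝 0) :=
        tendsto_pow_atTop_nhds_zero_of_lt_one (by norm_num) (by norm_num)
      have h1 := h0.const_mul (ρ/2)
      rw [mul_zero] at h1
      refine h1.congr (fun m => ?_)
      rw [inv_pow, eq_div_iff (by positivity : ((2:ℝ)^(m+1)) ≠ 0), pow_succ]
      field_simp
    have hDto : Tendsto (fun m => ((D m).1 : Y)) atTop (𝓝 0) :=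
      squeeze_zero_norm (fun m => le_of_lt (D m).2.2) hg
    have hneg := hDto.neg
    rw [neg_zero] at hneg
    rw [← tendsto_sub_nhds_zero_iff]
    exact hneg.congr (fun m => (heq m).symm)
  exact csClosed hHconv hHcl hLconv hLcl hyb hzb c hcmem hx


/-- values attached to scaled representations of `s` -/
def vset (H : X → Set Y) (L : Y → Set Z) (xb : X) (zb : Z)
    (φ : X →L[ℝ] ℝ) (ζ : Z →L[ℝ] ℝ) (s : Y) : Set ℝ :=
  {r | ∃ t u y y' w, 0 < t ∧ y ∈ H u ∧ w ∈ L y' ∧ y - y' = t • s ∧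
    r = (-(φ (u - xb)) + ζ (w - zb)) / t}

variable {φ : X →L[ℝ] ℝ} {ζ : Z →L[ℝ] ℝ}

lemma vset_nonempty (hyb : yb ∈ H xb) (hzb : zb ∈ L yb)
    {s : Y} (hs : s ∈ qset H L) : (vset H L xb zb φ ζ s).Nonempty := by
  obtain ⟨τ, hτ, y, hy, y', hy', rfl⟩ := hs
  obtain ⟨u, h1⟩ := mem_iUnion.1 hy
  obtain ⟨w, h2⟩ := hy'
  rcases eq_or_lt_of_le hτ with h | h
  · refine ⟨0, 1, xb, yb, yb, zb, one_pos, hyb, hzb, ?_, by simp⟩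
    rw [← h]; simp
  · refine ⟨(-(φ (u - xb)) + ζ (w - zb)) / τ⁻¹, τ⁻¹, u, y, y', w,
      inv_pos.2 h, h1, h2, ?_, rfl⟩
    rw [smul_smul, inv_mul_cancel₀ (ne_of_gt h), one_smul]

lemma vset_pair (hkey : ∀ u y, y ∈ H u → ∀ w ∈ L y, φ (u - xb) - ζ (w - zb) ≤ 0)
    (hHconv : Convex ℝ (gph H)) (hLconv : Convex ℝ (gph L))
    (s : Y) {r r' : ℝ} (hr : r ∈ vset H L xb zb φ ζ s)
    (hr' : r' ∈ vset H L xb zb φ ζ (-s)) : 0 ≤ r + r' := by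
  obtain ⟨t, u, y, y', w, ht, h1, h2, h3, rfl⟩ := hr
  obtain ⟨t', u', yB, yB', wB, ht', h1', h2', h3', rfl⟩ := hr'
  set α : ℝ := t' / (t + t') with hα
  set β : ℝ := t / (t + t') with hβ
  have htt : 0 < t + t' := by linarith
  have hα0 : 0 ≤ α := by positivity
  have hβ0 : 0 ≤ β := by positivity
  have hαβ : α + β = 1 := by rw [hα, hβ]; field_simp; ring
  have hH' : (α • u + β • u', α • y + β • yB) ∈ gph H := by
    have := hHconv (show (u, y) ∈ gph H from h1) (show (u', yB) ∈ gph H from h1')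
      hα0 hβ0 hαβ
    simpa [Prod.smul_mk, Prod.mk_add_mk] using this
  have hL' : (α • y' + β • yB', α • w + β • wB) ∈ gph L := by
    have := hLconv (show (y', w) ∈ gph L from h2) (show (yB', wB) ∈ gph L from h2')
      hα0 hβ0 hαβ
    simpa [Prod.smul_mk, Prod.mk_add_mk] using this
  have hzero : (α • y + β • yB) - (α • y' + β • yB') = 0 := by
    have : (α • y + β • yB) - (α • y' + β • yB') = α • (y - y') + β • (yB - yB') := by
      module
    rw [this, h3, h3', smul_smul, smul_smul, smul_neg, ← sub_eq_add_neg, ← sub_smul]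
    have : α * t - β * t' = 0 := by rw [hα, hβ]; field_simp; ring
    rw [this, zero_smul]
  have heqy : α • y + β • yB = α • y' + β • yB' := sub_eq_zero.1 hzero
  have hLmem : (α • w + β • wB) ∈ L (α • y + β • yB) := by rw [heqy]; exact hL'
  have hkey' := hkey _ _ hH' _ hLmem
  have hφ : φ (α • u + β • u' - xb) = α * φ (u - xb) + β * φ (u' - xb) := by
    rw [comb_sub_eq hαβ, map_add, map_smul, map_smul]; rfl
  have hζ : ζ (α • w + β • wB - zb) = α * ζ (w - zb) + β * ζ (wB - zb) := by
    rw [comb_sub_eq hαβ, map_add, map_smul, map_smul]; rfl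
  rw [hφ, hζ] at hkey'
  -- from α X₁ + β X₂ ≤ 0 with X_i = φ_i - ζ_i conclude
  have hX : t' * (φ (u - xb) - ζ (w - zb)) + t * (φ (u' - xb) - ζ (wB - zb)) ≤ 0 := by
    have hmul := mul_le_mul_of_nonneg_left hkey' (le_of_lt htt)
    rw [mul_zero] at hmul
    calc t' * (φ (u - xb) - ζ (w - zb)) + t * (φ (u' - xb) - ζ (wB - zb))
        = (t + t') * (α * φ (u - xb) + β * φ (u' - xb)
            - (α * ζ (w - zb) + β * ζ (wB - zb))) := by
          rw [hα, hβ]; field_simp; ring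
      _ ≤ 0 := hmul
  rw [div_add_div _ _ (ne_of_gt ht) (ne_of_gt ht'), le_div_iff₀ (by positivity)]
  nlinarith [hX]


lemma vset_add (hHconv : Convex ℝ (gph H)) (hLconv : Convex ℝ (gph L))
    {s₁ s₂ : Y} {r₁ r₂ : ℝ} (hr₁ : r₁ ∈ vset H L xb zb φ ζ s₁)
    (hr₂ : r₂ ∈ vset H L xb zb φ ζ s₂) :
    r₁ + r₂ ∈ vset H L xb zb φ ζ (s₁ + s₂) := by
  obtain ⟨t₁, u₁, y₁, y₁', w₁, ht₁, h11, h12, h13, rfl⟩ := hr₁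
  obtain ⟨t₂, u₂, y₂, y₂', w₂, ht₂, h21, h22, h23, rfl⟩ := hr₂
  set α : ℝ := t₂ / (t₁ + t₂) with hα
  set β : ℝ := t₁ / (t₁ + t₂) with hβ
  set t : ℝ := t₁ * t₂ / (t₁ + t₂) with ht
  have htt : 0 < t₁ + t₂ := by linarith
  have hα0 : 0 ≤ α := by positivity
  have hβ0 : 0 ≤ β := by positivity
  have hαβ : α + β = 1 := by rw [hα, hβ]; field_simp; ring
  have htpos : 0 < t := by rw [ht]; positivity
  have hH' : (α • u₁ + β • u₂, α • y₁ + β • y₂) ∈ gph H := by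
    have := hHconv (show (u₁, y₁) ∈ gph H from h11) (show (u₂, y₂) ∈ gph H from h21)
      hα0 hβ0 hαβ
    simpa [Prod.smul_mk, Prod.mk_add_mk] using this
  have hL' : (α • y₁' + β • y₂', α • w₁ + β • w₂) ∈ gph L := by
    have := hLconv (show (y₁', w₁) ∈ gph L from h12) (show (y₂', w₂) ∈ gph L from h22)
      hα0 hβ0 hαβ
    simpa [Prod.smul_mk, Prod.mk_add_mk] using this
  refine ⟨t, α • u₁ + β • u₂, α • y₁ + β • y₂, α • y₁' + β • y₂', α • w₁ + β • w₂,
    htpos, hH', hL', ?_, ?_⟩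
  · have hcomb : (α • y₁ + β • y₂) - (α • y₁' + β • y₂')
        = α • (y₁ - y₁') + β • (y₂ - y₂') := by module
    rw [hcomb, h13, h23, smul_smul, smul_smul]
    have e1 : α * t₁ = t := by rw [hα, ht]; field_simp <;> ring
    have e2 : β * t₂ = t := by rw [hβ, ht]; field_simp <;> ring
    rw [e1, e2, smul_add]
  · have hφ : φ (α • u₁ + β • u₂ - xb) = α * φ (u₁ - xb) + β * φ (u₂ - xb) := by
      rw [comb_sub_eq hαβ, map_add, map_smul, map_smul]; rfl
    have hζ : ζ (α • w₁ + β • w₂ - zb) = α * ζ (w₁ - zb) + β * ζ (w₂ - zb) := by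
      rw [comb_sub_eq hαβ, map_add, map_smul, map_smul]; rfl
    rw [hφ, hζ, hα, hβ, ht]
    field_simp
    ring

lemma vset_smul_mem {c : ℝ} (hc : 0 < c) {s : Y} {r : ℝ}
    (hr : r ∈ vset H L xb zb φ ζ s) : c * r ∈ vset H L xb zb φ ζ (c • s) := by
  obtain ⟨t, u, y, y', w, ht, h1, h2, h3, rfl⟩ := hr
  refine ⟨t / c, u, y, y', w, by positivity, h1, h2, ?_, ?_⟩
  · rw [h3, smul_smul]
    congr 1
    field_simp
  · rw [eq_div_iff (by positivity : t / c ≠ 0)]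
    field_simp

lemma vset_smul {c : ℝ} (hc : 0 < c) (s : Y) :
    vset H L xb zb φ ζ (c • s) = c • (vset H L xb zb φ ζ s) := by
  ext r
  constructor
  · intro hr
    have := vset_smul_mem (inv_pos.2 hc) hr
    rw [smul_smul, inv_mul_cancel₀ (ne_of_gt hc), one_smul] at this
    exact ⟨c⁻¹ * r, this, by show c * (c⁻¹ * r) = r; rw [← mul_assoc, mul_inv_cancel₀ (ne_of_gt hc), one_mul]⟩
  · rintro ⟨r₀, hr₀, rfl⟩
    exact vset_smul_mem hc hr₀


lemma exists_psi [CompleteSpace X] [CompleteSpace Y] [CompleteSpace Z]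
    (hHconv : Convex ℝ (gph H)) (hHcl : IsClosed (gph H))
    (hLconv : Convex ℝ (gph L)) (hLcl : IsClosed (gph L))
    (hyb : yb ∈ H xb) (hzb : zb ∈ L yb)
    (S : Submodule ℝ Y) (hScl : IsClosed (S : Set Y)) (hSq : qset H L = S)
    (hkey : ∀ u y, y ∈ H u → ∀ w ∈ L y, φ (u - xb) - ζ (w - zb) ≤ 0) :
    ∃ ψ : Y →L[ℝ] ℝ, ∀ u y, y ∈ H u → ∀ y' w, w ∈ L y' →
      φ (u - xb) - ζ (w - zb) ≤ ψ (y - y') := by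
  obtain ⟨N, hNpos, ρ₀, hρ₀, happ⟩ :=
    baire_approx (xb := xb) (yb := yb) (zb := zb) hHconv hLconv hyb hzb S hScl hSq
  have hball := ball_subset_cD hHconv hHcl hLconv hLcl hyb hzb S hSq hρ₀ happ
  set ρ : ℝ := ρ₀ / 2 with hρdef
  have hρ : 0 < ρ := by positivity
  set M : ℝ := (‖φ‖ + ‖ζ‖) * N with hM
  have hM0 : 0 ≤ M := by positivity
  set Cb : ℝ := 2 * M / ρ with hCb
  have hCb0 : 0 ≤ Cb := by positivity
  -- basic facts about vset on S
  have hmemS : ∀ s : Y, s ∈ (S : Set Y) → (vset H L xb zb φ ζ s).Nonempty := by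
    intro s hs
    exact vset_nonempty hyb hzb (by rw [hSq]; exact hs)
  have hbddS : ∀ s : Y, s ∈ (S : Set Y) → BddBelow (vset H L xb zb φ ζ s) := by
    intro s hs
    obtain ⟨r', hr'⟩ := hmemS (-s) (neg_mem hs)
    exact ⟨-r', fun r hr => by
      have := vset_pair hkey hHconv hLconv s hr hr'
      linarith⟩
  set Np : S → ℝ := fun σ => sInf (vset H L xb zb φ ζ (σ : Y)) with hNp
  have hNp_le : ∀ (σ : S) (r : ℝ), r ∈ vset H L xb zb φ ζ (σ : Y) → Np σ ≤ r :=
    fun σ r hr => csInf_le (hbddS _ σ.2) hr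
  have hNp_ge : ∀ (σ : S) (r' : ℝ), r' ∈ vset H L xb zb φ ζ (-(σ : Y)) → -r' ≤ Np σ := by
    intro σ r' hr'
    refine le_csInf (hmemS _ σ.2) (fun r hr => ?_)
    have := vset_pair hkey hHconv hLconv (σ : Y) hr hr'
    linarith
  have hNp0 : 0 ≤ Np 0 := by
    have h0Y : ((0 : S) : Y) = 0 := rfl
    have hne : (vset H L xb zb φ ζ ((0 : S) : Y)).Nonempty := by
      rw [h0Y]; exact hmemS _ (zero_mem _)
    have hlb : -Np 0 ≤ Np 0 := by
      refine le_csInf hne (fun r hr => ?_)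
      have hr0 : r ∈ vset H L xb zb φ ζ (-((0 : S) : Y)) := by
        rw [h0Y] at hr ⊢; simpa using hr
      have := hNp_ge 0 r hr0
      linarith
    linarith
  -- sublinearity
  have N_hom : ∀ c : ℝ, 0 < c → ∀ σ : S, Np (c • σ) = c * Np σ := by
    intro c hc σ
    have hcoe : ((c • σ : S) : Y) = c • (σ : Y) := rfl
    rw [hNp]
    simp only [hcoe]
    rw [vset_smul hc, Real.sInf_smul_of_nonneg (le_of_lt hc)]
    rfl
  have N_add : ∀ σ σ' : S, Np (σ + σ') ≤ Np σ + Np σ' := by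
    intro σ σ'
    refine le_of_forall_pos_le_add (fun ε hε => ?_)
    obtain ⟨r, hr, hrlt⟩ := Real.lt_sInf_add_pos (hmemS _ σ.2) (half_pos hε)
    obtain ⟨r', hr', hrlt'⟩ := Real.lt_sInf_add_pos (hmemS _ σ'.2) (half_pos hε)
    have hsum := vset_add hHconv hLconv hr hr'
    have hcoe : ((σ + σ' : S) : Y) = (σ : Y) + (σ' : Y) := rfl
    have := hNp_le (σ + σ') (r + r') (by rw [hcoe]; exact hsum)
    have hNs : Np σ = sInf (vset H L xb zb φ ζ (σ : Y)) := rfl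
    have hNs' : Np σ' = sInf (vset H L xb zb φ ζ (σ' : Y)) := rfl
    rw [hNs, hNs']
    linarith
  -- upper bound
  have N_bound : ∀ σ : S, Np σ ≤ Cb * ‖(σ : Y)‖ := by
    intro σ
    rcases eq_or_ne (σ : Y) 0 with h0 | h0
    · have : Np σ ≤ 0 := by
        refine hNp_le σ 0 ?_
        refine ⟨1, xb, yb, yb, zb, one_pos, hyb, hzb, by rw [h0]; simp, by simp⟩
      rw [h0, norm_zero, mul_zero]
      exact this
    · have hn0 : 0 < ‖(σ : Y)‖ := norm_pos_iff.2 h0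
      set τ : ℝ := ρ / (2 * ‖(σ : Y)‖) with hτ
      have hτpos : 0 < τ := by positivity
      have hmem : τ • (σ : Y) ∈ cD H L xb yb zb N := by
        refine hball _ (Submodule.smul_mem _ _ σ.2) ?_
        rw [norm_smul, Real.norm_of_nonneg (le_of_lt hτpos), hτ]
        rw [div_mul_eq_mul_div, div_lt_iff₀ (by positivity)]
        nlinarith [hρ, hn0]
      obtain ⟨u, y, y', w, h1, h2, h3, h4⟩ := hmem
      have hru : ‖u - xb‖ ≤ N := by
        have := norm_nonneg (y - yb); have := norm_nonneg (y' - yb)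
        have := norm_nonneg (w - zb); linarith
      have hrw : ‖w - zb‖ ≤ N := by
        have := norm_nonneg (y - yb); have := norm_nonneg (y' - yb)
        have := norm_nonneg (u - xb); linarith
      have ha := φ.le_opNorm (u - xb)
      have hb := ζ.le_opNorm (w - zb)
      rw [Real.norm_eq_abs] at ha hb
      have ha' := abs_le.1 ha
      have hb' := abs_le.1 hb
      have hVle : -(φ (u - xb)) + ζ (w - zb) ≤ M := by
        have h1' : ‖φ‖ * ‖u - xb‖ ≤ ‖φ‖ * N :=
          mul_le_mul_of_nonneg_left hru (norm_nonneg _)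
        have h2' : ‖ζ‖ * ‖w - zb‖ ≤ ‖ζ‖ * N :=
          mul_le_mul_of_nonneg_left hrw (norm_nonneg _)
        rw [hM]
        nlinarith
      have hmemv : (-(φ (u - xb)) + ζ (w - zb)) / τ ∈ vset H L xb zb φ ζ (σ : Y) :=
        ⟨τ, u, y, y', w, hτpos, h1, h2, h3, rfl⟩
      have hle1 := hNp_le σ _ hmemv
      have hdiv : (-(φ (u - xb)) + ζ (w - zb)) / τ ≤ M / τ :=
        by gcongr
      have hMτ : M / τ = Cb * ‖(σ : Y)‖ := by
        rw [hτ, hCb]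
        field_simp
      linarith
  -- Hahn–Banach extension dominated by Np
  obtain ⟨g, hg_ext, hg_le⟩ := exists_extension_of_le_sublinear
    (⟨⊥, 0⟩ : (↥S) →ₗ.[ℝ] ℝ) Np N_hom N_add
    (fun x => by
      have hx0 : (x : ↥S) = 0 := (Submodule.mem_bot ℝ).1 x.2
      show (0 : (⊥ : Submodule ℝ ↥S) →ₗ[ℝ] ℝ) x ≤ Np (x : ↥S)
      rw [LinearMap.zero_apply, hx0]
      exact hNp0)
  -- continuity of g
  have hnorm : ∀ σ : S, ‖σ‖ = ‖(σ : Y)‖ := fun σ => rfl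
  have hgb : ∀ σ : S, ‖g σ‖ ≤ Cb * ‖σ‖ := by
    intro σ
    have hup : g σ ≤ Cb * ‖σ‖ := ((hg_le σ).trans (N_bound σ)).trans_eq
      (by rw [hnorm])
    have hdown : -(g σ) ≤ Cb * ‖σ‖ := by
      have := (hg_le (-σ)).trans (N_bound (-σ))
      rw [map_neg] at this
      calc -(g σ) ≤ Cb * ‖((-σ : S) : Y)‖ := this
        _ = Cb * ‖σ‖ := by rw [hnorm]; simp
    rw [Real.norm_eq_abs, abs_le]
    constructor <;> linarith
  set gc : (↥S) →L[ℝ] ℝ := LinearMap.mkContinuous g Cb hgb with hgc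
  obtain ⟨g', hext, _⟩ := exists_extension_norm_eq S gc
  refine ⟨-g', fun u y h1 y' w h2 => ?_⟩
  have hsS : y - y' ∈ S := by
    have hq : y - y' ∈ qset H L :=
      ⟨1, zero_le_one, y, mem_iUnion.2 ⟨u, h1⟩, y', ⟨w, h2⟩, (one_smul _ _).symm⟩
    rw [hSq] at hq
    exact hq
  have hval : (-(φ (u - xb)) + ζ (w - zb)) ∈ vset H L xb zb φ ζ (y - y') :=
    ⟨1, u, y, y', w, one_pos, h1, h2, (one_smul ℝ (y - y')).symm, (div_one _).symm⟩
  have hchain : g' (y - y') ≤ -(φ (u - xb)) + ζ (w - zb) := by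
    have hx := hext ⟨y - y', hsS⟩
    have hgcg : gc ⟨y - y', hsS⟩ = g ⟨y - y', hsS⟩ := rfl
    calc g' (y - y') = g ⟨y - y', hsS⟩ := by rw [← hgcg, ← hx]
      _ ≤ Np ⟨y - y', hsS⟩ := hg_le _
      _ ≤ -(φ (u - xb)) + ζ (w - zb) := hNp_le _ _ hval
  have : (-g') (y - y') = -(g' (y - y')) := rfl
  rw [this]
  linarith

end chainAux


/-- chain rule: for convex closed set-valued maps `H : X ⇉ Y`, `L : Y ⇉ Z`
with `ℝ⁺(rge H − dom L)` a closed linear subspace of `Y`, `(xb, zb) ∈ gph (L ∘ H)` and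
`yb ∈ H(xb) ∩ L⁻¹(zb)`, one has
`D*(L ∘ H)(xb, zb)(z*) = ⋃_{y* ∈ D*L(yb, zb)(z*)} D*H(xb, yb)(y*)`. -/
theorem stmt2
    {X Y Z : Type*}
    [NormedAddCommGroup X] [NormedSpace ℝ X] [CompleteSpace X]
    [NormedAddCommGroup Y] [NormedSpace ℝ Y] [CompleteSpace Y]
    [NormedAddCommGroup Z] [NormedSpace ℝ Z] [CompleteSpace Z]
    (H : X → Set Y) (L : Y → Set Z)
    (hHconv : Convex ℝ (gph H)) (hHcl : IsClosed (gph H))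
    (hLconv : Convex ℝ (gph L)) (hLcl : IsClosed (gph L))
    -- ℝ⁺(rge H − dom L) is a closed linear subspace of Y
    (hqual : ∃ S : Submodule ℝ Y, IsClosed (S : Set Y) ∧
      {w : Y | ∃ t : ℝ, 0 ≤ t ∧ ∃ u ∈ ⋃ x : X, H x, ∃ v ∈ dom L, w = t • (u - v)} = S)
    (xb : X) (yb : Y) (zb : Z)
    (hyb : yb ∈ H xb) (hzb : zb ∈ L yb)
    (ζ : Z →L[ℝ] ℝ) :
    coderiv (fun x => ⋃ y ∈ H x, L y) xb zb ζ
      = ⋃ ψ ∈ coderiv L yb zb ζ, coderiv H xb yb ψ := by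
  ext φ0
  constructor
  · intro hφ
    have hkey : ∀ u y, y ∈ H u → ∀ w ∈ L y, φ0 (u - xb) - ζ (w - zb) ≤ 0 := by
      intro u y hy w hw
      exact hφ u w (mem_iUnion₂.2 ⟨y, hy, hw⟩)
    obtain ⟨S, hScl, hSq⟩ := hqual
    have hSq' : qset H L = (S : Set Y) := hSq
    obtain ⟨ψ, hψ⟩ := exists_psi hHconv hHcl hLconv hLcl hyb hzb S hScl hSq' hkey
    refine mem_iUnion₂.2 ⟨ψ, ?_, ?_⟩
    · intro y' w hw
      have hmain := hψ xb yb hyb y' w hw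
      have h0 : φ0 (xb - xb) = 0 := by rw [sub_self, map_zero]
      have hneg : ψ (yb - y') = -ψ (y' - yb) := by
        rw [← map_neg]
        congr 1
        abel
      rw [h0, hneg] at hmain
      linarith
    · intro u v hv
      have hmain := hψ u v hv yb zb hzb
      rw [sub_self, map_zero] at hmain
      linarith
  · intro hφ
    obtain ⟨ψ, hψL, hφH⟩ := mem_iUnion₂.1 hφ
    intro u v hv
    obtain ⟨y, hy, hw⟩ := mem_iUnion₂.1 hv
    have h1 := hφH u y hy
    have h2 := hψL y v hw
    linarith
end

section
/- Let X, Y₁, Y₂ be real Banach spaces, let H₁ : X ⇉ Y₁ and H₂ : X ⇉ Y₂ be convex closed set-valued maps, and define H : X ⇉ Y₁ × Y₂ by H(x) = H₁(x) × H₂(x). Suppose that ℝ⁺(dom H₁ − dom H₂) is a closed linear subspace of X. Then for every (x̄, (ȳ₁, ȳ₂)) ∈ gph H (so ȳ₁ ∈ H₁(x̄), ȳ₂ ∈ H₂(x̄)) and every y* = (y₁*, y₂*) ∈ Y₁* × Y₂*, one has D*H(x̄, (ȳ₁, ȳ₂))(y₁*, y₂*) = D*H₁(x̄, ȳ₁)(y₁*)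 + D*H₂(x̄, ȳ₂)(y₂*). -/
open Set Pointwise Topology Filter

set_option maxHeartbeats 1000000
set_option synthInstance.maxHeartbeats 400000

open Set Pointwise Topology Filter

section Core

variable {Z : Type*} [NormedAddCommGroup Z] [NormedSpace ℝ Z] [CompleteSpace Z]

private lemma smul_mem_of_mem {C : Set Z} (hC : Convex ℝ C) (h0 : (0:Z) ∈ C) {t : ℝ}
    (h0t : 0 ≤ t) (ht1 : t ≤ 1) {a : Z} (ha : a ∈ C) : t • a ∈ C := by
  have := hC h0 ha (by linarith : (0:ℝ) ≤ 1 - t) h0t (by ring)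
  simpa using this

private lemma eq_zero_of_forall_mul_le {v c : ℝ} (h : ∀ t : ℝ, t * v ≤ c) : v = 0 := by
  by_contra hv
  have h1 := h ((c+1)/v)
  rw [div_mul_cancel₀ _ hv] at h1
  linarith

theorem coreLemma (C₁ C₂ : Set Z) (h₁conv : Convex ℝ C₁) (h₁cl : IsClosed C₁)
    (h₂conv : Convex ℝ C₂) (h₂cl : IsClosed C₂)
    (h0₁ : (0:Z) ∈ C₁) (h0₂ : (0:Z) ∈ C₂)
    (S : Submodule ℝ Z) (hScl : IsClosed (S : Set Z))
    (hSeq : {w : Z | ∃ t : ℝ, 0 ≤ t ∧ ∃ a ∈ C₁, ∃ b ∈ C₂, w = t • (a - b)} = S)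
    (φ : Z →L[ℝ] ℝ) (hφ : ∀ z ∈ C₁ ∩ C₂, φ z ≤ 0) :
    ∃ φ₁ : Z →L[ℝ] ℝ, (∀ z ∈ C₁, φ₁ z ≤ 0) ∧ (∀ z ∈ C₂, φ z - φ₁ z ≤ 0) := by
  haveI : CompleteSpace S := hScl.completeSpace_coe
  -- membership in S of differences
  have hmemS : ∀ {a b : Z}, a ∈ C₁ → b ∈ C₂ → a - b ∈ S := by
    intro a b ha hb
    have : a - b ∈ {w : Z | ∃ t : ℝ, 0 ≤ t ∧ ∃ a ∈ C₁, ∃ b ∈ C₂, w = t • (a - b)} :=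
      ⟨1, zero_le_one, a, ha, b, hb, (one_smul ℝ _).symm⟩
    rwa [hSeq] at this
  -- the bounded difference sets
  set G : ℕ → Set Z := fun n =>
    {w : Z | ∃ a ∈ C₁, ∃ b ∈ C₂, ‖a‖ ≤ (n:ℝ) ∧ ‖b‖ ≤ (n:ℝ) ∧ w = (n:ℝ) • (a - b)} with hG
  -- covering
  have hcover : ∀ z ∈ S, ∃ n : ℕ, 1 ≤ n ∧ z ∈ G n := by
    intro z hz
    rw [show (z ∈ S) = (z ∈ (S:Set Z)) from rfl, ← hSeq] at hz
    obtain ⟨t, ht, a, ha, b, hb, rfl⟩ := hz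
    obtain ⟨n, hn⟩ := exists_nat_ge (max t (max ‖a‖ ‖b‖) + 1)
    have hmax0 : (0:ℝ) ≤ max t (max ‖a‖ ‖b‖) := le_max_of_le_left ht
    have hn1 : (1:ℝ) ≤ (n:ℝ) := by linarith
    have hnpos : (0:ℝ) < n := by linarith
    have htn : t ≤ (n:ℝ) := by
      have := le_max_left t (max ‖a‖ ‖b‖); linarith
    have han : ‖a‖ ≤ (n:ℝ) := by
      have := (le_max_left ‖a‖ ‖b‖).trans (le_max_right t _); linarith
    have hbn : ‖b‖ ≤ (n:ℝ) := by
      have := (le_max_right ‖a‖ ‖b‖).trans (le_max_right t _); linarith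
    have hdiv0 : 0 ≤ t / n := div_nonneg ht hnpos.le
    have hdiv1 : t / n ≤ 1 := (div_le_one hnpos).mpr htn
    refine ⟨n, by exact_mod_cast hn1, (t/n) • a, smul_mem_of_mem h₁conv h0₁ hdiv0 hdiv1 ha,
      (t/n) • b, smul_mem_of_mem h₂conv h0₂ hdiv0 hdiv1 hb, ?_, ?_, ?_⟩
    · rw [norm_smul, Real.norm_eq_abs, abs_of_nonneg hdiv0]
      calc t/n * ‖a‖ ≤ 1 * ‖a‖ := by
            exact mul_le_mul_of_nonneg_right hdiv1 (norm_nonneg a)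
      _ ≤ (n:ℝ) := by simpa using han
    · rw [norm_smul, Real.norm_eq_abs, abs_of_nonneg hdiv0]
      calc t/n * ‖b‖ ≤ 1 * ‖b‖ := by
            exact mul_le_mul_of_nonneg_right hdiv1 (norm_nonneg b)
      _ ≤ (n:ℝ) := by simpa using hbn
    · simp only [smul_sub, smul_smul, mul_div_cancel₀ _ hnpos.ne']
  -- Baire
  obtain ⟨M, z₀, hz₀S, ε, hε, hnear⟩ :
      ∃ (M : ℕ) (z₀ : Z), z₀ ∈ S ∧ ∃ ε : ℝ, 0 < ε ∧
        ∀ z ∈ S, ‖z - z₀‖ < ε → z ∈ closure (G M) := by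
    set F : ℕ → Set S := fun n => ((↑) : S → Z) ⁻¹' (closure (G n)) with hF
    have hFcl : ∀ n, IsClosed (F n) :=
      fun n => IsClosed.preimage continuous_subtype_val isClosed_closure
    have hFcov : (⋃ n, F n) = univ := by
      rw [eq_univ_iff_forall]
      intro s
      obtain ⟨n, -, hn⟩ := hcover (s : Z) s.2
      exact mem_iUnion.mpr ⟨n, subset_closure hn⟩
    obtain ⟨M, hM⟩ := nonempty_interior_of_iUnion_of_closed hFcl hFcov
    obtain ⟨s₀, hs₀⟩ := hM
    rw [mem_interior_iff_mem_nhds, Metric.mem_nhds_iff] at hs₀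
    obtain ⟨ε, hε, hball⟩ := hs₀
    refine ⟨M, (s₀ : Z), s₀.2, ε, hε, ?_⟩
    intro z hz hlt
    have : (⟨z, hz⟩ : S) ∈ Metric.ball s₀ ε := by
      rw [Metric.mem_ball, Subtype.dist_eq, dist_eq_norm]
      exact hlt
    exact hball this
  -- symmetrize & rescale
  obtain ⟨L, hL1, ρ, hρ, hsmall⟩ :
      ∃ L : ℕ, 1 ≤ L ∧ ∃ ρ : ℝ, 0 < ρ ∧ ∀ z ∈ S, ‖z‖ < ρ →
        z ∈ closure {w : Z | ∃ a ∈ C₁, ∃ b ∈ C₂, ‖a‖ ≤ (L:ℝ) ∧ ‖b‖ ≤ (L:ℝ) ∧ w = a - b} := by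
    obtain ⟨K, hK1, e₁, he₁, e₂, he₂, hne₁, hne₂, hKrep⟩ := hcover (-z₀) (S.neg_mem hz₀S)
    set L := M + K with hLdef
    have hL1 : 1 ≤ L := le_add_of_nonneg_of_le (Nat.zero_le M) hK1
    have hLpos : (0:ℝ) < (L:ℝ) := by exact_mod_cast hL1
    have hML : (M:ℝ) ≤ (L:ℝ) := by exact_mod_cast Nat.le_add_right M K
    have hKL : (K:ℝ) ≤ (L:ℝ) := by exact_mod_cast Nat.le_add_left K M
    have hhalf : ∀ z ∈ S, ‖z‖ < ε/2 → z ∈ closure (G L) := by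
      intro z hz hlt
      have huS : z₀ + (2:ℝ) • z ∈ S := S.add_mem hz₀S (S.smul_mem _ hz)
      have hunear : z₀ + (2:ℝ) • z ∈ closure (G M) := by
        apply hnear _ huS
        rw [add_sub_cancel_left]
        have h2z : ‖(2:ℝ) • z‖ = 2 * ‖z‖ := by rw [norm_smul]; norm_num
        linarith
      set T : Z → Z := fun w => (2:ℝ)⁻¹ • w + (2:ℝ)⁻¹ • (-z₀) with hT
      have hTcont : Continuous T := (continuous_id.const_smul _).add continuous_const
      have hTz : T (z₀ + (2:ℝ) • z) = z := by
        rw [hT]; simp only []; module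
      have himg : T '' (G M) ⊆ G L := by
        rintro - ⟨w, ⟨a, ha, b, hb, hna, hnb, rfl⟩, rfl⟩
        have hw0 : (0:ℝ) ≤ (M:ℝ)/L := by positivity
        have hw0' : (0:ℝ) ≤ (K:ℝ)/L := by positivity
        have hμκ : (M:ℝ)/L + (K:ℝ)/L = 1 := by
          field_simp
          push_cast [hLdef]
          ring
        have hhalf01 : (0:ℝ) ≤ (2:ℝ)⁻¹ ∧ ((2:ℝ)⁻¹ : ℝ) ≤ 1 := by norm_num
        refine ⟨(2:ℝ)⁻¹ • (((M:ℝ)/L) • a + ((K:ℝ)/L) • e₁),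
          smul_mem_of_mem h₁conv h0₁ hhalf01.1 hhalf01.2 (h₁conv ha he₁ hw0 hw0' hμκ),
          (2:ℝ)⁻¹ • (((M:ℝ)/L) • b + ((K:ℝ)/L) • e₂),
          smul_mem_of_mem h₂conv h0₂ hhalf01.1 hhalf01.2 (h₂conv hb he₂ hw0 hw0' hμκ),
          ?_, ?_, ?_⟩
        · have hna' : ‖((M:ℝ)/L) • a‖ ≤ (M:ℝ) := by
            rw [norm_smul, Real.norm_eq_abs, abs_of_nonneg hw0]
            calc (M:ℝ)/L * ‖a‖ ≤ 1 * (M:ℝ) :=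
                  mul_le_mul ((div_le_one hLpos).mpr hML) hna (norm_nonneg a) zero_le_one
            _ = (M:ℝ) := one_mul _
          have hne₁' : ‖((K:ℝ)/L) • e₁‖ ≤ (K:ℝ) := by
            rw [norm_smul, Real.norm_eq_abs, abs_of_nonneg hw0']
            calc (K:ℝ)/L * ‖e₁‖ ≤ 1 * (K:ℝ) :=
                  mul_le_mul ((div_le_one hLpos).mpr hKL) hne₁ (norm_nonneg e₁) zero_le_one
            _ = (K:ℝ) := one_mul _
          have := norm_add_le (((M:ℝ)/L) • a) (((K:ℝ)/L) • e₁)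
          rw [norm_smul (2:ℝ)⁻¹, Real.norm_eq_abs]
          have hcast : (M:ℝ) + (K:ℝ) = (L:ℝ) := by push_cast [hLdef]; ring
          rw [abs_of_nonneg hhalf01.1]
          nlinarith [hLpos]
        · have hnb' : ‖((M:ℝ)/L) • b‖ ≤ (M:ℝ) := by
            rw [norm_smul, Real.norm_eq_abs, abs_of_nonneg hw0]
            calc (M:ℝ)/L * ‖b‖ ≤ 1 * (M:ℝ) :=
                  mul_le_mul ((div_le_one hLpos).mpr hML) hnb (norm_nonneg b) zero_le_one
            _ = (M:ℝ) := one_mul _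
          have hne₂' : ‖((K:ℝ)/L) • e₂‖ ≤ (K:ℝ) := by
            rw [norm_smul, Real.norm_eq_abs, abs_of_nonneg hw0']
            calc (K:ℝ)/L * ‖e₂‖ ≤ 1 * (K:ℝ) :=
                  mul_le_mul ((div_le_one hLpos).mpr hKL) hne₂ (norm_nonneg e₂) zero_le_one
            _ = (K:ℝ) := one_mul _
          have := norm_add_le (((M:ℝ)/L) • b) (((K:ℝ)/L) • e₂)
          rw [norm_smul (2:ℝ)⁻¹, Real.norm_eq_abs]
          have hcast : (M:ℝ) + (K:ℝ) = (L:ℝ) := by push_cast [hLdef]; ring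
          rw [abs_of_nonneg hhalf01.1]
          nlinarith [hLpos]
        · rw [hT]
          simp only []
          rw [hKrep]
          match_scalars <;> (field_simp; try ring)
      have hmem : z ∈ T '' (closure (G M)) := ⟨_, hunear, hTz⟩
      exact closure_mono himg ((image_closure_subset_closure_image hTcont) hmem)
    refine ⟨L, hL1, ε/(2*L), by positivity, ?_⟩
    intro z hz hlt
    have h1 : (L:ℝ) • z ∈ S := S.smul_mem _ hz
    have h2 : ‖(L:ℝ) • z‖ < ε/2 := by
      rw [norm_smul, Real.norm_eq_abs, abs_of_nonneg hLpos.le]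
      calc (L:ℝ)*‖z‖ < (L:ℝ) * (ε/(2*L)) := mul_lt_mul_of_pos_left hlt hLpos
      _ = ε/2 := by field_simp
    have h3 := hhalf _ h1 h2
    have h4 : z ∈ (fun w => (L:ℝ)⁻¹ • w) '' closure (G L) :=
      ⟨_, h3, by simp [smul_smul, inv_mul_cancel₀ hLpos.ne']⟩
    have h5 := (image_closure_subset_closure_image (continuous_id.const_smul _)) h4
    refine closure_mono ?_ h5
    rintro - ⟨w, ⟨a, ha, b, hb, hna, hnb, rfl⟩, rfl⟩
    exact ⟨a, ha, b, hb, hna, hnb, by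
      simp [smul_smul, inv_mul_cancel₀ hLpos.ne']⟩
  -- open mapping style iteration
  have hrep : ∀ z ∈ S, ‖z‖ < ρ/2 → ∃ a ∈ C₁, ∃ b ∈ C₂, ‖b‖ ≤ (L:ℝ) ∧ z = a - b := by
    have hpow_norm : ∀ (k:ℕ) (v:Z), ‖((2:ℝ)⁻¹)^k • v‖ = ((2:ℝ)⁻¹)^k * ‖v‖ := by
      intro k v
      rw [norm_smul, norm_pow, Real.norm_eq_abs, abs_of_nonneg (by norm_num : (0:ℝ) ≤ 2⁻¹)]
    have hgeom : ∀ n : ℕ, ∑ i ∈ Finset.range n, ((2:ℝ)⁻¹)^(i+1) = 1 - ((2:ℝ)⁻¹)^n := by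
      intro n
      induction n with
      | zero => simp
      | succ n ih => rw [Finset.sum_range_succ, ih, pow_succ]; ring
    have hLnn : (0:ℝ) ≤ (L:ℝ) := Nat.cast_nonneg L
    have happrox : ∀ w ∈ S, ‖w‖ < ρ → ∃ a ∈ C₁, ∃ b ∈ C₂, ‖a‖ ≤ (L:ℝ) ∧ ‖b‖ ≤ (L:ℝ) ∧
        ‖w - (a - b)‖ < ρ/2 := by
      intro w hw hwn
      have h1 := hsmall w hw hwn
      rw [Metric.mem_closure_iff] at h1
      obtain ⟨d, hd, hdist⟩ := h1 (ρ/2) (by positivity)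
      obtain ⟨a, ha, b, hb, hna, hnb, rfl⟩ := hd
      exact ⟨a, ha, b, hb, hna, hnb, by rwa [← dist_eq_norm]⟩
    have hstep : ∀ p : {w : Z // w ∈ S ∧ ‖w‖ < ρ}, ∃ (a b : Z) (q : {w : Z // w ∈ S ∧ ‖w‖ < ρ}),
        a ∈ C₁ ∧ b ∈ C₂ ∧ ‖a‖ ≤ (L:ℝ) ∧ ‖b‖ ≤ (L:ℝ) ∧
        (q : Z) = (2:ℝ) • (p.val - (a - b)) := by
      rintro ⟨w, hw, hwn⟩
      obtain ⟨a, ha, b, hb, hna, hnb, hlt⟩ := happrox w hw hwn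
      refine ⟨a, b, ⟨(2:ℝ) • (w - (a - b)), ⟨S.smul_mem _ (S.sub_mem hw (hmemS ha hb)), ?_⟩⟩,
        ha, hb, hna, hnb, rfl⟩
      have h2 : ‖(2:ℝ) • (w - (a-b))‖ = 2 * ‖w - (a-b)‖ := by rw [norm_smul]; norm_num
      rw [h2]; linarith
    choose fa fb fq hfa hfb hfna hfnb hfq using hstep
    intro z hz hzn
    have hw₀mem : (2:ℝ) • z ∈ S ∧ ‖(2:ℝ) • z‖ < ρ := by
      refine ⟨S.smul_mem _ hz, ?_⟩
      have h2 : ‖(2:ℝ) • z‖ = 2 * ‖z‖ := by rw [norm_smul]; norm_num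
      rw [h2]; linarith
    set seq : ℕ → {w : Z // w ∈ S ∧ ‖w‖ < ρ} :=
      fun n => Nat.rec ⟨(2:ℝ) • z, hw₀mem⟩ (fun _ p => fq p) n with hseq
    have hseqS : ∀ n, seq (n+1) = fq (seq n) := fun n => rfl
    have htel : ∀ n, (2:ℝ) • z - ∑ i ∈ Finset.range n, ((2:ℝ)⁻¹)^i • (fa (seq i) - fb (seq i))
        = ((2:ℝ)⁻¹)^n • (seq n).val := by
      intro n
      induction n with
      | zero => simp [hseq]
      | succ n ih =>
        rw [Finset.sum_range_succ, ← sub_sub, ih, hseqS n, hfq (seq n)]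
        match_scalars <;> ring
    have htendS : Tendsto (fun n => ∑ i ∈ Finset.range n,
        ((2:ℝ)⁻¹)^i • (fa (seq i) - fb (seq i))) atTop (𝓝 ((2:ℝ) • z)) := by
      rw [tendsto_iff_norm_sub_tendsto_zero]
      have hb : ∀ n, ‖(∑ i ∈ Finset.range n, ((2:ℝ)⁻¹)^i • (fa (seq i) - fb (seq i)))
          - (2:ℝ) • z‖ ≤ ((2:ℝ)⁻¹)^n * ρ := by
        intro n
        rw [norm_sub_rev, htel n, hpow_norm]
        exact mul_le_mul_of_nonneg_left ((seq n).2.2).le (by positivity)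
      refine squeeze_zero (fun n => norm_nonneg _) hb ?_
      have := (tendsto_pow_atTop_nhds_zero_of_lt_one (by norm_num : (0:ℝ) ≤ 2⁻¹)
        (by norm_num : (2:ℝ)⁻¹ < 1)).mul_const ρ
      simpa using this
    have hsummable_a : Summable (fun i => ((2:ℝ)⁻¹)^(i+1) • fa (seq i)) := by
      refine Summable.of_norm_bounded (g := fun i => ((2:ℝ)⁻¹)^i * (L:ℝ)) ?_ ?_
      · exact (summable_geometric_of_lt_one (by norm_num) (by norm_num)).mul_right _
      · intro i
        rw [hpow_norm]
        exact mul_le_mul (pow_le_pow_of_le_one (by norm_num) (by norm_num) (by omega))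
          (hfna _) (norm_nonneg _) (by positivity)
    have hsummable_b : Summable (fun i => ((2:ℝ)⁻¹)^(i+1) • fb (seq i)) := by
      refine Summable.of_norm_bounded (g := fun i => ((2:ℝ)⁻¹)^i * (L:ℝ)) ?_ ?_
      · exact (summable_geometric_of_lt_one (by norm_num) (by norm_num)).mul_right _
      · intro i
        rw [hpow_norm]
        exact mul_le_mul (pow_le_pow_of_le_one (by norm_num) (by norm_num) (by omega))
          (hfnb _) (norm_nonneg _) (by positivity)
    set A := ∑' i, ((2:ℝ)⁻¹)^(i+1) • fa (seq i) with hA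
    set B := ∑' i, ((2:ℝ)⁻¹)^(i+1) • fb (seq i) with hB
    have hABsum : HasSum (fun i => ((2:ℝ)⁻¹)^(i+1) • fa (seq i)
        - ((2:ℝ)⁻¹)^(i+1) • fb (seq i)) (A - B) :=
      hsummable_a.hasSum.sub hsummable_b.hasSum
    have htend2 : Tendsto (fun n => ∑ i ∈ Finset.range n, (((2:ℝ)⁻¹)^(i+1) • fa (seq i)
        - ((2:ℝ)⁻¹)^(i+1) • fb (seq i))) atTop (𝓝 z) := by
      have heq : ∀ n, ∑ i ∈ Finset.range n, (((2:ℝ)⁻¹)^(i+1) • fa (seq i)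
          - ((2:ℝ)⁻¹)^(i+1) • fb (seq i))
          = (2:ℝ)⁻¹ • ∑ i ∈ Finset.range n, ((2:ℝ)⁻¹)^i • (fa (seq i) - fb (seq i)) := by
        intro n
        rw [Finset.smul_sum]
        refine Finset.sum_congr rfl fun i _ => ?_
        match_scalars <;> ring
      simp only [heq]
      have := htendS.const_smul ((2:ℝ)⁻¹)
      have h2 : (2:ℝ)⁻¹ • ((2:ℝ) • z) = z := by
        rw [smul_smul]; norm_num
      rwa [h2] at this
    have hzAB : z = A - B := tendsto_nhds_unique htend2 hABsum.tendsto_sum_nat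
    have hcoef_tend : Tendsto (fun n : ℕ => (1 - ((2:ℝ)⁻¹)^n)⁻¹) atTop (𝓝 1) := by
      have h1 := tendsto_pow_atTop_nhds_zero_of_lt_one (by norm_num : (0:ℝ) ≤ 2⁻¹)
        (by norm_num : (2:ℝ)⁻¹ < 1)
      have h2 := (tendsto_const_nhds.sub h1).inv₀ (by norm_num : (1:ℝ) - 0 ≠ 0)
      simpa using h2
    have hmemconv : ∀ (C : Set Z), Convex ℝ C → IsClosed C →
        (∀ i, (fun i => fa (seq i)) i ∈ C ∨ True) → True := fun _ _ _ _ => trivial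
    have hmemA : A ∈ C₁ := by
      rw [← h₁cl.closure_eq]
      refine mem_closure_of_tendsto (b := atTop) (f := fun n : ℕ => (1 - ((2:ℝ)⁻¹)^n)⁻¹
        • ∑ i ∈ Finset.range n, ((2:ℝ)⁻¹)^(i+1) • fa (seq i)) ?_ ?_
      · have h2 := hsummable_a.hasSum.tendsto_sum_nat
        have h3 := hcoef_tend.smul h2
        rw [← hA] at h3
        simpa using h3
      · filter_upwards [eventually_ge_atTop 1] with n hn
        have hpow_lt : ((2:ℝ)⁻¹)^n < 1 := pow_lt_one₀ (by norm_num) (by norm_num) (by omega)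
        have hcoef : (0:ℝ) < 1 - ((2:ℝ)⁻¹)^n := by linarith
        have h4 := Convex.sum_mem (t := Finset.range n)
          (w := fun i => (1 - ((2:ℝ)⁻¹)^n)⁻¹ * ((2:ℝ)⁻¹)^(i+1)) (z := fun i => fa (seq i))
          h₁conv (fun i _ => by positivity)
          (by rw [← Finset.mul_sum, hgeom, inv_mul_cancel₀ hcoef.ne'])
          (fun i _ => hfa _)
        have h5 : ∑ i ∈ Finset.range n, ((1 - ((2:ℝ)⁻¹)^n)⁻¹ * ((2:ℝ)⁻¹)^(i+1)) • fa (seq i)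
            = (1 - ((2:ℝ)⁻¹)^n)⁻¹ • ∑ i ∈ Finset.range n, ((2:ℝ)⁻¹)^(i+1) • fa (seq i) := by
          rw [Finset.smul_sum]
          exact Finset.sum_congr rfl fun i _ => by rw [smul_smul]
        rwa [h5] at h4
    have hmemB : B ∈ C₂ := by
      rw [← h₂cl.closure_eq]
      refine mem_closure_of_tendsto (b := atTop) (f := fun n : ℕ => (1 - ((2:ℝ)⁻¹)^n)⁻¹
        • ∑ i ∈ Finset.range n, ((2:ℝ)⁻¹)^(i+1) • fb (seq i)) ?_ ?_
      · have h2 := hsummable_b.hasSum.tendsto_sum_nat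
        have h3 := hcoef_tend.smul h2
        rw [← hB] at h3
        simpa using h3
      · filter_upwards [eventually_ge_atTop 1] with n hn
        have hpow_lt : ((2:ℝ)⁻¹)^n < 1 := pow_lt_one₀ (by norm_num) (by norm_num) (by omega)
        have hcoef : (0:ℝ) < 1 - ((2:ℝ)⁻¹)^n := by linarith
        have h4 := Convex.sum_mem (t := Finset.range n)
          (w := fun i => (1 - ((2:ℝ)⁻¹)^n)⁻¹ * ((2:ℝ)⁻¹)^(i+1)) (z := fun i => fb (seq i))
          h₂conv (fun i _ => by positivity)
          (by rw [← Finset.mul_sum, hgeom, inv_mul_cancel₀ hcoef.ne'])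
          (fun i _ => hfb _)
        have h5 : ∑ i ∈ Finset.range n, ((1 - ((2:ℝ)⁻¹)^n)⁻¹ * ((2:ℝ)⁻¹)^(i+1)) • fb (seq i)
            = (1 - ((2:ℝ)⁻¹)^n)⁻¹ • ∑ i ∈ Finset.range n, ((2:ℝ)⁻¹)^(i+1) • fb (seq i) := by
          rw [Finset.smul_sum]
          exact Finset.sum_congr rfl fun i _ => by rw [smul_smul]
        rwa [h5] at h4
    have hnormB : ‖B‖ ≤ (L:ℝ) := by
      have h1 : ∀ n, ‖∑ i ∈ Finset.range n, ((2:ℝ)⁻¹)^(i+1) • fb (seq i)‖ ≤ (L:ℝ) := by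
        intro n
        calc ‖∑ i ∈ Finset.range n, ((2:ℝ)⁻¹)^(i+1) • fb (seq i)‖
            ≤ ∑ i ∈ Finset.range n, ‖((2:ℝ)⁻¹)^(i+1) • fb (seq i)‖ := norm_sum_le _ _
        _ ≤ ∑ i ∈ Finset.range n, ((2:ℝ)⁻¹)^(i+1) * (L:ℝ) := by
            refine Finset.sum_le_sum fun i _ => ?_
            rw [hpow_norm]
            exact mul_le_mul_of_nonneg_left (hfnb _) (by positivity)
        _ = (1 - ((2:ℝ)⁻¹)^n) * (L:ℝ) := by rw [← Finset.sum_mul, hgeom]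
        _ ≤ (L:ℝ) := by nlinarith [pow_nonneg (by norm_num : (0:ℝ) ≤ 2⁻¹) n]
      exact le_of_tendsto' hsummable_b.hasSum.tendsto_sum_nat.norm h1
    exact ⟨A, hmemA, B, hmemB, hnormB, hzAB⟩
  -- separation in ↥S × ℝ
  obtain ⟨g₀, hkey⟩ : ∃ g₀ : S →L[ℝ] ℝ,
      ∀ a, ∀ ha : a ∈ C₁, ∀ b, ∀ hb : b ∈ C₂, g₀ ⟨a - b, hmemS ha hb⟩ ≤ -φ b := by
    have hLr : (0:ℝ) ≤ ‖φ‖ * (L:ℝ) := by positivity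
    set E : Set (S × ℝ) := {p | ∃ a ∈ C₁, ∃ b ∈ C₂, ((p.1 : Z) = a - b ∧ -φ b ≤ p.2)} with hE
    have hEconv : Convex ℝ E := by
      rintro ⟨s, r⟩ ⟨a, ha, b, hb, hs, hr⟩ ⟨s', r'⟩ ⟨a', ha', b', hb', hs', hr'⟩ u v hu hv huv
      refine ⟨u • a + v • a', h₁conv ha ha' hu hv huv, u • b + v • b',
        h₂conv hb hb' hu hv huv, ?_, ?_⟩
      · show ((u • (s, r) + v • (s', r')).1 : Z) = _
        simp only [Prod.fst_add, Prod.smul_fst, Submodule.coe_add, Submodule.coe_smul]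
        rw [hs, hs']
        module
      · show -φ _ ≤ (u • (s, r) + v • (s', r')).2
        simp only [Prod.snd_add, Prod.smul_snd, smul_eq_mul, map_add, map_smul, neg_add,
          smul_eq_mul]
        have h1 := mul_le_mul_of_nonneg_left hr hu
        have h2 := mul_le_mul_of_nonneg_left hr' hv
        simp only [smul_eq_mul] at h1 h2
        rw [mul_neg] at h1 h2
        linarith
    have hUE : {p : S × ℝ | ‖p.1‖ < ρ/2 ∧ ‖φ‖ * (L:ℝ) < p.2} ⊆ E := by
      rintro ⟨s, r⟩ ⟨h1, h2⟩
      obtain ⟨a, ha, b, hb, hnb, heq⟩ := hrep (s:Z) s.2 h1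
      refine ⟨a, ha, b, hb, heq, ?_⟩
      calc -φ b ≤ |φ b| := neg_le_abs _
      _ = ‖φ b‖ := (Real.norm_eq_abs _).symm
      _ ≤ ‖φ‖ * ‖b‖ := φ.le_opNorm b
      _ ≤ ‖φ‖ * (L:ℝ) := mul_le_mul_of_nonneg_left hnb (norm_nonneg φ)
      _ ≤ r := h2.le
    have hUopen : IsOpen {p : S × ℝ | ‖p.1‖ < ρ/2 ∧ ‖φ‖ * (L:ℝ) < p.2} := by
      have h1 : IsOpen {p : S × ℝ | ‖p.1‖ < ρ/2} := isOpen_lt continuous_fst.norm continuous_const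
      have h2 : IsOpen {p : S × ℝ | ‖φ‖ * (L:ℝ) < p.2} := isOpen_lt continuous_const continuous_snd
      simpa only [Set.setOf_and] using h1.inter h2
    have hUint : {p : S × ℝ | ‖p.1‖ < ρ/2 ∧ ‖φ‖ * (L:ℝ) < p.2} ⊆ interior E :=
      interior_maximal hUE hUopen
    have hp0 : ((0:S), (0:ℝ)) ∉ interior E := by
      intro hmem
      have h1 : interior E ∈ 𝓝 (((0:S), (0:ℝ))) := isOpen_interior.mem_nhds hmem
      rw [Metric.mem_nhds_iff] at h1
      obtain ⟨η, hη, hball⟩ := h1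
      have h2 : (((0:S)), -η/2) ∈ interior E := by
        apply hball
        rw [Metric.mem_ball, Prod.dist_eq]
        have hd1 : dist ((0:S)) ((0:S)) = 0 := dist_self _
        have hd2 : dist (-η/2) (0:ℝ) = η/2 := by
          rw [Real.dist_eq, sub_zero, abs_of_nonpos (by linarith)]
          ring
        rw [hd1, hd2, max_eq_right (by positivity)]
        linarith
      obtain ⟨a, ha, b, hb, heq, hle⟩ := interior_subset h2
      have hab : a = b := by
        have h3 : (0:Z) = a - b := by simpa using heq
        exact (sub_eq_zero.mp h3.symm)
      have h4 : φ b ≤ 0 := hφ b ⟨hab ▸ ha, hb⟩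
      simp only [] at hle
      linarith
    obtain ⟨f, hf⟩ := geometric_hahn_banach_open_point (hEconv.interior) isOpen_interior hp0
    have hf0 : f (((0:S)), (0:ℝ)) = 0 := by
      rw [show (((0:S)), (0:ℝ)) = (0 : S × ℝ) from rfl, map_zero]
    set c := f ((0:S), (1:ℝ)) with hcdef
    have hdecomp : ∀ p : S × ℝ, f p = f (p.1, 0) + p.2 * c := by
      intro p
      have h1 : p = (p.1, (0:ℝ)) + ((0:S), p.2) := by
        apply Prod.ext <;> simp
      calc f p = f ((p.1, (0:ℝ)) + ((0:S), p.2)) := by rw [← h1]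
      _ = f (p.1, (0:ℝ)) + f ((0:S), p.2) := map_add f _ _
      _ = f (p.1, (0:ℝ)) + p.2 * c := by
          congr 1
          have h2 : ((0:S), p.2) = p.2 • (((0:S)), (1:ℝ)) := by
            apply Prod.ext <;> simp
          rw [h2, map_smul, smul_eq_mul]
    have hcpos : 0 < -c := by
      have hU1 : (((0:S)), ‖φ‖ * (L:ℝ) + 1) ∈ interior E := by
        apply hUint
        constructor
        · simpa using (by positivity : (0:ℝ) < ρ/2)
        · simp only [mem_setOf_eq]
          linarith
      have h1 := hf _ hU1
      rw [hf0, hdecomp] at h1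
      simp only [] at h1
      nlinarith [hf0, hdecomp (((0:S)), (0:ℝ))]
    set g₁ : S →L[ℝ] ℝ := (-c)⁻¹ • (f.comp (ContinuousLinearMap.inl ℝ S ℝ)) with hg₁
    have hg₁app : ∀ s : S, g₁ s = (-c)⁻¹ * f (s, 0) := by
      intro s
      rw [hg₁]
      rfl
    have hintlt : ∀ p ∈ interior E, g₁ p.1 < p.2 := by
      intro p hp
      have h1 := hf p hp
      rw [hf0, hdecomp p] at h1
      have h2 : f (p.1, (0:ℝ)) < p.2 * (-c) := by linarith
      calc g₁ p.1 = (-c)⁻¹ * f (p.1, 0) := hg₁app _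
      _ < (-c)⁻¹ * (p.2 * (-c)) := by
          exact mul_lt_mul_of_pos_left h2 (inv_pos.mpr hcpos)
      _ = p.2 := by
          have hcne : (-c) ≠ 0 := ne_of_gt hcpos
          rw [mul_comm ((-c)⁻¹), mul_assoc, mul_inv_cancel₀ hcne, mul_one]
    have hEle : ∀ p ∈ E, g₁ p.1 ≤ p.2 := by
      intro p hp
      have hqint : (((0:S)), ‖φ‖ * (L:ℝ) + 1) ∈ interior E := by
        apply hUint
        constructor
        · simpa using (by positivity : (0:ℝ) < ρ/2)
        · simp only [mem_setOf_eq]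
          linarith
      set q : S × ℝ := (((0:S)), ‖φ‖ * (L:ℝ) + 1) with hq
      have hseqle : ∀ n : ℕ, g₁ ((p + (1/((n:ℝ)+1)) • (q - p)).1)
          ≤ (p + (1/((n:ℝ)+1)) • (q - p)).2 := by
        intro n
        have hn0 : (0:ℝ) < (n:ℝ) + 1 := by positivity
        have ht : (1/((n:ℝ)+1)) ∈ Set.Ioc (0:ℝ) 1 := by
          constructor
          · positivity
          · rw [div_le_one hn0]
            have : (0:ℝ) ≤ (n:ℝ) := Nat.cast_nonneg n
            linarith
        exact (hintlt _ (hEconv.add_smul_sub_mem_interior hp hqint ht)).le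
      have htp : Tendsto (fun n : ℕ => p + (1/((n:ℝ)+1)) • (q - p)) atTop (𝓝 p) := by
        have h1 : Tendsto (fun n : ℕ => 1/((n:ℝ)+1)) atTop (𝓝 0) :=
          tendsto_one_div_add_atTop_nhds_zero_nat
        have h2 := h1.smul_const (q - p)
        have h3 := (tendsto_const_nhds (x := p) (f := atTop)).add h2
        simpa using h3
      have hT1 : Tendsto (fun n : ℕ => g₁ ((p + (1/((n:ℝ)+1)) • (q-p)).1)) atTop (𝓝 (g₁ p.1)) :=
        (g₁.continuous.tendsto _).comp ((continuous_fst.tendsto _).comp htp)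
      have hT2 : Tendsto (fun n : ℕ => (p + (1/((n:ℝ)+1)) • (q-p)).2) atTop (𝓝 p.2) :=
        (continuous_snd.tendsto _).comp htp
      exact le_of_tendsto_of_tendsto' hT1 hT2 hseqle
    refine ⟨g₁, ?_⟩
    intro a ha b hb
    exact hEle (⟨a - b, hmemS ha hb⟩, -φ b) ⟨a, ha, b, hb, rfl, le_refl _⟩
  -- extension
  obtain ⟨g, hg, -⟩ := exists_extension_norm_eq S g₀
  refine ⟨g, ?_, ?_⟩
  · intro a ha
    have haS : a ∈ S := by simpa using hmemS ha h0₂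
    have h1 := hkey a ha 0 h0₂
    have h2 : (⟨a - 0, hmemS ha h0₂⟩ : S) = ⟨a, haS⟩ := Subtype.ext (sub_zero a)
    rw [h2] at h1
    have h3 := hg ⟨a, haS⟩
    simp only [map_zero, neg_zero] at h1
    calc g a = g₀ ⟨a, haS⟩ := h3
    _ ≤ 0 := h1
  · intro b hb
    have hbS : b ∈ S := by simpa using S.neg_mem (by simpa [zero_sub] using hmemS h0₁ hb)
    have h1 := hkey 0 h0₁ b hb
    have h2 : (⟨(0:Z) - b, hmemS h0₁ hb⟩ : S) = -⟨b, hbS⟩ := Subtype.ext (by simp)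
    rw [h2, map_neg] at h1
    have h3 := hg ⟨b, hbS⟩
    have h4 : g b = g₀ ⟨b, hbS⟩ := h3
    linarith

end Core

/-- for convex closed set-valued maps `H₁ : X ⇉ Y₁`, `H₂ : X ⇉ Y₂` with
`ℝ⁺(dom H₁ − dom H₂)` a closed linear subspace of `X`, the map `H(x) = H₁(x) × H₂(x)`
satisfies `D*H(xb, (yb₁, yb₂))(y₁*, y₂*) = D*H₁(xb, yb₁)(y₁*) + D*H₂(xb, yb₂)(y₂*)`,
where `(y₁*, y₂*)` acts on `Y₁ × Y₂` via `(y₁, y₂) ↦ ⟨y₁*, y₁⟩ + ⟨y₂*, y₂⟩`. -/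
theorem stmt3
    {X Y₁ Y₂ : Type*}
    [NormedAddCommGroup X] [NormedSpace ℝ X] [CompleteSpace X]
    [NormedAddCommGroup Y₁] [NormedSpace ℝ Y₁] [CompleteSpace Y₁]
    [NormedAddCommGroup Y₂] [NormedSpace ℝ Y₂] [CompleteSpace Y₂]
    (H₁ : X → Set Y₁) (H₂ : X → Set Y₂)
    (hH₁conv : Convex ℝ (gph H₁)) (hH₁cl : IsClosed (gph H₁))
    (hH₂conv : Convex ℝ (gph H₂)) (hH₂cl : IsClosed (gph H₂))
    -- ℝ⁺(dom H₁ − dom H₂) is a closed linear subspace of X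
    (hqual : ∃ S : Submodule ℝ X, IsClosed (S : Set X) ∧
      {w : X | ∃ t : ℝ, 0 ≤ t ∧ ∃ u ∈ dom H₁, ∃ v ∈ dom H₂, w = t • (u - v)} = S)
    (xb : X) (yb₁ : Y₁) (yb₂ : Y₂)
    (hyb₁ : yb₁ ∈ H₁ xb) (hyb₂ : yb₂ ∈ H₂ xb)
    (ψ₁ : Y₁ →L[ℝ] ℝ) (ψ₂ : Y₂ →L[ℝ] ℝ) :
    coderiv (fun x => H₁ x ×ˢ H₂ x) xb (yb₁, yb₂) (ψ₁.coprod ψ₂)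
      = coderiv H₁ xb yb₁ ψ₁ + coderiv H₂ xb yb₂ ψ₂ := by
  obtain ⟨S, hScl, hSeq⟩ := hqual
  ext φ
  constructor
  · intro hmem
    have hmem' : ∀ u : X, ∀ v ∈ (H₁ u ×ˢ H₂ u : Set (Y₁ × Y₂)),
        φ (u - xb) - (ψ₁.coprod ψ₂) (v - (yb₁, yb₂)) ≤ 0 := hmem
    set C₁ : Set (X × Y₁ × Y₂) := {z | z.2.1 + yb₁ ∈ H₁ (z.1 + xb)} with hC₁
    set C₂ : Set (X × Y₁ × Y₂) := {z | z.2.2 + yb₂ ∈ H₂ (z.1 + xb)} with hC₂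
    have h₁cl : IsClosed C₁ := by
      have h0 : C₁ = (fun z : X × Y₁ × Y₂ => ((z.1 + xb, z.2.1 + yb₁) : X × Y₁)) ⁻¹' (gph H₁) :=
        rfl
      rw [h0]
      exact hH₁cl.preimage (by fun_prop)
    have h₂cl : IsClosed C₂ := by
      have h0 : C₂ = (fun z : X × Y₁ × Y₂ => ((z.1 + xb, z.2.2 + yb₂) : X × Y₂)) ⁻¹' (gph H₂) :=
        rfl
      rw [h0]
      exact hH₂cl.preimage (by fun_prop)
    have h₁conv : Convex ℝ C₁ := by
      intro z hz w hw u v hu hv huv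
      have hkey := hH₁conv (show ((z.1 + xb, z.2.1 + yb₁) : X × Y₁) ∈ gph H₁ from hz)
        (show ((w.1 + xb, w.2.1 + yb₁) : X × Y₁) ∈ gph H₁ from hw) hu hv huv
      have h1 : (u • ((z.1 + xb, z.2.1 + yb₁) : X × Y₁) + v • ((w.1 + xb, w.2.1 + yb₁) : X × Y₁))
          = (((u • z + v • w).1 + xb, (u • z + v • w).2.1 + yb₁) : X × Y₁) := by
        have hxb : u • xb + v • xb = xb := by rw [← add_smul, huv, one_smul]
        have hyb : u • yb₁ + v • yb₁ = yb₁ := by rw [← add_smul, huv, one_smul]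
        apply Prod.ext
        · simp only [Prod.fst_add, Prod.smul_fst]
          calc u • (z.1 + xb) + v • (w.1 + xb)
              = (u • z.1 + v • w.1) + (u • xb + v • xb) := by module
          _ = (u • z.1 + v • w.1) + xb := by rw [hxb]
        · simp only [Prod.snd_add, Prod.smul_snd, Prod.fst_add, Prod.smul_fst]
          calc u • (z.2.1 + yb₁) + v • (w.2.1 + yb₁)
              = (u • z.2.1 + v • w.2.1) + (u • yb₁ + v • yb₁) := by module
          _ = (u • z.2.1 + v • w.2.1) + yb₁ := by rw [hyb]
      rw [h1] at hkey
      exact hkey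
    have h₂conv : Convex ℝ C₂ := by
      intro z hz w hw u v hu hv huv
      have hkey := hH₂conv (show ((z.1 + xb, z.2.2 + yb₂) : X × Y₂) ∈ gph H₂ from hz)
        (show ((w.1 + xb, w.2.2 + yb₂) : X × Y₂) ∈ gph H₂ from hw) hu hv huv
      have h1 : (u • ((z.1 + xb, z.2.2 + yb₂) : X × Y₂) + v • ((w.1 + xb, w.2.2 + yb₂) : X × Y₂))
          = (((u • z + v • w).1 + xb, (u • z + v • w).2.2 + yb₂) : X × Y₂) := by
        have hxb : u • xb + v • xb = xb := by rw [← add_smul, huv, one_smul]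
        have hyb : u • yb₂ + v • yb₂ = yb₂ := by rw [← add_smul, huv, one_smul]
        apply Prod.ext
        · simp only [Prod.fst_add, Prod.smul_fst]
          calc u • (z.1 + xb) + v • (w.1 + xb)
              = (u • z.1 + v • w.1) + (u • xb + v • xb) := by module
          _ = (u • z.1 + v • w.1) + xb := by rw [hxb]
        · simp only [Prod.snd_add, Prod.smul_snd, Prod.fst_add, Prod.smul_fst]
          calc u • (z.2.2 + yb₂) + v • (w.2.2 + yb₂)
              = (u • z.2.2 + v • w.2.2) + (u • yb₂ + v • yb₂) := by module
          _ = (u • z.2.2 + v • w.2.2) + yb₂ := by rw [hyb]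
      rw [h1] at hkey
      exact hkey
    have h0₁ : (0 : X × Y₁ × Y₂) ∈ C₁ := by
      show (0:Y₁) + yb₁ ∈ H₁ ((0:X) + xb)
      simpa using hyb₁
    have h0₂ : (0 : X × Y₁ × Y₂) ∈ C₂ := by
      show (0:Y₂) + yb₂ ∈ H₂ ((0:X) + xb)
      simpa using hyb₂
    set SZ : Submodule ℝ (X × Y₁ × Y₂) := S.prod (⊤ : Submodule ℝ (Y₁ × Y₂)) with hSZ
    have hSZcl : IsClosed (SZ : Set (X × Y₁ × Y₂)) := by
      have h0 : (SZ : Set (X × Y₁ × Y₂)) = (S : Set X) ×ˢ (univ : Set (Y₁ × Y₂)) := by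
        ext z
        simp [hSZ, Submodule.mem_prod]
      rw [h0]
      exact hScl.prod isClosed_univ
    have hSeqZ : {w : X × Y₁ × Y₂ | ∃ t : ℝ, 0 ≤ t ∧ ∃ a ∈ C₁, ∃ b ∈ C₂, w = t • (a - b)}
        = (SZ : Set (X × Y₁ × Y₂)) := by
      ext w
      constructor
      · rintro ⟨t, ht, a, ha, b, hb, rfl⟩
        have h1 : t • (a.1 - b.1)
            ∈ {w : X | ∃ t : ℝ, 0 ≤ t ∧ ∃ u ∈ dom H₁, ∃ v ∈ dom H₂, w = t • (u - v)} :=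
          ⟨t, ht, a.1 + xb, ⟨_, ha⟩, b.1 + xb, ⟨_, hb⟩, by rw [add_sub_add_right_eq_sub]⟩
        rw [hSeq] at h1
        exact Submodule.mem_prod.mpr ⟨h1, trivial⟩
      · intro hw
        have hw1 : w.1 ∈ S := (Submodule.mem_prod.mp hw).1
        rw [show (w.1 ∈ S) = (w.1 ∈ (S : Set X)) from rfl, ← hSeq] at hw1
        obtain ⟨t, ht, u, ⟨p₁, hp₁⟩, v, ⟨p₂, hp₂⟩, hw1⟩ := hw1
        rcases eq_or_lt_of_le ht with h0 | htpos
        · have hw10 : w.1 = 0 := by rw [hw1, ← h0, zero_smul]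
          refine ⟨1, zero_le_one, (0, 0, w.2.2), ?_, (0, -w.2.1, 0), ?_, ?_⟩
          · show (0:Y₁) + yb₁ ∈ H₁ ((0:X) + xb); simpa using hyb₁
          · show (0:Y₂) + yb₂ ∈ H₂ ((0:X) + xb); simpa using hyb₂
          · rw [one_smul]
            apply Prod.ext
            · simpa using hw10
            · apply Prod.ext <;> simp
        · refine ⟨t, ht, (u - xb, p₁ - yb₁, t⁻¹ • w.2.2 + (p₂ - yb₂)), ?_,
            (v - xb, (p₁ - yb₁) - t⁻¹ • w.2.1, p₂ - yb₂), ?_, ?_⟩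
          · show (p₁ - yb₁) + yb₁ ∈ H₁ ((u - xb) + xb)
            simpa using hp₁
          · show (p₂ - yb₂) + yb₂ ∈ H₂ ((v - xb) + xb)
            simpa using hp₂
          · have htne : t ≠ 0 := htpos.ne'
            apply Prod.ext
            · simp only [Prod.smul_fst, Prod.fst_sub]
              rw [hw1]
              congr 1
              abel
            · apply Prod.ext
              · simp only [Prod.smul_snd, Prod.snd_sub, Prod.smul_fst, Prod.fst_sub]
                rw [show (p₁ - yb₁) - ((p₁ - yb₁) - t⁻¹ • w.2.1) = t⁻¹ • w.2.1 by abel,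
                  smul_smul, mul_inv_cancel₀ htne, one_smul]
              · simp only [Prod.smul_snd, Prod.snd_sub]
                rw [show (t⁻¹ • w.2.2 + (p₂ - yb₂)) - (p₂ - yb₂) = t⁻¹ • w.2.2 by abel,
                  smul_smul, mul_inv_cancel₀ htne, one_smul]
    set Φ : (X × Y₁ × Y₂) →L[ℝ] ℝ :=
      φ.comp (ContinuousLinearMap.fst ℝ X (Y₁ × Y₂))
        - (ψ₁.coprod ψ₂).comp (ContinuousLinearMap.snd ℝ X (Y₁ × Y₂)) with hΦ
    have hΦapp : ∀ z : X × Y₁ × Y₂, Φ z = φ z.1 - (ψ₁ z.2.1 + ψ₂ z.2.2) := by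
      intro z
      simp [hΦ]
    have hφZ : ∀ z ∈ C₁ ∩ C₂, Φ z ≤ 0 := by
      rintro z ⟨hz1, hz2⟩
      have h1 := hmem' (z.1 + xb) (z.2.1 + yb₁, z.2.2 + yb₂) ⟨hz1, hz2⟩
      simp only [add_sub_cancel_right, Prod.mk_sub_mk, ContinuousLinearMap.coprod_apply] at h1
      rw [hΦapp]
      simpa using h1
    obtain ⟨φ₁Z, hφ₁C₁, hφ₁C₂⟩ := coreLemma C₁ C₂ h₁conv h₁cl h₂conv h₂cl h0₁ h0₂
      SZ hSZcl hSeqZ Φ hφZ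
    set a₁ : X →L[ℝ] ℝ := φ₁Z.comp (ContinuousLinearMap.inl ℝ X (Y₁ × Y₂)) with ha₁
    have ha₁app : ∀ x : X, a₁ x = φ₁Z (x, 0, 0) := fun x => rfl
    have hsplit : ∀ z : X × Y₁ × Y₂,
        φ₁Z z = φ₁Z (z.1, 0, 0) + φ₁Z (0, z.2.1, 0) + φ₁Z (0, 0, z.2.2) := by
      intro z
      rw [← map_add, ← map_add]
      congr 1
      simp [Prod.ext_iff]
    have hthird : ∀ y₂ : Y₂, φ₁Z (0, 0, y₂) = 0 := by
      intro y₂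
      refine eq_zero_of_forall_mul_le (c := 0) ?_
      intro t
      have hmemt : ((0:X), (0:Y₁), t • y₂) ∈ C₁ := by
        show (0:Y₁) + yb₁ ∈ H₁ ((0:X) + xb); simpa using hyb₁
      have h1 := hφ₁C₁ _ hmemt
      have h2 : ((0:X), (0:Y₁), t • y₂) = t • (((0:X), (0:Y₁), y₂) : X × Y₁ × Y₂) := by
        simp [Prod.ext_iff]
      rw [h2, map_smul, smul_eq_mul] at h1
      exact h1
    have hsecond : ∀ y₁ : Y₁, φ₁Z (0, y₁, 0) = -ψ₁ y₁ := by
      intro y₁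
      have hv : Φ ((0:X), y₁, (0:Y₂)) - φ₁Z (0, y₁, 0) = 0 := by
        refine eq_zero_of_forall_mul_le (c := 0) ?_
        intro t
        have hmemt : ((0:X), t • y₁, (0:Y₂)) ∈ C₂ := by
          show (0:Y₂) + yb₂ ∈ H₂ ((0:X) + xb); simpa using hyb₂
        have h1 := hφ₁C₂ _ hmemt
        have h2 : ((0:X), t • y₁, (0:Y₂)) = t • (((0:X), y₁, (0:Y₂)) : X × Y₁ × Y₂) := by
          simp [Prod.ext_iff]
        rw [h2, map_smul, map_smul, smul_eq_mul, smul_eq_mul] at h1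
        rw [mul_sub]
        exact h1
      have h3 : Φ ((0:X), y₁, (0:Y₂)) = -ψ₁ y₁ := by
        rw [hΦapp]; simp
      linarith [hv, h3.symm ▸ hv]
    have hmem₁ : a₁ ∈ coderiv H₁ xb yb₁ ψ₁ := by
      intro u v hv
      have hz : ((u - xb), (v - yb₁), (0:Y₂)) ∈ C₁ := by
        show (v - yb₁) + yb₁ ∈ H₁ ((u - xb) + xb)
        simpa using hv
      have h1 := hφ₁C₁ _ hz
      rw [hsplit] at h1
      simp only [hthird] at h1
      rw [hsecond] at h1
      rw [ha₁app]
      linarith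
    have hmem₂ : (φ - a₁) ∈ coderiv H₂ xb yb₂ ψ₂ := by
      intro u v hv
      have hz : ((u - xb), (0:Y₁), (v - yb₂)) ∈ C₂ := by
        show (v - yb₂) + yb₂ ∈ H₂ ((u - xb) + xb)
        simpa using hv
      have h1 := hφ₁C₂ _ hz
      rw [hsplit, hΦapp] at h1
      simp only [hthird, map_zero] at h1
      have h3 : (φ - a₁) (u - xb) = φ (u - xb) - φ₁Z ((u - xb), 0, 0) := by
        rw [ContinuousLinearMap.sub_apply, ha₁app]
      linarith [h3]
    have h := Set.add_mem_add hmem₁ hmem₂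
    rwa [show a₁ + (φ - a₁) = φ by abel] at h
  · intro hmemsum
    rw [Set.mem_add] at hmemsum
    obtain ⟨φ₁, hφ₁, φ₂, hφ₂, rfl⟩ := hmemsum
    intro u v hv
    have h1 := hφ₁ u v.1 hv.1
    have h2 := hφ₂ u v.2 hv.2
    show (φ₁ + φ₂) (u - xb) - (ψ₁.coprod ψ₂) (v - (yb₁, yb₂)) ≤ 0
    rw [ContinuousLinearMap.add_apply]
    have h3 : (ψ₁.coprod ψ₂) (v - (yb₁, yb₂)) = ψ₁ (v.1 - yb₁) + ψ₂ (v.2 - yb₂) := by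
      simp [Prod.fst_sub, Prod.snd_sub]
    rw [h3]
    linarith
end

section
/- Let X be a real Banach space, K ⊆ ℝᵐ a pointed closed convex cone, and h : X → ℝᵐ a K-convex map that is continuously Fréchet differentiable, with components h = (h₁, …, hₘ) and derivative ∇h(x̄). Then for every x̄ ∈ X and every y* = (y₁*, …, yₘ*) ∈ K*, D*(h + K)(x̄)(y*) = ∂⟨y*, h⟩(x̄) = {∇h(x̄)*(y*)} = {Σᵢ yᵢ* ∇hᵢ(x̄)}, i.e., the singleton consisting of the continuous linear functional y* ∘ ∇h(x̄). -/
open Set Pointwise Topology Filter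


theorem slopeTendsto {X : Type*} [NormedAddCommGroup X] [NormedSpace ℝ X]
    {g : X → ℝ} {φ' : X →L[ℝ] ℝ} {xb : X} (hg : HasFDerivAt g φ' xb) (d : X) :
    Tendsto (fun t : ℝ => (g (xb + t • d) - g xb) / t) (𝓝[≠] 0) (𝓝 (φ' d)) := by
  have hline : HasDerivAt (fun t : ℝ => xb + t • d) d 0 := by
    simpa using ((hasDerivAt_id (0:ℝ)).smul_const d).const_add xb
  have hg' : HasFDerivAt g φ' (xb + (0:ℝ) • d) := by simpa using hg
  have hf : HasDerivAt (fun t : ℝ => g (xb + t • d)) (φ' d) 0 := by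
    exact hg'.comp_hasDerivAt (0:ℝ) hline
  have H := hasDerivAt_iff_tendsto_slope.mp hf
  refine H.congr (fun t => ?_)
  simp [slope_def_field]

/-- A subgradient at a point of differentiability equals the derivative. -/
theorem subgrad_eq {X : Type*} [NormedAddCommGroup X] [NormedSpace ℝ X]
    {g : X → ℝ} {φ φ' : X →L[ℝ] ℝ} {xb : X} (hg : HasFDerivAt g φ' xb)
    (hφ : ∀ u : X, φ (u - xb) ≤ g u - g xb) : φ = φ' := by
  ext d
  have key : ∀ t : ℝ, t * φ d ≤ g (xb + t • d) - g xb := by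
    intro t
    have := hφ (xb + t • d)
    simpa [mul_comm] using this
  have hT := slopeTendsto hg d
  have hle1 : 𝓝[>] (0:ℝ) ≤ 𝓝[≠] (0:ℝ) :=
    nhdsWithin_mono 0 (fun t (ht : t ∈ Ioi (0:ℝ)) => ne_of_gt ht)
  have hle2 : 𝓝[<] (0:ℝ) ≤ 𝓝[≠] (0:ℝ) :=
    nhdsWithin_mono 0 (fun t (ht : t ∈ Iio (0:ℝ)) => ne_of_lt ht)
  have h1 : φ d ≤ φ' d := by
    refine ge_of_tendsto (hT.mono_left hle1) ?_
    filter_upwards [self_mem_nhdsWithin] with t ht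
    have ht' : (0:ℝ) < t := ht
    exact (le_div_iff₀ ht').mpr (by simpa [mul_comm] using key t)
  have h2 : φ' d ≤ φ d := by
    refine le_of_tendsto (hT.mono_left hle2) ?_
    filter_upwards [self_mem_nhdsWithin] with t ht
    have ht' : t < (0:ℝ) := ht
    exact (div_le_iff_of_neg ht').mpr (by simpa [mul_comm] using key t)
  exact le_antisymm h1 h2

/-- The derivative of a convex function is a subgradient. -/
theorem deriv_mem_subgrad {X : Type*} [NormedAddCommGroup X] [NormedSpace ℝ X]
    {g : X → ℝ} {φ' : X →L[ℝ] ℝ} {xb : X} (hg : HasFDerivAt g φ' xb)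
    (hc : ∀ x x' : X, ∀ l ∈ Icc (0:ℝ) 1,
      g (l • x + (1 - l) • x') ≤ l * g x + (1 - l) * g x') :
    ∀ u : X, φ' (u - xb) ≤ g u - g xb := by
  intro u
  have hT := slopeTendsto hg (u - xb)
  have hle1 : 𝓝[>] (0:ℝ) ≤ 𝓝[≠] (0:ℝ) :=
    nhdsWithin_mono 0 (fun t (ht : t ∈ Ioi (0:ℝ)) => ne_of_gt ht)
  refine le_of_tendsto (hT.mono_left hle1) ?_
  filter_upwards [Ioo_mem_nhdsGT_of_mem (by norm_num : (0:ℝ) ∈ Ico (0:ℝ) 1)] with t ht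
  obtain ⟨ht0, ht1⟩ := ht
  have hx : xb + t • (u - xb) = t • u + (1 - t) • xb := by
    simp [smul_sub, sub_smul]; abel
  have := hc u xb t ⟨le_of_lt ht0, le_of_lt ht1⟩
  rw [div_le_iff₀ ht0, hx]
  nlinarith [this]


open RealInnerProductSpace in
/-- for a `K`-convex, continuously Fréchet differentiable map
`h : X → ℝᵐ` (`K ⊆ ℝᵐ` a pointed closed convex cone), every `xb` and `y* ∈ K*`:
`D*(h + K)(xb)(y*) = ∂⟨y*, h⟩(xb) = {∇h(xb)*(y*)} = {Σᵢ yᵢ* ∇hᵢ(xb)}`, the singleton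
consisting of the continuous linear functional `y* ∘ ∇h(xb)`. -/
theorem stmt8
    {X : Type*}
    [NormedAddCommGroup X] [NormedSpace ℝ X] [CompleteSpace X]
    {m : ℕ}
    -- K is a pointed closed convex cone in ℝᵐ
    (K : Set (EuclideanSpace ℝ (Fin m))) (hKconv : Convex ℝ K) (hKclosed : IsClosed K)
    (hKcone : ∀ t : ℝ, 0 ≤ t → ∀ y ∈ K, t • y ∈ K)
    (hKpointed : K ∩ (-K) = {0})
    -- h is K-convex and continuously Fréchet differentiable
    (h : X → EuclideanSpace ℝ (Fin m))
    (hconv : ∀ x x' : X, ∀ l ∈ Icc (0:ℝ) 1,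
      l • h x + (1 - l) • h x' ∈ ({h (l • x + (1 - l) • x')} : Set (EuclideanSpace ℝ (Fin m))) + K)
    (hdiff : ContDiff ℝ 1 h)
    (xb : X) (ystar : EuclideanSpace ℝ (Fin m)) (hy : ∀ k ∈ K, 0 ≤ ⟪ystar, k⟫) :
    ({φ : X →L[ℝ] ℝ |
        ∀ x : X, ∀ y ∈ ({h x} : Set (EuclideanSpace ℝ (Fin m))) + K,
          φ (x - xb) - ⟪ystar, y - h xb⟫ ≤ 0}
      = subdiff (fun x => ⟪ystar, h x⟫) xb)
    ∧ subdiff (fun x => ⟪ystar, h x⟫) xb = {(innerSL ℝ ystar).comp (fderiv ℝ h xb)}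
    ∧ (innerSL ℝ ystar).comp (fderiv ℝ h xb)
        = ∑ i : Fin m, ystar i • fderiv ℝ (fun x => h x i) xb := by
  set g : X → ℝ := fun x => ⟪ystar, h x⟫ with hgdef
  set φ' : X →L[ℝ] ℝ := (innerSL ℝ ystar).comp (fderiv ℝ h xb) with hphidef
  have hh : HasFDerivAt h (fderiv ℝ h xb) xb := (hdiff.differentiable one_ne_zero xb).hasFDerivAt
  have hg : HasFDerivAt g φ' xb := ((innerSL ℝ ystar).hasFDerivAt).comp xb hh
  have hK0 : (0 : EuclideanSpace ℝ (Fin m)) ∈ K := by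
    have : (0 : EuclideanSpace ℝ (Fin m)) ∈ K ∩ (-K) := by
      rw [hKpointed]; exact mem_singleton 0
    exact this.1
  have hgconv : ∀ x x' : X, ∀ l ∈ Icc (0:ℝ) 1,
      g (l • x + (1 - l) • x') ≤ l * g x + (1 - l) * g x' := by
    intro x x' l hl
    obtain ⟨v, hv, k, hk, hvk⟩ := hconv x x' l hl
    rw [mem_singleton_iff] at hv
    subst hv
    have := hy k hk
    have hin : ⟪ystar, l • h x + (1 - l) • h x'⟫ = g (l • x + (1 - l) • x') + ⟪ystar, k⟫ := by
      rw [← hvk, inner_add_right]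
    rw [inner_add_right, inner_smul_right, inner_smul_right] at hin
    simp only [hgdef]
    linarith
  have hsub : ∀ u : X, φ' (u - xb) ≤ g u - g xb := deriv_mem_subgrad hg hgconv
  refine ⟨?_, ?_, ?_⟩
  · ext φ
    simp only [mem_setOf_eq, subdiff, hgdef]
    constructor
    · intro hφ u
      have hmem : h u ∈ ({h u} : Set (EuclideanSpace ℝ (Fin m))) + K := by
        refine ⟨h u, mem_singleton _, 0, hK0, by simp⟩
      have := hφ u (h u) hmem
      rw [inner_sub_right] at this
      linarith
    · intro hφ x y hy'
      obtain ⟨v, hv, k, hk, hvk⟩ := hy'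
      rw [mem_singleton_iff] at hv
      subst hv
      have h1 := hφ x
      have h2 := hy k hk
      have : ⟪ystar, y - h xb⟫ = (⟪ystar, h x⟫ - ⟪ystar, h xb⟫) + ⟪ystar, k⟫ := by
        rw [← hvk]
        rw [inner_sub_right, inner_add_right]
        ring
      rw [this]
      linarith
  · ext φ
    simp only [subdiff, mem_setOf_eq, mem_singleton_iff]
    constructor
    · intro hφ
      exact subgrad_eq hg hφ
    · intro hφ
      subst hφ
      exact hsub
  · have hcoord : ∀ i : Fin m, fderiv ℝ (fun x => h x i) xb
        = (EuclideanSpace.proj i).comp (fderiv ℝ h xb) := by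
      intro i
      have := ((EuclideanSpace.proj (𝕜 := ℝ) i).hasFDerivAt.comp xb hh).fderiv
      exact this
    ext x
    simp [hphidef, hcoord, PiLp.inner_apply, RCLike.inner_apply, ContinuousLinearMap.sum_apply]
    exact Finset.sum_congr rfl (fun _ _ => mul_comm _ _)
end

section
/- Let P, X, Y be real Banach spaces, K ⊆ Y a pointed closed convex cone, f : P × X → Y a K-convex and K-closed map, and C : P ⇉ X a closed convex set-valued map. Let (p̄, x̄) ∈ gph S with ȳ = f(p̄, x̄), let H : P ⇉ P × X be H(p) = {p} × C(p), and assume (i) ℝ⁺(rge H − dom f) is a closed linear subspace of P × X, and (ii) ℝ⁺(P − dom C) is a closed linear subspace of P. Then for every y* ∈ Y*, D*(F + K)(p̄, ȳ)(y*) = ⋃_{(p*, x*) ∈ D*(f + K)(p̄, x̄)(y*)} {p* + q* : q* ∈ D*C(p̄, x̄)(x*)}. -/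
open Set Pointwise Topology Filter

private noncomputable def iterSeq {Z : Type*} [AddCommGroup Z] [Module ℝ Z]
    (z0 : Z) (g : Z → Z) (z : Z) : ℕ → Z
  | 0 => z
  | (k+1) => z0 + (2:ℝ) • (iterSeq z0 g z k - g (iterSeq z0 g z k))

lemma baire_bounded_selection {Z Y : Type*}
    [NormedAddCommGroup Z] [NormedSpace ℝ Z] [CompleteSpace Z]
    [NormedAddCommGroup Y] [NormedSpace ℝ Y] [CompleteSpace Y]
    (A : Set (Z × Y)) (hAc : IsClosed A) (hAconv : Convex ℝ A)
    (hdom : ∀ z : Z, ∃ y, (z, y) ∈ A) :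
    ∃ z0 : Z, ∃ r M : ℝ, 0 < r ∧
      ∀ w ∈ Metric.ball z0 r, ∃ y, (w, y) ∈ A ∧ ‖y‖ ≤ M := by
  classical
  set W : ℕ → Set Z := fun n => {z | ∃ y, (z, y) ∈ A ∧ ‖y‖ ≤ n} with hW
  have hcover : (⋃ n, closure (W n)) = univ := by
    ext z
    simp only [mem_iUnion, mem_univ, iff_true]
    obtain ⟨y, hy⟩ := hdom z
    exact ⟨⌈‖y‖⌉₊, subset_closure ⟨y, hy, Nat.le_ceil _⟩⟩
  obtain ⟨n, z1, hz1⟩ :=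
    nonempty_interior_of_iUnion_of_closed (fun n => isClosed_closure) hcover
  rw [mem_interior_iff_mem_nhds, Metric.mem_nhds_iff] at hz1
  obtain ⟨ε, hε, hball⟩ := hz1
  refine ⟨z1, ε/2, n, by positivity, ?_⟩
  -- pick function
  have hpick : ∀ w : Z, ∃ p : Z × Y,
      w ∈ Metric.ball z1 ε → (p ∈ A ∧ ‖p.2‖ ≤ n ∧ dist w p.1 < ε/2) := by
    intro w
    by_cases hw : w ∈ Metric.ball z1 ε
    · have hcl : w ∈ closure (W n) := hball hw
      rw [Metric.mem_closure_iff] at hcl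
      obtain ⟨b, hb, hdb⟩ := hcl (ε/2) (by positivity)
      obtain ⟨y, hy1, hy2⟩ := hb
      exact ⟨(b, y), fun _ => ⟨hy1, hy2, hdb⟩⟩
    · exact ⟨(w, 0), fun h => absurd h hw⟩
  choose pick hspec using hpick
  intro w hw
  set z : Z := (2:ℝ) • w - z1 with hzdef
  have hz : z ∈ Metric.ball z1 ε := by
    rw [Metric.mem_ball, dist_eq_norm]
    have h2 : z - z1 = (2:ℝ) • (w - z1) := by rw [hzdef]; module
    rw [h2, norm_smul]
    rw [Metric.mem_ball, dist_eq_norm] at hw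
    simp only [Real.norm_ofNat]
    linarith
  set t : ℕ → Z := iterSeq z1 (fun v => (pick v).1) z with htdef
  have ht0 : t 0 = z := rfl
  have htS : ∀ k, t (k+1) = z1 + (2:ℝ) • (t k - (pick (t k)).1) := fun k => rfl
  have htball : ∀ k, t k ∈ Metric.ball z1 ε := by
    intro k
    induction k with
    | zero => exact hz
    | succ k ih =>
      have h1 := (hspec (t k) ih).2.2
      rw [Metric.mem_ball, htS, dist_eq_norm]
      have h3 : z1 + (2:ℝ) • (t k - (pick (t k)).1) - z1
          = (2:ℝ) • (t k - (pick (t k)).1) := by abel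
      rw [h3, norm_smul]
      rw [dist_eq_norm] at h1
      simp only [Real.norm_ofNat]
      linarith
  set a : ℕ → Z := fun k => (pick (t k)).1 with hadef
  set yy : ℕ → Y := fun k => (pick (t k)).2 with hyydef
  have hAmem : ∀ k, (a k, yy k) ∈ A := by
    intro k
    have := (hspec (t k) (htball k)).1
    simpa [hadef, hyydef] using this
  have hybd : ∀ k, ‖yy k‖ ≤ n := fun k => (hspec _ (htball k)).2.1
  have hdista : ∀ k, ‖t k - a k‖ < ε/2 := by
    intro k
    have := (hspec _ (htball k)).2.2
    rwa [dist_eq_norm] at this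
  have habd : ∀ k, ‖a k‖ ≤ ‖z1‖ + 2*ε := by
    intro k
    have h1 : ‖t k - z1‖ < ε := by
      have := htball k; rwa [Metric.mem_ball, dist_eq_norm] at this
    have h2 := hdista k
    have h3 : ‖t k‖ ≤ ‖t k - z1‖ + ‖z1‖ := by
      have := norm_add_le (t k - z1) z1
      simpa using this
    calc ‖a k‖ = ‖t k - (t k - a k)‖ := by congr 1; abel
    _ ≤ ‖t k‖ + ‖t k - a k‖ := norm_sub_le _ _
    _ ≤ ‖z1‖ + 2*ε := by linarith [hε]
  -- the series of convex combinations
  set μ : ℕ → ℝ := fun k => (1/2:ℝ)^(k+1) with hμdef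
  set Pk : ℕ → Z × Y := fun k => (a k, yy k) with hPkdef
  have hμpos : ∀ k, 0 ≤ μ k := fun k => by positivity
  have hμle : ∀ k, μ k ≤ (1/2:ℝ)^k := by
    intro k
    have h : μ k = (1/2:ℝ)^k * (1/2) := pow_succ _ _
    rw [h]
    nlinarith [pow_pos (by norm_num : (0:ℝ) < 1/2) k]
  have hPbd : ∀ k, ‖Pk k‖ ≤ (‖z1‖ + 2*ε + n) := by
    intro k
    have h1 := habd k
    have h2 := hybd k
    have hnn : (0:ℝ) ≤ n := Nat.cast_nonneg n
    have h0 : (0:ℝ) ≤ ‖z1‖ := norm_nonneg _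
    have hnorm : ‖Pk k‖ = max ‖a k‖ ‖yy k‖ := rfl
    rw [hnorm]
    apply max_le
    · linarith
    · linarith [hε]
  have hsum : Summable (fun k => μ k • Pk k) := by
    apply Summable.of_norm_bounded (g := fun k => (‖z1‖ + 2*ε + n) * (1/2:ℝ)^k)
    · exact (summable_geometric_two).mul_left _
    · intro k
      rw [norm_smul, Real.norm_eq_abs, abs_of_nonneg (hμpos k)]
      calc μ k * ‖Pk k‖ ≤ (1/2:ℝ)^k * (‖z1‖ + 2*ε + n) := by
            apply mul_le_mul (hμle k) (hPbd k) (norm_nonneg _)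
            positivity
      _ = (‖z1‖ + 2*ε + n) * (1/2:ℝ)^k := mul_comm _ _
  set L := ∑' k, μ k • Pk k with hLdef
  have hps : Tendsto (fun m => ∑ k ∈ Finset.range m, μ k • Pk k) atTop (nhds L) :=
    hsum.hasSum.tendsto_sum_nat
  have hμsum : ∀ m, ∑ k ∈ Finset.range m, μ k = 1 - (1/2:ℝ)^m := by
    intro m
    induction m with
    | zero => simp
    | succ m ih =>
      rw [Finset.sum_range_succ, ih, hμdef]
      ring
  have hQmem : ∀ m : ℕ,
      (∑ k ∈ Finset.range m, μ k • Pk k) + (1/2:ℝ)^m • Pk 0 ∈ A := by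
    intro m
    have h := hAconv.sum_mem (t := Finset.range (m+1))
      (w := fun k => if k < m then μ k else (1/2:ℝ)^m)
      (z := fun k => if k < m then Pk k else Pk 0)
      (fun i _ => by split <;> positivity)
      (by
        rw [Finset.sum_range_succ]
        have : ∑ k ∈ Finset.range m, (if k < m then μ k else (1/2:ℝ)^m)
            = ∑ k ∈ Finset.range m, μ k := by
          apply Finset.sum_congr rfl
          intro k hk
          rw [if_pos (Finset.mem_range.mp hk)]
        rw [this, hμsum m]
        simp)
      (fun i _ => by split <;> exact hAmem _)
    have heq : ∑ k ∈ Finset.range (m+1),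
        (if k < m then μ k else (1/2:ℝ)^m) • (if k < m then Pk k else Pk 0)
        = (∑ k ∈ Finset.range m, μ k • Pk k) + (1/2:ℝ)^m • Pk 0 := by
      rw [Finset.sum_range_succ]
      congr 1
      · apply Finset.sum_congr rfl
        intro k hk
        rw [if_pos (Finset.mem_range.mp hk), if_pos (Finset.mem_range.mp hk)]
      · rw [if_neg (lt_irrefl m), if_neg (lt_irrefl m)]
    rw [heq] at h
    exact h
  have htail : Tendsto (fun m : ℕ => ((1/2:ℝ)^m • Pk 0 : Z × Y)) atTop (nhds 0) := by
    apply squeeze_zero_norm (a := fun m => ‖Pk 0‖ * (1/2:ℝ)^m)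
    · intro m
      rw [norm_smul, Real.norm_eq_abs, abs_of_nonneg (by positivity)]
      exact (mul_comm _ _).le
    · have := (tendsto_pow_atTop_nhds_zero_of_lt_one
        (by norm_num : (0:ℝ) ≤ 1/2) (by norm_num : (1/2:ℝ) < 1)).const_mul (‖Pk 0‖)
      simpa using this
  have hLA : L ∈ A := by
    have hten : Tendsto (fun m =>
        (∑ k ∈ Finset.range m, μ k • Pk k) + (1/2:ℝ)^m • Pk 0) atTop (nhds L) := by
      simpa using hps.add htail
    exact hAc.mem_of_tendsto hten (Eventually.of_forall hQmem)
  have htenQ : Tendsto (fun m =>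
      (∑ k ∈ Finset.range m, μ k • Pk k) + (1/2:ℝ)^m • Pk 0) atTop (nhds L) := by
    simpa using hps.add htail
  -- relation a k = t k - (1/2) • (t (k+1) - z1)
  have ha : ∀ k, a k = t k - (1/2:ℝ) • (t (k+1) - z1) := by
    intro k
    rw [htS k]
    module
  have hμ0 : μ 0 = (1/2:ℝ) := by norm_num [hμdef]
  have hTel : ∀ m, ∑ k ∈ Finset.range (m+1), μ k • a k
      = (1/2:ℝ) • z - (1/2:ℝ)^(m+2) • t (m+1) + ((1/2:ℝ) - (1/2:ℝ)^(m+2)) • z1 := by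
    intro m
    induction m with
    | zero =>
      rw [Finset.sum_range_one, hμ0, ha 0, ht0]
      norm_num
      module
    | succ m ih =>
      rw [Finset.sum_range_succ, ih, ha (m+1)]
      have hμm : μ (m+1) = (1/2:ℝ)^(m+2) := rfl
      rw [hμm]
      have hp3 : (1/2:ℝ)^(m+1+2) = (1/2:ℝ) * (1/2:ℝ)^(m+2) := by ring
      rw [hp3]
      module
  have hpow0 : Tendsto (fun m : ℕ => (1/2:ℝ)^(m+2)) atTop (nhds 0) := by
    have h := (tendsto_pow_atTop_nhds_zero_of_lt_one
      (by norm_num : (0:ℝ) ≤ 1/2) (by norm_num : (1/2:ℝ) < 1)).comp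
      (tendsto_add_atTop_nat 2)
    exact h
  have hlim1 : Tendsto (fun m => ∑ k ∈ Finset.range (m+1), μ k • a k) atTop
      (nhds ((1/2:ℝ) • z + (1/2:ℝ) • z1)) := by
    have e1 : Tendsto (fun m : ℕ => (1/2:ℝ)^(m+2) • t (m+1)) atTop (nhds 0) := by
      apply squeeze_zero_norm (a := fun m => (‖z1‖ + ε) * (1/2:ℝ)^m)
      · intro m
        rw [norm_smul, Real.norm_eq_abs, abs_of_nonneg (by positivity)]
        have hb : ‖t (m+1)‖ ≤ ‖z1‖ + ε := by
          have h1 : ‖t (m+1) - z1‖ < ε := by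
            have := htball (m+1); rwa [Metric.mem_ball, dist_eq_norm] at this
          have h2 := norm_add_le (t (m+1) - z1) z1
          simp only [sub_add_cancel] at h2
          linarith
        have hle : (1/2:ℝ)^(m+2) ≤ (1/2:ℝ)^m :=
          pow_le_pow_of_le_one (by norm_num) (by norm_num) (by omega)
        calc (1/2:ℝ)^(m+2) * ‖t (m+1)‖ ≤ (1/2:ℝ)^m * (‖z1‖ + ε) :=
              mul_le_mul hle hb (norm_nonneg _) (by positivity)
        _ = (‖z1‖ + ε) * (1/2)^m := mul_comm _ _
      · simpa using (tendsto_pow_atTop_nhds_zero_of_lt_one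
          (by norm_num : (0:ℝ) ≤ 1/2) (by norm_num)).const_mul (‖z1‖ + ε)
    have e2 : Tendsto (fun m : ℕ => ((1/2:ℝ) - (1/2:ℝ)^(m+2)) • z1) atTop
        (nhds ((1/2:ℝ) • z1)) := by
      have h2 := (tendsto_const_nhds (x := (1/2:ℝ)) (f := atTop (α := ℕ))).sub hpow0
      have := h2.smul_const z1
      simpa using this
    have e3 := ((tendsto_const_nhds
      (x := (1/2:ℝ) • z) (f := atTop (α := ℕ))).sub e1).add e2
    simp only [sub_zero] at e3
    exact Tendsto.congr (fun m => (hTel m).symm) e3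
  have hfst : ∀ m, (∑ k ∈ Finset.range m, μ k • Pk k).1
      = ∑ k ∈ Finset.range m, μ k • a k := by
    intro m
    induction m with
    | zero => simp
    | succ m ih => rw [Finset.sum_range_succ, Finset.sum_range_succ, Prod.fst_add, ih]; rfl
  have hLfst : Tendsto (fun m => ∑ k ∈ Finset.range (m+1), μ k • a k) atTop (nhds L.1) := by
    have hcomp := (continuous_fst.tendsto L).comp (hps.comp (tendsto_add_atTop_nat 1))
    apply Tendsto.congr _ hcomp
    intro m
    exact hfst (m+1)
  have hL1 : L.1 = (1/2:ℝ) • z + (1/2:ℝ) • z1 := tendsto_nhds_unique hLfst hlim1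
  have hL1w : L.1 = w := by
    rw [hL1, hzdef]
    module
  -- second component bound
  have hsnd : ∀ m, (∑ k ∈ Finset.range m, μ k • Pk k).2
      = ∑ k ∈ Finset.range m, μ k • yy k := by
    intro m
    induction m with
    | zero => simp
    | succ m ih => rw [Finset.sum_range_succ, Finset.sum_range_succ, Prod.snd_add, ih]; rfl
  have hL2 : ‖L.2‖ ≤ n := by
    have hten2 : Tendsto (fun m =>
        ((∑ k ∈ Finset.range m, μ k • Pk k) + (1/2:ℝ)^m • Pk 0).2) atTop (nhds L.2) :=
      (continuous_snd.tendsto L).comp htenQ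
    have hQ2bd : ∀ m, ‖((∑ k ∈ Finset.range m, μ k • Pk k) + (1/2:ℝ)^m • Pk 0).2‖
        ≤ (n:ℝ) := by
      intro m
      rw [Prod.snd_add, hsnd]
      have h1 : ‖∑ k ∈ Finset.range m, μ k • yy k‖ ≤ ∑ k ∈ Finset.range m, μ k * n := by
        refine (norm_sum_le _ _).trans (Finset.sum_le_sum ?_)
        intro k _
        rw [norm_smul, Real.norm_eq_abs, abs_of_nonneg (hμpos k)]
        exact mul_le_mul_of_nonneg_left (hybd k) (hμpos k)
      have h2 : ‖((1/2:ℝ)^m • Pk 0).2‖ ≤ (1/2:ℝ)^m * n := by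
        have : ((1/2:ℝ)^m • Pk 0).2 = (1/2:ℝ)^m • yy 0 := rfl
        rw [this, norm_smul, Real.norm_eq_abs, abs_of_nonneg (by positivity)]
        exact mul_le_mul_of_nonneg_left (hybd 0) (by positivity)
      have h3 : ∑ k ∈ Finset.range m, μ k * (n:ℝ) = (1 - (1/2:ℝ)^m) * n := by
        rw [← Finset.sum_mul, hμsum m]
      calc ‖(∑ k ∈ Finset.range m, μ k • yy k) + ((1/2:ℝ)^m • Pk 0).2‖
          ≤ ‖∑ k ∈ Finset.range m, μ k • yy k‖ + ‖((1/2:ℝ)^m • Pk 0).2‖ := norm_add_le _ _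
      _ ≤ (1 - (1/2:ℝ)^m) * n + (1/2:ℝ)^m * n := by rw [← h3]; exact add_le_add h1 h2
      _ = n := by ring
    exact le_of_tendsto hten2.norm (Eventually.of_forall hQ2bd)
  refine ⟨L.2, ?_, hL2⟩
  have hwL : (w, L.2) = L := by
    rw [Prod.ext_iff]
    exact ⟨hL1w.symm, rfl⟩
  rw [hwL]
  exact hLA


lemma usc_of_convex_bddAbove {Z : Type*} [NormedAddCommGroup Z] [NormedSpace ℝ Z]
    (g : Z → ℝ) (hg : ConvexOn ℝ Set.univ g)
    (z0 : Z) (r M : ℝ) (hr : 0 < r) (hb : ∀ z ∈ Metric.ball z0 r, g z ≤ M) :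
    IsOpen {q : Z × ℝ | g q.1 < q.2} := by
  -- local upper bound near every point
  have hloc : ∀ z1 : Z, ∀ z ∈ Metric.ball z1 (r/2),
      g z ≤ M/2 + g ((2:ℝ) • z1 - z0)/2 := by
    intro z1 z hz
    have hmem : z0 + (2:ℝ) • (z - z1) ∈ Metric.ball z0 r := by
      rw [Metric.mem_ball, dist_eq_norm]
      have h1 : z0 + (2:ℝ) • (z - z1) - z0 = (2:ℝ) • (z - z1) := by abel
      rw [h1, norm_smul]
      rw [Metric.mem_ball, dist_eq_norm] at hz
      simp only [Real.norm_ofNat]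
      linarith
    have hcomb : z = (1/2:ℝ) • (z0 + (2:ℝ) • (z - z1)) + (1/2:ℝ) • ((2:ℝ) • z1 - z0) := by
      module
    have := hg.2 (mem_univ (z0 + (2:ℝ) • (z - z1))) (mem_univ ((2:ℝ) • z1 - z0))
      (by norm_num : (0:ℝ) ≤ 1/2) (by norm_num : (0:ℝ) ≤ 1/2) (by norm_num)
    rw [← hcomb] at this
    have hb1 := hb _ hmem
    calc g z ≤ (1/2:ℝ) * g (z0 + (2:ℝ) • (z - z1)) + (1/2:ℝ) * g ((2:ℝ) • z1 - z0) := this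
    _ ≤ M/2 + g ((2:ℝ) • z1 - z0)/2 := by linarith
  rw [Metric.isOpen_iff]
  rintro ⟨z1, s⟩ hq
  simp only [mem_setOf_eq] at hq
  set M1 : ℝ := M/2 + g ((2:ℝ) • z1 - z0)/2 with hM1
  set B : ℝ := max (M1 - g z1) 0 with hB
  have hB0 : 0 ≤ B := le_max_right _ _
  set ρ : ℝ := r/4 with hρ
  have hρ0 : 0 < ρ := by positivity
  -- key upper estimate: for ‖d‖ ≤ ρ, g (z1 + d) ≤ g z1 + (‖d‖/ρ) * B
  have hkey : ∀ d : Z, ‖d‖ ≤ ρ → g (z1 + d) ≤ g z1 + (‖d‖/ρ) * B := by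
    intro d hd
    by_cases hd0 : d = 0
    · have hBd : 0 ≤ (‖(0:Z)‖/ρ) * B := by positivity
      simp only [hd0, add_zero]
      simpa using le_add_of_nonneg_right hBd
    · have hdn : 0 < ‖d‖ := norm_pos_iff.mpr hd0
      set lam : ℝ := ‖d‖/ρ with hlam
      have hlam0 : 0 < lam := by positivity
      have hlam1 : lam ≤ 1 := by
        rw [hlam, div_le_one hρ0]; exact hd
      have hout : z1 + (ρ/‖d‖) • d ∈ Metric.ball z1 (r/2) := by
        rw [Metric.mem_ball, dist_eq_norm]
        have h1 : z1 + (ρ/‖d‖) • d - z1 = (ρ/‖d‖) • d := by abel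
        rw [h1, norm_smul, Real.norm_eq_abs, abs_of_nonneg (by positivity)]
        rw [div_mul_cancel₀ _ (ne_of_gt hdn)]
        rw [hρ]; linarith
      have hcomb : z1 + d = (1 - lam) • z1 + lam • (z1 + (ρ/‖d‖) • d) := by
        have : lam • ((ρ/‖d‖) • d) = d := by
          rw [smul_smul, hlam]
          rw [div_mul_div_comm, mul_comm, div_self (by positivity), one_smul]
        calc z1 + d = z1 + lam • ((ρ/‖d‖) • d) := by rw [this]
        _ = (1 - lam) • z1 + lam • (z1 + (ρ/‖d‖) • d) := by module
      have hcv := hg.2 (mem_univ z1) (mem_univ (z1 + (ρ/‖d‖) • d))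
        (by linarith : (0:ℝ) ≤ 1 - lam) (le_of_lt hlam0) (by ring)
      rw [← hcomb] at hcv
      have hub := hloc z1 _ hout
      have hBle : M1 - g z1 ≤ B := le_max_left _ _
      calc g (z1 + d) ≤ (1 - lam) * g z1 + lam * g (z1 + (ρ/‖d‖) • d) := hcv
      _ ≤ (1 - lam) * g z1 + lam * M1 := by nlinarith
      _ = g z1 + lam * (M1 - g z1) := by ring
      _ ≤ g z1 + lam * B := by nlinarith
  -- choose the radius
  set δ : ℝ := min (min ρ ((s - g z1)/2 * ρ / (B+1))) ((s - g z1)/2) with hδ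
  have hsg : 0 < s - g z1 := by linarith
  have hδ0 : 0 < δ := by
    apply lt_min (lt_min hρ0 (by positivity)) (by positivity)
  refine ⟨δ, hδ0, ?_⟩
  rintro ⟨z, τ⟩ hzt
  simp only [Metric.mem_ball, Prod.dist_eq, max_lt_iff] at hzt
  obtain ⟨hz, hτ⟩ := hzt
  simp only [mem_setOf_eq]
  -- g z < (g z1 + s)/2
  have hd : ‖z - z1‖ < δ := by rwa [dist_eq_norm] at hz
  have hgz : g z ≤ g z1 + (‖z - z1‖/ρ) * B := by
    have := hkey (z - z1) (le_of_lt (lt_of_lt_of_le hd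
      ((min_le_left _ _).trans (min_le_left _ _))))
    simpa using this
  have hfrac : (‖z - z1‖/ρ) * B < (s - g z1)/2 := by
    rw [div_mul_eq_mul_div, div_lt_iff₀ hρ0]
    have h1 : ‖z - z1‖ < (s - g z1)/2 * ρ / (B+1) :=
      lt_of_lt_of_le hd ((min_le_left _ _).trans (min_le_right _ _))
    have h1' : ‖z - z1‖ * (B+1) < (s - g z1)/2 * ρ := by
      rw [← lt_div_iff₀ (by linarith : (0:ℝ) < B+1)]
      exact h1
    nlinarith [norm_nonneg (z - z1)]
  have hτ' : s - (s - g z1)/2 < τ := by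
    rw [Real.dist_eq] at hτ
    have h1 := (abs_lt.mp hτ).1
    have h2 : δ ≤ (s - g z1)/2 := min_le_right _ _
    linarith
  linarith

/-- exact formula for the coderivative of the profile of the objective map
`F(p) = {f(p,x) : x ∈ C(p)}` at a point `(pb, yb)` with `yb = f(pb, xb)`,
`(pb, xb) ∈ gph S`:
`D*(F + K)(pb, yb)(y*) = ⋃_{(p*, x*) ∈ D*(f + K)(pb, xb)(y*)} {p* + D*C(pb, xb)(x*)}`. -/
theorem stmt9
    {P X Y : Type*}
    [NormedAddCommGroup P] [NormedSpace ℝ P] [CompleteSpace P]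
    [NormedAddCommGroup X] [NormedSpace ℝ X] [CompleteSpace X]
    [NormedAddCommGroup Y] [NormedSpace ℝ Y] [CompleteSpace Y]
    -- K is a pointed closed convex cone in Y
    (K : Set Y) (hKconv : Convex ℝ K) (hKclosed : IsClosed K)
    (hKcone : ∀ t : ℝ, 0 ≤ t → ∀ y ∈ K, t • y ∈ K)
    (hKpointed : K ∩ (-K) = {0})
    -- f is K-convex and K-closed (its epigraph is convex and closed)
    (f : P × X → Y)
    (hfconv : Convex ℝ {q : (P × X) × Y | q.2 ∈ ({f q.1} : Set Y) + K})
    (hfcl : IsClosed {q : (P × X) × Y | q.2 ∈ ({f q.1} : Set Y) + K})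
    -- C is a closed convex set-valued map
    (C : P → Set X) (hCconv : Convex ℝ (gph C)) (hCcl : IsClosed (gph C))
    -- F(p) = {f(p,x) : x ∈ C(p)},  𝓕(p) = Min_K F(p)
    (F : P → Set Y) (hF : ∀ p, F p = {y : Y | ∃ x ∈ C p, y = f (p, x)})
    (Fmin : P → Set Y)
    (hFmin : ∀ p, Fmin p = {a ∈ F p | (F p - {a}) ∩ ((-K) \ {0}) = ∅})
    -- (pb, xb) ∈ gph S, yb = f(pb, xb)
    (pb : P) (xb : X) (hxbC : xb ∈ C pb) (hsol : f (pb, xb) ∈ Fmin pb)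
    (yb : Y) (hyb : yb = f (pb, xb))
    -- (i) ℝ⁺(rge H − dom f) is a closed linear subspace of P × X, where
    --     H(p) = {p} × C(p), so rge H = gph C and dom f = P × X
    (hqual1 : ∃ S : Submodule ℝ (P × X), IsClosed (S : Set (P × X)) ∧
      {w : P × X | ∃ t : ℝ, 0 ≤ t ∧
        ∃ u ∈ ⋃ p : P, ({p} : Set P) ×ˢ C p, ∃ v : P × X, w = t • (u - v)} = S)
    -- (ii) ℝ⁺(P − dom C) is a closed linear subspace of P
    (hqual2 : ∃ S : Submodule ℝ P, IsClosed (S : Set P) ∧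
      {w : P | ∃ t : ℝ, 0 ≤ t ∧ ∃ u : P, ∃ v ∈ dom C, w = t • (u - v)} = S)
    (ψ : Y →L[ℝ] ℝ) :
    coderiv (fun p => F p + K) pb yb ψ
      = {w : P →L[ℝ] ℝ | ∃ pstar : P →L[ℝ] ℝ, ∃ xstar : X →L[ℝ] ℝ,
          pstar.coprod xstar
            ∈ coderiv (fun q : P × X => ({f q} : Set Y) + K) (pb, xb) (f (pb, xb)) ψ ∧
          ∃ qstar ∈ coderiv C pb xb xstar, w = pstar + qstar} := by
  subst hyb
  have h0K : (0:Y) ∈ K := by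
    have h1 : (0:Y) ∈ K ∩ (-K) := by rw [hKpointed]; rfl
    exact h1.1
  ext φ
  constructor
  · -- hard direction
    intro hφ
    have hybF : ∀ p x, x ∈ C p → f (p, x) ∈ F p := by
      intro p x hx; rw [hF]; exact ⟨x, hx, rfl⟩
    have hmemFK : ∀ p x (k : Y), x ∈ C p → k ∈ K → f (p, x) + k ∈ F p + K :=
      fun p x k hx hk => Set.add_mem_add (hybF p x hx) hk
    have hψK : ∀ k ∈ K, 0 ≤ ψ k := by
      intro k hk
      have h1 := hφ pb (f (pb, xb) + k) (hmemFK pb xb k hxbC hk)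
      simp only [sub_self, map_zero, add_sub_cancel_left] at h1
      linarith
    set zb : P × X := (pb, xb) with hzb
    set h : P × X → ℝ := fun z => ψ (f z) with hh
    set A : Set ((P × X) × Y) := {q : (P × X) × Y | q.2 ∈ ({f q.1} : Set Y) + K} with hA
    have hepi : ∀ z : P × X, (z, f z) ∈ A := by
      intro z
      show f z ∈ ({f z} : Set Y) + K
      exact Set.mem_add.mpr ⟨f z, rfl, 0, h0K, add_zero _⟩
    obtain ⟨z0, r, M, hr, hsel⟩ :=
      baire_bounded_selection A hfcl hfconv (fun z => ⟨f z, hepi z⟩)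
    have hhbd : ∀ z ∈ Metric.ball z0 r, h z ≤ ‖ψ‖ * M := by
      intro z hz
      obtain ⟨y, hyA, hyM⟩ := hsel z hz
      obtain ⟨a, ha, k, hk, hak⟩ := Set.mem_add.mp hyA
      rw [Set.mem_singleton_iff] at ha
      subst ha
      have hak' : f z + k = y := hak
      have h1 : h z = ψ y - ψ k := by rw [← hak']; simp [hh]
      have h2 : ψ y ≤ ‖ψ‖ * M := by
        calc ψ y ≤ |ψ y| := le_abs_self _
        _ ≤ ‖ψ‖ * ‖y‖ := by simpa [Real.norm_eq_abs] using ψ.le_opNorm y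
        _ ≤ ‖ψ‖ * M := mul_le_mul_of_nonneg_left hyM (norm_nonneg _)
      have h3 := hψK k hk
      linarith
    have hhconv : ∀ z1 z2 : P × X, ∀ a b : ℝ, 0 ≤ a → 0 ≤ b → a + b = 1 →
        h (a • z1 + b • z2) ≤ a * h z1 + b * h z2 := by
      intro z1 z2 a b ha hb hab
      have hcm := hfconv (hepi z1) (hepi z2) ha hb hab
      have hcm2 : a • f z1 + b • f z2
          ∈ ({f (a • z1 + b • z2)} : Set Y) + K := hcm
      obtain ⟨c, hc, k, hk, hck⟩ := Set.mem_add.mp hcm2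
      rw [Set.mem_singleton_iff] at hc
      subst hc
      have h1 : ψ (f (a • z1 + b • z2)) = a * ψ (f z1) + b * ψ (f z2) - ψ k := by
        have := congrArg ψ hck
        simp only [map_add, map_smul, smul_eq_mul] at this
        linarith
      have h2 := hψK k hk
      simp only [hh]
      linarith
    have hΦdef : ∃ Φ : (P × X) →L[ℝ] ℝ, ∀ d : P × X, Φ d = φ d.1 :=
      ⟨φ.comp (ContinuousLinearMap.fst ℝ P X), fun d => rfl⟩
    obtain ⟨Φ, hΦ⟩ := hΦdef
    set g : P × X → ℝ := fun z => h z - h zb - Φ (z - zb) with hg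
    have hgconv : ConvexOn ℝ Set.univ g := by
      refine ⟨convex_univ, ?_⟩
      intro z1 _ z2 _ a b ha hb hab
      have h1 := hhconv z1 z2 a b ha hb hab
      have e : a • z1 + b • z2 - zb = a • (z1 - zb) + b • (z2 - zb) := by
        have e1 : a • (z1 - zb) + b • (z2 - zb) = a • z1 + b • z2 - (a+b) • zb := by
          module
        rw [e1, hab, one_smul]
      have h2 : Φ (a • z1 + b • z2 - zb) = a * Φ (z1 - zb) + b * Φ (z2 - zb) := by
        rw [e, map_add, map_smul, map_smul]; simp [smul_eq_mul]
      have h3 : a * h zb + b * h zb = h zb := by rw [← add_mul, hab, one_mul]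
      simp only [hg, smul_eq_mul]
      linarith
    have hgbd : ∀ z ∈ Metric.ball z0 r,
        g z ≤ ‖ψ‖ * M + |h zb| + ‖Φ‖ * (‖z0‖ + r + ‖zb‖) := by
      intro z hz
      have h1 := hhbd z hz
      have hzn : ‖z - z0‖ < r := by rwa [Metric.mem_ball, dist_eq_norm] at hz
      have ha3 : ‖z - zb‖ ≤ (‖z0‖ + r) + ‖zb‖ := by
        have h4 := norm_add_le (z - z0) z0
        simp only [sub_add_cancel] at h4
        calc ‖z - zb‖ ≤ ‖z‖ + ‖zb‖ := norm_sub_le _ _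
        _ ≤ (‖z0‖ + r) + ‖zb‖ := by linarith
      have h2 : -Φ (z - zb) ≤ ‖Φ‖ * (‖z0‖ + r + ‖zb‖) := by
        have ha1 : -Φ (z - zb) ≤ |Φ (z - zb)| := neg_le_abs _
        have ha2 : |Φ (z - zb)| ≤ ‖Φ‖ * ‖z - zb‖ := by
          simpa [Real.norm_eq_abs] using Φ.le_opNorm (z - zb)
        have hΦn : (0:ℝ) ≤ ‖Φ‖ := norm_nonneg _
        nlinarith
      have h3 : -|h zb| ≤ h zb := neg_abs_le _
      simp only [hg]
      linarith
    have hopen := usc_of_convex_bddAbove g hgconv z0 r _ hr hgbd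
    have hsconv : Convex ℝ {q : (P × X) × ℝ | g q.1 < q.2} := by
      rintro ⟨w1, t1⟩ h1 ⟨w2, t2⟩ h2 a b ha hb hab
      simp only [Set.mem_setOf_eq] at h1 h2 ⊢
      have hcv := hgconv.2 (Set.mem_univ w1) (Set.mem_univ w2) ha hb hab
      simp only [smul_eq_mul] at hcv
      have key : a * g w1 + b * g w2 < a * t1 + b * t2 := by
        rcases lt_or_eq_of_le ha with ha' | ha'
        · have k1 := mul_lt_mul_of_pos_left h1 ha'
          have k2 := mul_le_mul_of_nonneg_left (le_of_lt h2) hb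
          linarith
        · have hb1 : b = 1 := by rw [← ha'] at hab; linarith
          rw [← ha', hb1]; simpa using h2
      have hfst : (a • ((w1, t1) : (P × X) × ℝ) + b • (w2, t2)).1 = a • w1 + b • w2 := rfl
      have hsnd : (a • ((w1, t1) : (P × X) × ℝ) + b • (w2, t2)).2 = a * t1 + b * t2 := rfl
      rw [hfst, hsnd]
      calc g (a • w1 + b • w2) ≤ a * g w1 + b * g w2 := hcv
      _ < a * t1 + b * t2 := key
    have hgpos : ∀ z ∈ gph C, 0 ≤ g z := by
      rintro ⟨uu, xx⟩ hz
      have hv : f (uu, xx) ∈ F uu + K := by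
        have := hmemFK uu xx 0 hz h0K
        simpa using this
      have h1 := hφ uu _ hv
      have hΦval : Φ ((uu, xx) - zb) = φ (uu - pb) := by
        rw [hΦ, Prod.fst_sub]
      have h5 : ψ (f (uu, xx) - f (pb, xb)) = h (uu, xx) - h zb := by
        simp [hh, map_sub, hzb]
      simp only [hg, hΦval]
      linarith
    have hdisj : Disjoint {q : (P × X) × ℝ | g q.1 < q.2} ((gph C) ×ˢ Set.Iic (0:ℝ)) := by
      rw [Set.disjoint_left]
      rintro ⟨z, τ⟩ hs ht
      simp only [Set.mem_setOf_eq] at hs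
      obtain ⟨hzC, hτ⟩ := ht
      have := hgpos z hzC
      simp only [Set.mem_Iic] at hτ
      linarith
    obtain ⟨L, u, hLs, hLt⟩ := geometric_hahn_banach_open hsconv hopen
      (hCconv.prod (convex_Iic 0)) hdisj
    set c : ℝ := L (0, 1) with hcdef
    have hLsplit : ∀ (z : P × X) (τ : ℝ), L (z, τ) = L (z, 0) + τ * c := by
      intro z τ
      have e : ((z, τ) : (P × X) × ℝ) = (z, 0) + τ • ((0 : P × X), (1:ℝ)) := by
        simp [Prod.ext_iff]
      rw [e, map_add, map_smul]
      simp [hcdef, smul_eq_mul]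
    have hzbC : zb ∈ gph C := hxbC
    have hgzb : g zb = 0 := by simp [hg]
    have hcneg : c < 0 := by
      have h1 : L (zb, 1) < u := hLs (zb, 1) (by simp [Set.mem_setOf_eq, hgzb])
      have h2 : u ≤ L (zb, 0) := hLt (zb, 0) ⟨hzbC, by simp⟩
      rw [hLsplit] at h1
      linarith
    have hcne : (0:ℝ) < -c := by linarith
    have hβ : ∀ z : P × X, L (z, 0) + g z * c ≤ u := by
      intro z
      apply le_of_forall_pos_lt_add
      intro ε hε
      have hgl : g z < g z + ε / (-c) := by
        have : 0 < ε / (-c) := by positivity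
        linarith
      have h1 : L (z, g z + ε / (-c)) < u := hLs _ hgl
      rw [hLsplit] at h1
      have h2 : (g z + ε / (-c)) * c = g z * c - ε := by
        have hc0 : c ≠ 0 := ne_of_lt hcneg
        field_simp
        ring
      rw [h2] at h1
      linarith
    -- normalized functional
    set ξ : (P × X) →L[ℝ] ℝ :=
      (-c)⁻¹ • (L.comp (ContinuousLinearMap.inl ℝ (P × X) ℝ)) with hξdef
    have hξval : ∀ z : P × X, ξ z = (-c)⁻¹ * L (z, 0) := fun z => rfl
    have hα : ∀ z ∈ gph C, (-c)⁻¹ * u ≤ ξ z := by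
      intro z hz
      have h1 : u ≤ L (z, 0) := hLt (z, 0) ⟨hz, by simp⟩
      rw [hξval]
      exact mul_le_mul_of_nonneg_left h1 (le_of_lt (inv_pos.mpr hcne))
    have hβ' : ∀ z : P × X, ξ z - (-c)⁻¹ * u ≤ g z := by
      intro z
      have h1 := hβ z
      have h2 : L (z, 0) ≤ u + g z * (-c) := by linarith
      have h3 := mul_le_mul_of_nonneg_left h2 (le_of_lt (inv_pos.mpr hcne))
      rw [hξval]
      have h4 : (-c)⁻¹ * (u + g z * (-c)) = (-c)⁻¹ * u + g z := by
        rw [mul_add]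
        congr 1
        rw [mul_comm (g z) (-c), ← mul_assoc, inv_mul_cancel₀ (ne_of_gt hcne), one_mul]
      linarith
    have hξzb : ξ zb = (-c)⁻¹ * u := by
      have h1 := hα zb hzbC
      have h2 := hβ' zb
      rw [hgzb] at h2
      linarith
    -- (I): subgradient inequality for Φ + ξ
    have hI : ∀ z : P × X, Φ (z - zb) + (ξ z - ξ zb) ≤ h z - h zb := by
      intro z
      have h1 := hβ' z
      rw [← hξzb] at h1
      simp only [hg] at h1
      linarith
    -- (II): normal cone inequality for -ξ
    have hII : ∀ z ∈ gph C, ξ zb ≤ ξ z := by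
      intro z hz
      rw [hξzb]
      exact hα z hz
    -- assemble
    set pstar : P →L[ℝ] ℝ := (Φ + ξ).comp (ContinuousLinearMap.inl ℝ P X) with hpstar
    set xstar : X →L[ℝ] ℝ := (Φ + ξ).comp (ContinuousLinearMap.inr ℝ P X) with hxstar
    have hdec : ∀ d : P × X, (Φ + ξ) d = pstar d.1 + xstar d.2 := by
      intro d
      have e : d = ((d.1, 0) : P × X) + (0, d.2) := by simp [Prod.ext_iff]
      have := map_add (Φ + ξ) ((d.1, (0:X)) : P × X) ((0:P), d.2)
      rw [← e] at this
      exact this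
    refine ⟨pstar, xstar, ?_, φ - pstar, ?_, ?_⟩
    · -- coprod pstar xstar ∈ coderiv (f + K)
      intro w v hv
      obtain ⟨a, haa, k, hk, hak⟩ := Set.mem_add.mp hv
      rw [Set.mem_singleton_iff] at haa
      subst haa
      have hak' : f w + k = v := hak
      have hco : (pstar.coprod xstar) (w - zb) = (Φ + ξ) (w - zb) := by
        rw [ContinuousLinearMap.coprod_apply, ← hdec]
      have hξw : ξ (w - zb) = ξ w - ξ zb := map_sub ξ w zb
      have hsum : (Φ + ξ) (w - zb) = Φ (w - zb) + (ξ w - ξ zb) := by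
        rw [ContinuousLinearMap.add_apply, hξw]
      have hv2 : ψ (v - f zb) = h w - h zb + ψ k := by
        rw [← hak']
        simp only [map_sub, map_add, hh]
        ring
      have h2 := hψK k hk
      have h1 := hI w
      show (pstar.coprod xstar) (w - zb) - ψ (v - f zb) ≤ 0
      rw [hco, hsum, hv2]
      linarith
    · -- qstar ∈ coderiv C pb xb xstar
      intro u x hx
      have hzmem : ((u, x) : P × X) ∈ gph C := hx
      have h2 := hII _ hzmem
      have hp : ∀ d : P, pstar d = φ d + ξ (d, 0) := by
        intro d
        show (Φ + ξ) (d, 0) = φ d + ξ (d, 0)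
        rw [ContinuousLinearMap.add_apply, hΦ]
      have hxs : ∀ e : X, xstar e = ξ (0, e) := by
        intro e
        show (Φ + ξ) (0, e) = ξ (0, e)
        rw [ContinuousLinearMap.add_apply, hΦ]
        simp
      have hddd : ((u, x) : P × X) - zb = (u - pb, x - xb) := rfl
      have hξd : ξ ((u, x) - zb) = ξ (u, x) - ξ zb := map_sub _ _ _
      have hsplit : ξ (u - pb, 0) + ξ (0, x - xb) = ξ (u, x) - ξ zb := by
        rw [← map_add, ← hξd]
        congr 1
        rw [hddd]
        simp [Prod.ext_iff]
      show (φ - pstar) (u - pb) - xstar (x - xb) ≤ 0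
      rw [ContinuousLinearMap.sub_apply, hp, hxs]
      linarith
    · -- φ = pstar + (φ - pstar)
      abel
  · -- easy direction
    rintro ⟨ps, xs, hΞ, qs, hqs, rfl⟩
    intro u v hv
    obtain ⟨a, haa, k, hk, hak⟩ := Set.mem_add.mp hv
    rw [hF] at haa
    obtain ⟨x, hxC, rfl⟩ := haa
    have h1 := hΞ (u, x) v (by
      exact Set.mem_add.mpr ⟨f (u, x), rfl, k, hk, hak⟩)
    have h2 := hqs u x hxC
    have h3 : ((u, x) : P × X) - (pb, xb) = (u - pb, x - xb) := rfl
    rw [h3, ContinuousLinearMap.coprod_apply] at h1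
    simp only [ContinuousLinearMap.add_apply]
    linarith
end
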